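/- arXiv:1802.07092 — 8 statements merged into one kernel-verified Lean document; each statement's English description precedes it below -/
import Mathlib

section
/- Let Ω be a topological space and let k : Ω × Ω → ℂ be a positive definite kernel such that the real part Re(k) : Ω × Ω → ℝ is continuous at every point of the diagonal D(Ω²) = {(x,x) : x ∈ Ω} (with respect to the product topology on Ω × Ω). Then k is continuous on all of Ω × Ω. -/
open Filter Topology ComplexOrder

/-- A positive definite kernel whose real part is continuous at every
point of the diagonal is continuous on the whole product space. -/
theorem stmt2 {Ω : Type*} [TopologicalSpace Ω] (k : Ω → Ω → ℂ)
    (hpd : ∀ (n : ℕ) (x : Fin n → Ω) (ξ : Fin n → ℂ),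
      0 ≤ ∑ i, ∑ j, k (x i) (x j) * ξ i * (starRingEnd ℂ) (ξ j))
    (hre : ∀ x : Ω, ContinuousAt (fun p : Ω × Ω => (k p.1 p.2).re) (x, x)) :
    Continuous fun p : Ω × Ω => k p.1 p.2 := by
  -- diagonal values are real and nonnegative
  have hd : ∀ z, (k z z).im = 0 ∧ 0 ≤ (k z z).re := by
    intro z
    have h := hpd 1 ![z] ![1]
    simp [Fin.sum_univ_one] at h
    rw [Complex.le_def] at h
    simp at h
    exact ⟨h.2.symm, h.1⟩
  -- hermitian symmetry
  have herm : ∀ x y, k y x = (starRingEnd ℂ) (k x y) := by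
    intro x y
    have h1 := hpd 2 ![x, y] ![1, 1]
    have h2 := hpd 2 ![x, y] ![1, Complex.I]
    simp [Fin.sum_univ_two] at h1 h2
    rw [Complex.le_def] at h1 h2
    simp [Complex.add_im, Complex.mul_im, Complex.I_re, Complex.I_im] at h1 h2
    apply Complex.ext <;>
    · simp [Complex.conj_re, Complex.conj_im]
      linarith [h1.2, h2.2, (hd x).1, (hd y).1]
  -- key quadratic inequality from a 3-point positivity test
  have quad : ∀ (x y z : Ω) (t : ℝ),
      0 ≤ (k x x).re * t^2 * ((k x y - k x z).re^2 + (k x y - k x z).im^2)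
        - 2*t*((k x y - k x z).re^2 + (k x y - k x z).im^2)
        + ((k y y).re + (k z z).re - 2*(k y z).re) := by
    intro x y z t
    have h := hpd 3 ![x, y, z] ![-(t:ℂ) * (starRingEnd ℂ) (k x y - k x z), 1, -1]
    simp [Fin.sum_univ_three] at h
    rw [Complex.le_def] at h
    have h1 := h.1
    have e1 : (k y x).re = (k x y).re := by rw [herm x y]; simp
    have e2 : (k y x).im = -(k x y).im := by rw [herm x y]; simp
    have e3 : (k z x).re = (k x z).re := by rw [herm x z]; simp
    have e4 : (k z x).im = -(k x z).im := by rw [herm x z]; simp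
    have e5 : (k z y).re = (k y z).re := by rw [herm y z]; simp
    simp [Complex.add_re, Complex.sub_re, Complex.mul_re, Complex.mul_im,
      Complex.add_im, Complex.sub_im, Complex.conj_re, Complex.conj_im,
      Complex.neg_re, Complex.neg_im, Complex.ofReal_re, Complex.ofReal_im] at h1
    rw [e1, e2, e3, e4, e5, (hd x).1] at h1
    simp [Complex.sub_re, Complex.sub_im]
    linarith [h1]
  -- the "energy" is nonnegative
  have hE : ∀ y z : Ω, 0 ≤ (k y y).re + (k z z).re - 2*(k y z).re := by
    intro y z
    have := quad y y z 0
    simpa using this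
  -- Cauchy–Schwarz-type bound
  have key : ∀ x y z : Ω,
      ‖k x y - k x z‖ ≤ Real.sqrt ((k x x).re * ((k y y).re + (k z z).re - 2*(k y z).re)) := by
    intro x y z
    apply Real.le_sqrt_of_sq_le
    have hB : ‖k x y - k x z‖^2 = (k x y - k x z).re^2 + (k x y - k x z).im^2 := by
      rw [Complex.sq_norm]
      simp [Complex.normSq_apply, sq]
    rw [hB]
    have hAnn : 0 ≤ (k x x).re := (hd x).2
    have hEnn : 0 ≤ (k y y).re + (k z z).re - 2*(k y z).re := hE y z
    have hBnn : 0 ≤ (k x y - k x z).re^2 + (k x y - k x z).im^2 := by positivity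
    rcases eq_or_lt_of_le hAnn with hA0 | hApos
    · rcases eq_or_lt_of_le hBnn with hB0 | hBpos
      · rw [← hB0]; positivity
      · exfalso
        have h := quad x y z (((k y y).re + (k z z).re - 2*(k y z).re + 1)
          /(2*((k x y - k x z).re^2 + (k x y - k x z).im^2)))
        rw [← hA0] at h
        have he : ((k y y).re + (k z z).re - 2*(k y z).re + 1)
            /(2*((k x y - k x z).re^2 + (k x y - k x z).im^2))
            * ((k x y - k x z).re^2 + (k x y - k x z).im^2)
            = ((k y y).re + (k z z).re - 2*(k y z).re + 1)/2 := by
          have hne : ((k x y).re - (k x z).re)^2 + ((k x y).im - (k x z).im)^2 ≠ 0 := by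
            simpa [Complex.sub_re, Complex.sub_im] using ne_of_gt hBpos
          field_simp [hne]
        nlinarith [h, he]
    · have h := quad x y z (1/(k x x).re)
      have h2 : (k x x).re * (1/(k x x).re)^2
          * ((k x y - k x z).re^2 + (k x y - k x z).im^2)
          = ((k x y - k x z).re^2 + (k x y - k x z).im^2)/(k x x).re := by
        field_simp
      have h4 : 2 * (1/(k x x).re) * ((k x y - k x z).re^2 + (k x y - k x z).im^2)
          = 2 * (((k x y - k x z).re^2 + (k x y - k x z).im^2)/(k x x).re) := by
        field_simp
      have h3 : ((k x y - k x z).re^2 + (k x y - k x z).im^2)/(k x x).re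
          ≤ (k y y).re + (k z z).re - 2*(k y z).re := by linarith [h, h2.symm.le, h4]
      calc (k x y - k x z).re^2 + (k x y - k x z).im^2
          = (k x x).re * (((k x y - k x z).re^2 + (k x y - k x z).im^2)/(k x x).re) := by
            field_simp
        _ ≤ (k x x).re * ((k y y).re + (k z z).re - 2*(k y z).re) :=
            mul_le_mul_of_nonneg_left h3 (le_of_lt hApos)
  -- continuity
  rw [continuous_iff_continuousAt]
  rintro ⟨a, b⟩
  have hfst : ContinuousAt (fun p : Ω × Ω => ((p.1, p.1) : Ω × Ω)) (a, b) :=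
    continuousAt_fst.prodMk continuousAt_fst
  have hsnd : ContinuousAt (fun p : Ω × Ω => ((p.2, p.2) : Ω × Ω)) (a, b) :=
    continuousAt_snd.prodMk continuousAt_snd
  have hsb : ContinuousAt (fun p : Ω × Ω => ((p.2, b) : Ω × Ω)) (a, b) :=
    continuousAt_snd.prodMk continuousAt_const
  have hfa : ContinuousAt (fun p : Ω × Ω => ((p.1, a) : Ω × Ω)) (a, b) :=
    continuousAt_fst.prodMk continuousAt_const
  have cxx : Tendsto (fun p : Ω × Ω => (k p.1 p.1).re) (𝓝 (a, b)) (𝓝 ((k a a).re)) :=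
    by have h := ContinuousAt.comp (f := fun p : Ω × Ω => ((p.1, p.1) : Ω × Ω)) (hre a) hfst; exact h
  have cyy : Tendsto (fun p : Ω × Ω => (k p.2 p.2).re) (𝓝 (a, b)) (𝓝 ((k b b).re)) :=
    by have h := ContinuousAt.comp (f := fun p : Ω × Ω => ((p.2, p.2) : Ω × Ω)) (hre b) hsnd; exact h
  have cyb : Tendsto (fun p : Ω × Ω => (k p.2 b).re) (𝓝 (a, b)) (𝓝 ((k b b).re)) :=
    by have h := ContinuousAt.comp (f := fun p : Ω × Ω => ((p.2, b) : Ω × Ω)) (hre b) hsb; exact h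
  have cxa : Tendsto (fun p : Ω × Ω => (k p.1 a).re) (𝓝 (a, b)) (𝓝 ((k a a).re)) :=
    by have h := ContinuousAt.comp (f := fun p : Ω × Ω => ((p.1, a) : Ω × Ω)) (hre a) hfa; exact h
  have hE2 : Tendsto (fun p : Ω × Ω => (k p.2 p.2).re + (k b b).re - 2*(k p.2 b).re)
      (𝓝 (a, b)) (𝓝 0) := by
    have h0 : (k b b).re + (k b b).re - 2*(k b b).re = 0 := by ring
    have := (cyy.add (tendsto_const_nhds (x := (k b b).re))).sub
      ((tendsto_const_nhds (x := (2:ℝ))).mul cyb)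
    rw [h0] at this
    exact this
  have hE1 : Tendsto (fun p : Ω × Ω => (k p.1 p.1).re + (k a a).re - 2*(k p.1 a).re)
      (𝓝 (a, b)) (𝓝 0) := by
    have h0 : (k a a).re + (k a a).re - 2*(k a a).re = 0 := by ring
    have := (cxx.add (tendsto_const_nhds (x := (k a a).re))).sub
      ((tendsto_const_nhds (x := (2:ℝ))).mul cxa)
    rw [h0] at this
    exact this
  have hgz : Tendsto (fun p : Ω × Ω =>
      Real.sqrt ((k p.1 p.1).re * ((k p.2 p.2).re + (k b b).re - 2*(k p.2 b).re)) +
      Real.sqrt ((k b b).re * ((k p.1 p.1).re + (k a a).re - 2*(k p.1 a).re)))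
      (𝓝 (a, b)) (𝓝 0) := by
    have t1 := (cxx.mul hE2).sqrt
    have t2 := ((tendsto_const_nhds (x := (k b b).re)).mul hE1).sqrt
    have := t1.add t2
    simpa using this
  rw [ContinuousAt, tendsto_iff_norm_sub_tendsto_zero]
  apply squeeze_zero (fun p => norm_nonneg _) _ hgz
  intro p
  calc ‖k p.1 p.2 - k a b‖
      ≤ ‖k p.1 p.2 - k p.1 b‖ + ‖k p.1 b - k a b‖ := by
        have h : k p.1 p.2 - k a b = (k p.1 p.2 - k p.1 b) + (k p.1 b - k a b) := by ring
        rw [h]; exact norm_add_le _ _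
    _ ≤ _ := by
        apply add_le_add
        · exact key p.1 p.2 b
        · have hconj : k p.1 b - k a b = (starRingEnd ℂ) (k b p.1 - k b a) := by
            rw [map_sub, ← herm b p.1, ← herm b a]
          rw [hconj, RCLike.norm_conj]
          exact key b p.1 a
end

section
/- Let (G,+) be an abelian topological group and let x ↦ x* be a continuous map from G to G. Let Ω ⊆ G be an open subset, let S = Ω + Ω* = {x + y* : x, y ∈ Ω}, and let f : S → ℂ be a positive definite function, i.e. k(x,y) := f(x + y*) is a positive definite kernel on Ω. Then f is continuous on S (with the subspace topology) if and only if Re(f) is continuous at every point of D_Ω(S) = {x + x* : x ∈ Ω} (as a function on S with the subspace topology). -/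
open Filter Topology ComplexOrder

private lemma real_quad_stmt3 {N A B : ℝ} (hN : 0 < N) (hA : 0 ≤ A) (hB : 0 < B)
    (h : ∀ t : ℝ, 0 ≤ N * A + t ^ 2 * B - 2 * t * N) : N ≤ A * B := by
  have k := h (N / B)
  have hB' : B ≠ 0 := hB.ne'
  have e : N * A + (N / B) ^ 2 * B - 2 * (N / B) * N = N * A - N ^ 2 / B := by
    field_simp; ring
  rw [e, sub_nonneg, div_le_iff₀ hB] at k
  nlinarith [k]

section AuxStmt3
variable {G : Type*} [AddCommGroup G] (star : G → G) (Ω : Set G) (f : G → ℂ)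
variable (hpd : ∀ (n : ℕ) (x : Fin n → G), (∀ i, x i ∈ Ω) → ∀ ξ : Fin n → ℂ,
      0 ≤ ∑ i, ∑ j, f (x i + star (x j)) * ξ i * (starRingEnd ℂ) (ξ j))
include hpd

private lemma aux_diag_stmt3 {x : G} (hx : x ∈ Ω) :
    0 ≤ (f (x + star x)).re ∧ (f (x + star x)).im = 0 := by
  have h := hpd 1 ![x] (by intro i; fin_cases i; exact hx) ![1]
  simp [Fin.sum_univ_one] at h
  rw [Complex.nonneg_iff] at h
  exact ⟨h.1, h.2.symm⟩

private lemma aux_herm_stmt3 {a b : G} (ha : a ∈ Ω) (hb : b ∈ Ω) :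
    f (b + star a) = (starRingEnd ℂ) (f (a + star b)) := by
  have hda := (aux_diag_stmt3 star Ω f hpd ha).2
  have hdb := (aux_diag_stmt3 star Ω f hpd hb).2
  have h1 := hpd 2 ![a, b] (by intro i; fin_cases i <;> assumption) ![1, 1]
  have h2 := hpd 2 ![a, b] (by intro i; fin_cases i <;> assumption) ![1, Complex.I]
  simp [Fin.sum_univ_two] at h1 h2
  rw [Complex.nonneg_iff] at h1 h2
  obtain ⟨-, h1i⟩ := h1
  obtain ⟨-, h2i⟩ := h2
  simp only [Complex.add_im, Complex.add_re, Complex.neg_im, Complex.neg_re,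
    Complex.mul_im, Complex.mul_re, Complex.I_re, Complex.I_im,
    Complex.conj_re, Complex.conj_im] at h1i h2i
  apply Complex.ext <;>
    simp only [Complex.conj_re, Complex.conj_im] <;> nlinarith [hda, hdb]

private lemma aux_key_stmt3 {x x₀ y₀ : G} (hx : x ∈ Ω) (hx0 : x₀ ∈ Ω) (hy0 : y₀ ∈ Ω) (t : ℝ) :
    0 ≤ Complex.normSq (f (x + star y₀) - f (x₀ + star y₀)) *
        ((f (x + star x)).re + (f (x₀ + star x₀)).re - 2 * (f (x + star x₀)).re)
      + t ^ 2 * (f (y₀ + star y₀)).re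
      - 2 * t * Complex.normSq (f (x + star y₀) - f (x₀ + star y₀)) := by
  set c := f (x + star y₀) - f (x₀ + star y₀) with hc
  have hda := (aux_diag_stmt3 star Ω f hpd hx).2
  have hdb := (aux_diag_stmt3 star Ω f hpd hx0).2
  have hdc := (aux_diag_stmt3 star Ω f hpd hy0).2
  have h := hpd 3 ![x, x₀, y₀] (by intro i; fin_cases i <;> assumption)
      ![-(starRingEnd ℂ c), (starRingEnd ℂ c), (t : ℂ)]
  simp only [Fin.sum_univ_three, Matrix.cons_val_zero, Matrix.cons_val_one,
    Matrix.head_cons, Matrix.cons_val_two, Matrix.tail_cons] at h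
  rw [aux_herm_stmt3 star Ω f hpd hx hx0, aux_herm_stmt3 star Ω f hpd hx hy0,
    aux_herm_stmt3 star Ω f hpd hx0 hy0] at h
  rw [Complex.nonneg_iff] at h
  obtain ⟨hre, -⟩ := h
  simp only [hc, Complex.normSq_apply, Complex.add_re, Complex.add_im, Complex.sub_re,
    Complex.sub_im, Complex.neg_re, Complex.neg_im, Complex.mul_re, Complex.mul_im,
    Complex.conj_re, Complex.conj_im, Complex.ofReal_re, Complex.ofReal_im,
    hda, hdb, hdc] at hre ⊢
  nlinarith [hre]

private lemma aux_A_nonneg_stmt3 {x x₀ : G} (hx : x ∈ Ω) (hx0 : x₀ ∈ Ω) :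
    0 ≤ (f (x + star x)).re + (f (x₀ + star x₀)).re - 2 * (f (x + star x₀)).re := by
  have h := hpd 2 ![x, x₀] (by intro i; fin_cases i <;> assumption) ![1, -1]
  simp only [Fin.sum_univ_two, Matrix.cons_val_zero, Matrix.cons_val_one, Matrix.head_cons] at h
  rw [aux_herm_stmt3 star Ω f hpd hx hx0] at h
  rw [Complex.nonneg_iff] at h
  obtain ⟨hre, -⟩ := h
  simp only [Complex.add_re, Complex.mul_re, Complex.neg_re, Complex.neg_im, Complex.mul_im,
    Complex.one_re, Complex.one_im, Complex.conj_re, Complex.conj_im, map_one, map_neg,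
    Complex.add_im] at hre
  nlinarith [hre]

private lemma aux_cs_stmt3 {x x₀ y₀ : G} (hx : x ∈ Ω) (hx0 : x₀ ∈ Ω) (hy0 : y₀ ∈ Ω) :
    Complex.normSq (f (x + star y₀) - f (x₀ + star y₀)) ≤
      ((f (x + star x)).re + (f (x₀ + star x₀)).re - 2 * (f (x + star x₀)).re) *
        (f (y₀ + star y₀)).re := by
  have hA := aux_A_nonneg_stmt3 star Ω f hpd hx hx0
  have hB := (aux_diag_stmt3 star Ω f hpd hy0).1
  have key := aux_key_stmt3 star Ω f hpd hx hx0 hy0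
  rcases (Complex.normSq_nonneg (f (x + star y₀) - f (x₀ + star y₀))).eq_or_lt with hN | hN
  · rw [← hN]; exact mul_nonneg hA hB
  · rcases hB.eq_or_lt with hB0 | hB0
    · exfalso
      have kA := key ((f (x + star x)).re + (f (x₀ + star x₀)).re - 2 * (f (x + star x₀)).re)
      have k1 := key 1
      rw [← hB0] at kA k1
      nlinarith [kA, k1, hN, hA]
    · exact real_quad_stmt3 hN hA hB0 key

end AuxStmt3

/-- For a positive definite function `f` on `S = Ω + Ω*` over an abelian
topological group, `f` is continuous on `S` iff `Re f` is continuous (within `S`) at every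
point of the diagonal `D_Ω(S) = {x + x* : x ∈ Ω}`. -/
theorem stmt3 {G : Type*} [AddCommGroup G] [TopologicalSpace G] [IsTopologicalAddGroup G]
    (star : G → G) (hstar : Continuous star)
    (Ω : Set G) (hΩ : IsOpen Ω)
    (S : Set G) (hS : S = {z | ∃ x ∈ Ω, ∃ y ∈ Ω, z = x + star y})
    (f : G → ℂ)
    (hpd : ∀ (n : ℕ) (x : Fin n → G), (∀ i, x i ∈ Ω) → ∀ ξ : Fin n → ℂ,
      0 ≤ ∑ i, ∑ j, f (x i + star (x j)) * ξ i * (starRingEnd ℂ) (ξ j)) :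
    ContinuousOn f S ↔
      ∀ x ∈ Ω, ContinuousWithinAt (fun z => (f z).re) S (x + star x) := by
  subst hS
  constructor
  · intro h x hx
    exact Complex.continuous_re.continuousAt.comp_continuousWithinAt (h _ ⟨x, hx, x, hx, rfl⟩)
  · intro hdiag z hz
    obtain ⟨x₀, hx₀, y₀, hy₀, rfl⟩ := hz
    set S : Set G := {z | ∃ x ∈ Ω, ∃ y ∈ Ω, z = x + star y} with hSdef
    set z₀ : G := x₀ + star y₀ with hz₀
    have hg : Continuous fun z : G => z - star y₀ := continuous_id.sub continuous_const
    set U : Set G := (fun z : G => z - star y₀) ⁻¹' Ω with hU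
    have hUopen : IsOpen U := hΩ.preimage hg
    have hgz₀ : z₀ - star y₀ = x₀ := by rw [hz₀, add_sub_cancel_right]
    have hz₀U : z₀ ∈ U := by simp only [hU, Set.mem_preimage, hgz₀]; exact hx₀
    set B : ℝ := (f (y₀ + star y₀)).re with hB
    set A : G → ℝ := fun z =>
      (f ((z - star y₀) + star (z - star y₀))).re + (f (x₀ + star x₀)).re
        - 2 * (f ((z - star y₀) + star x₀)).re with hA
    -- the estimate coming from positive definiteness
    have est : ∀ z ∈ U, Complex.normSq (f z - f z₀) ≤ A z * B := by
      intro z hzU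
      have h := aux_cs_stmt3 star Ω f hpd (hzU : z - star y₀ ∈ Ω) hx₀ hy₀
      rwa [sub_add_cancel] at h
    -- the diagonal continuity hypothesis at x₀
    have hcw : ContinuousWithinAt (fun z => (f z).re) S (x₀ + star x₀) := hdiag x₀ hx₀
    -- first composed map : z ↦ (z - y₀*) + (z - y₀*)*
    have t1 : Tendsto (fun z => (f ((z - star y₀) + star (z - star y₀))).re)
        (𝓝[U] z₀) (𝓝 ((f (x₀ + star x₀)).re)) := by
      have hm : ContinuousWithinAt (fun z : G => (z - star y₀) + star (z - star y₀)) U z₀ :=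
        (hg.add (hstar.comp hg)).continuousWithinAt
      have hmaps : Set.MapsTo (fun z : G => (z - star y₀) + star (z - star y₀)) U S :=
        fun z hz => ⟨z - star y₀, hz, z - star y₀, hz, rfl⟩
      have hcw' : ContinuousWithinAt (fun z => (f z).re) S
          ((fun z : G => (z - star y₀) + star (z - star y₀)) z₀) := by
        simp only [hgz₀]; exact hcw
      have hcomp := ContinuousWithinAt.comp
        (f := fun z : G => (z - star y₀) + star (z - star y₀)) hcw' hm hmaps
      simpa [Function.comp, Function.comp_def, hgz₀] using hcomp.tendsto
    -- second composed map : z ↦ (z - y₀*) + x₀*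
    have t2 : Tendsto (fun z => (f ((z - star y₀) + star x₀)).re)
        (𝓝[U] z₀) (𝓝 ((f (x₀ + star x₀)).re)) := by
      have hm : ContinuousWithinAt (fun z : G => (z - star y₀) + star x₀) U z₀ :=
        (hg.add continuous_const).continuousWithinAt
      have hmaps : Set.MapsTo (fun z : G => (z - star y₀) + star x₀) U S :=
        fun z hz => ⟨z - star y₀, hz, x₀, hx₀, rfl⟩
      have hcw' : ContinuousWithinAt (fun z => (f z).re) S
          ((fun z : G => (z - star y₀) + star x₀) z₀) := by
        simp only [hgz₀]; exact hcw
      have hcomp := ContinuousWithinAt.comp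
        (f := fun z : G => (z - star y₀) + star x₀) hcw' hm hmaps
      simpa [Function.comp, Function.comp_def, hgz₀] using hcomp.tendsto
    have hAt : Tendsto A (𝓝[U] z₀) (𝓝 0) := by
      have h0 := (t1.add (tendsto_const_nhds :
          Tendsto (fun _ : G => (f (x₀ + star x₀)).re) (𝓝[U] z₀) _)).sub (t2.const_mul 2)
      have e : (f (x₀ + star x₀)).re + (f (x₀ + star x₀)).re
          - 2 * (f (x₀ + star x₀)).re = 0 := by ring
      rw [e] at h0
      exact h0
    have hsq : Tendsto (fun z => Complex.normSq (f z - f z₀)) (𝓝[U] z₀) (𝓝 0) := by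
      refine squeeze_zero' (Eventually.of_forall fun z => Complex.normSq_nonneg _)
        ?_ (by simpa using hAt.mul_const B)
      filter_upwards [self_mem_nhdsWithin] with z hzU using est z hzU
    have hnorm : Tendsto (fun z => ‖f z - f z₀‖) (𝓝[U] z₀) (𝓝 0) := by
      have hsqrt : Tendsto Real.sqrt (𝓝 0) (𝓝 0) := by
        simpa using (Real.continuous_sqrt.tendsto 0)
      have := hsqrt.comp hsq
      convert this using 2 with z
      all_goals simp [Function.comp, Complex.norm_def]
    have hft : Tendsto f (𝓝[U] z₀) (𝓝 (f z₀)) :=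
      tendsto_iff_norm_sub_tendsto_zero.mpr hnorm
    rw [hUopen.nhdsWithin_eq hz₀U] at hft
    exact hft.mono_left nhdsWithin_le_nhds
end

section
/- Let Ω be an open subset of ℝⁿ, S = Ω − Ω = {x − y : x, y ∈ Ω}, and let f : S → ℂ be a positive definite function in the usual sense, i.e. k(x,y) := f(x − y) is a positive definite kernel on Ω. Then f is continuous on S if and only if Re(f) is continuous at the origin 0 ∈ S. -/
open Filter Topology ComplexOrder

/-- A positive definite function on `S = Ω − Ω ⊆ ℝⁿ` is continuous on `S`
iff its real part is continuous at the origin. -/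
theorem stmt4 (n : ℕ) (Ω : Set (Fin n → ℝ)) (hΩ : IsOpen Ω)
    (S : Set (Fin n → ℝ)) (hS : S = {z | ∃ x ∈ Ω, ∃ y ∈ Ω, z = x - y})
    (f : (Fin n → ℝ) → ℂ)
    (hpd : ∀ (m : ℕ) (x : Fin m → (Fin n → ℝ)), (∀ i, x i ∈ Ω) → ∀ ξ : Fin m → ℂ,
      0 ≤ ∑ i, ∑ j, f (x i - x j) * ξ i * (starRingEnd ℂ) (ξ j)) :
    ContinuousOn f S ↔ ContinuousWithinAt (fun z => (f z).re) S 0 := by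
  rcases Set.eq_empty_or_nonempty Ω with hΩe | ⟨a₀, ha₀⟩
  · have hSe : S = ∅ := by rw [hS, hΩe]; simp
    rw [hSe]
    constructor
    · intro _; simp [ContinuousWithinAt, nhdsWithin_empty]
    · intro _; exact continuousOn_empty f
  · have h0S : (0 : Fin n → ℝ) ∈ S := by
      rw [hS]; exact ⟨a₀, ha₀, a₀, ha₀, by simp⟩
    have h0 := hpd 1 ![a₀] (by intro i; fin_cases i <;> simpa) ![1]
    simp [Fin.sum_univ_one, Complex.le_def] at h0
    obtain ⟨hc0, him0'⟩ := h0
    have him0 : (f 0).im = 0 := him0'.symm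
    set c : ℝ := (f 0).re with hc
    have herm : ∀ u ∈ Ω, ∀ v ∈ Ω, f (v - u) = (starRingEnd ℂ) (f (u - v)) := by
      intro u hu v hv
      have hmem : ∀ i, ![u, v] i ∈ Ω := by intro i; fin_cases i <;> simpa
      have h1 := hpd 2 ![u, v] hmem ![1, 1]
      have h2 := hpd 2 ![u, v] hmem ![1, Complex.I]
      simp [Fin.sum_univ_two, Complex.le_def, him0] at h1 h2
      apply Complex.ext
      · simp [Complex.conj_re]; linarith [h2.2]
      · simp [Complex.conj_im]; linarith [h1.2]
    have hb : ∀ x ∈ Ω, ∀ y ∈ Ω, ‖f (x - y)‖ ≤ c := by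
      intro x hx y hy
      by_cases hg0 : f (x - y) = 0
      · simp [hg0]; exact hc0
      · have hmem : ∀ i, ![x, y] i ∈ Ω := by intro i; fin_cases i <;> simpa
        have h := hpd 2 ![x, y] hmem ![(starRingEnd ℂ) (f (x - y)), ((-‖f (x - y)‖ : ℝ) : ℂ)]
        simp only [Fin.sum_univ_two, Matrix.cons_val_zero, Matrix.cons_val_one,
          Matrix.head_cons, sub_self] at h
        rw [herm x hx y hy] at h
        rw [Complex.le_def] at h
        have h1 := h.1
        simp only [Complex.add_re, Complex.add_im, Complex.mul_re, Complex.mul_im,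
          Complex.neg_re, Complex.neg_im, Complex.conj_re, Complex.conj_im,
          Complex.one_re, Complex.one_im, Complex.ofReal_re, Complex.ofReal_im,
          Complex.zero_re, Complex.zero_im, him0] at h1
        have hns : (f (x - y)).re * (f (x - y)).re + (f (x - y)).im * (f (x - y)).im
            = ‖f (x - y)‖ * ‖f (x - y)‖ := by
          rw [← Complex.normSq_apply, Complex.normSq_eq_norm_sq, sq]
        have hgpos : 0 < ‖f (x - y)‖ := norm_pos_iff.mpr hg0
        have h3 : ((f (x - y)).re * (f (x - y)).re + (f (x - y)).im * (f (x - y)).im) * ‖f (x - y)‖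
            = ‖f (x - y)‖ * ‖f (x - y)‖ * ‖f (x - y)‖ := by rw [hns]
        nlinarith [h1, hns, h3, hgpos, mul_pos hgpos hgpos]
    have key : ∀ a ∈ Ω, ∀ x ∈ Ω, ∀ b ∈ Ω, ∀ w : ℂ,
        0 ≤ c * (1 + 2 * Complex.normSq w) + 2 * ((f (x - b) - f (a - b)) * w).re
          - 2 * Complex.normSq w * (f (x - a)).re := by
      intro a ha x hx b hb' w
      have hmem : ∀ i, ![b, x, a] i ∈ Ω := by intro i; fin_cases i <;> simpa
      have h := hpd 3 ![b, x, a] hmem ![1, w, -w]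
      simp only [Fin.sum_univ_three, Matrix.cons_val_zero, Matrix.cons_val_one,
        Matrix.head_cons, Matrix.cons_val_two, Matrix.tail_cons, sub_self] at h
      rw [herm x hx b hb', herm a ha b hb', herm x hx a ha] at h
      rw [Complex.le_def] at h
      have h1 := h.1
      simp only [Complex.add_re, Complex.add_im, Complex.mul_re, Complex.mul_im,
        Complex.neg_re, Complex.neg_im, Complex.conj_re, Complex.conj_im,
        Complex.one_re, Complex.one_im, Complex.zero_re, Complex.zero_im, him0] at h1
      simp only [Complex.normSq_apply, Complex.sub_re, Complex.sub_im, Complex.mul_re]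
      ring_nf
      ring_nf at h1
      linarith [h1]
    have est : ∀ a ∈ Ω, ∀ x ∈ Ω, ∀ b ∈ Ω, ∀ t : ℝ, 0 < t →
        2 * t * ‖f (x - b) - f (a - b)‖ ≤ c * (1 + 2 * t ^ 2)
          - 2 * t ^ 2 * (f (x - a)).re := by
      intro a ha x hx b hb' t ht
      by_cases hd0 : f (x - b) - f (a - b) = 0
      · have h := key a ha x hx b hb' (t : ℂ)
        rw [hd0] at h
        simp only [hd0, norm_zero, mul_zero]
        simp [Complex.normSq_apply] at h
        nlinarith [h]
      · set d := f (x - b) - f (a - b) with hd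
        have hdn : 0 < ‖d‖ := norm_pos_iff.mpr hd0
        have hnsq : Complex.normSq d = ‖d‖ * ‖d‖ := by
          rw [Complex.normSq_eq_norm_sq]; ring
        have h := key a ha x hx b hb' ((-(t / ‖d‖) : ℝ) * (starRingEnd ℂ) d)
        rw [← hd] at h
        have e1 : (d * ((-(t / ‖d‖) : ℝ) * (starRingEnd ℂ) d)).re = -(t * ‖d‖) := by
          have h2 : d * ((-(t / ‖d‖) : ℝ) * (starRingEnd ℂ) d)
              = ((-(t / ‖d‖) : ℝ) : ℂ) * ((Complex.normSq d : ℝ) : ℂ) := by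
            rw [← Complex.mul_conj]; ring
          rw [h2, ← Complex.ofReal_mul, Complex.ofReal_re, hnsq]
          rw [neg_mul, div_mul_eq_mul_div, mul_div_assoc, mul_comm ‖d‖ ‖d‖, mul_div_assoc,
            div_self hdn.ne', mul_one]
        have e2 : Complex.normSq ((-(t / ‖d‖) : ℝ) * (starRingEnd ℂ) d) = t ^ 2 := by
          rw [Complex.normSq_mul, Complex.normSq_conj, Complex.normSq_ofReal, hnsq]
          rw [neg_mul_neg, div_mul_div_comm, div_mul_cancel₀ _ (mul_ne_zero hdn.ne' hdn.ne'), sq]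
        rw [e1, e2] at h
        linarith [h]
    constructor
    · intro hf
      exact Complex.continuous_re.continuousAt.comp_continuousWithinAt (hf 0 h0S)
    · intro hre
      rcases eq_or_lt_of_le hc0 with hceq | hcpos
      · have hz : Set.EqOn f (fun _ => 0) S := by
          intro z hzS
          rw [hS] at hzS
          obtain ⟨x, hx, y, hy, rfl⟩ := hzS
          have hbd := hb x hx y hy
          rw [← hceq] at hbd
          simpa using le_antisymm hbd (norm_nonneg _)
        exact continuousOn_const.congr hz
      · intro s hs
        rw [hS] at hs
        obtain ⟨a, ha, b, hb'', rfl⟩ := hs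
        rw [Metric.continuousWithinAt_iff]
        intro ε hε
        obtain ⟨δ₁, hδ₁pos, hδ₁⟩ := Metric.isOpen_iff.mp hΩ a ha
        have hε' : 0 < ε ^ 2 / (4 * c) := by positivity
        rw [Metric.continuousWithinAt_iff] at hre
        obtain ⟨δ₀, hδ₀pos, hδ₀⟩ := hre _ hε'
        refine ⟨min δ₁ δ₀, lt_min hδ₁pos hδ₀pos, ?_⟩
        intro z hzS hdz
        have hxa : z + b - a = z - (a - b) := by abel
        have hxb : z + b - b = z := by abel
        have hdist : dist (z + b) a = dist z (a - b) := by
          rw [dist_eq_norm, dist_eq_norm, hxa]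
        have hxΩ : z + b ∈ Ω := hδ₁ (by
          rw [Metric.mem_ball, hdist]
          exact lt_of_lt_of_le hdz (min_le_left _ _))
        have huS : z + b - a ∈ S := by
          rw [hS]; exact ⟨z + b, hxΩ, a, ha, rfl⟩
        have hu0 : dist (z + b - a) 0 < δ₀ := by
          rw [dist_zero_right, hxa, ← dist_eq_norm]
          exact lt_of_lt_of_le hdz (min_le_right _ _)
        have hr := hδ₀ huS hu0
        rw [Real.dist_eq] at hr
        set r : ℝ := (f (z + b - a)).re with hrdef
        have hrc : c - r < ε ^ 2 / (4 * c) := by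
          have := abs_lt.mp hr
          linarith [this.1]
        have htpos : (0 : ℝ) < c / ε := by positivity
        have hest := est a ha (z + b) hxΩ b hb'' (c / ε) htpos
        rw [hxb] at hest
        have ht2pos : (0 : ℝ) < (c / ε) ^ 2 := by positivity
        have e5 : (c / ε) ^ 2 * (ε ^ 2 / (4 * c)) = c / 4 := by
          field_simp
        have h6 : 2 * (c / ε) ^ 2 * (c - r) < c := by
          have h7 : (c / ε) ^ 2 * (c - r) < (c / ε) ^ 2 * (ε ^ 2 / (4 * c)) :=
            mul_lt_mul_of_pos_left hrc ht2pos
          rw [e5] at h7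
          linarith
        have e7 : c / ε * ε = c := div_mul_cancel₀ c hε.ne'
        have h8 : 2 * (c / ε) * ‖f z - f (a - b)‖ < 2 * (c / ε) * ε := by
          have : 2 * (c / ε) * ε = 2 * c := by rw [mul_assoc, e7]
          rw [this]
          nlinarith [hest, h6]
        have h9 : ‖f z - f (a - b)‖ < ε :=
          lt_of_mul_lt_mul_left h8 (by positivity)
        rw [dist_eq_norm]
        exact h9
end

section
/- Let Ω be an open subset of ℂⁿ, let S = codiff(Ω) = {x − conj(y) : x, y ∈ Ω} (conjugation taken coordinatewise), and let f : S → ℂ be a positive definite function, i.e. k(x,y) := f(x − conj(y)) is a positive definite kernel on Ω. Then f is continuous on S if and only if Re(f) is continuous at every point of D_Ω(S) = {x − conj(x) : x ∈ Ω} (as a function on S with the subspace topology). -/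
open Filter Topology ComplexOrder

variable {n : ℕ}

section aux
variable {Ω : Set (Fin n → ℂ)} {f : (Fin n → ℂ) → ℂ}
  (hpd : ∀ (m : ℕ) (x : Fin m → (Fin n → ℂ)), (∀ i, x i ∈ Ω) → ∀ ξ : Fin m → ℂ,
      0 ≤ ∑ i, ∑ j, f (x i - fun t => (starRingEnd ℂ) (x j t)) * ξ i * (starRingEnd ℂ) (ξ j))

include hpd

private lemma aux1 {x : Fin n → ℂ} (hx : x ∈ Ω) :
    0 ≤ f (x - fun t => (starRingEnd ℂ) (x t)) := by
  have h := hpd 1 ![x] (by simp [hx]) ![1]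
  simpa [Fin.sum_univ_one] using h

private lemma aux2 {x y : Fin n → ℂ} (hx : x ∈ Ω) (hy : y ∈ Ω) :
    f (y - fun t => (starRingEnd ℂ) (x t)) =
      (starRingEnd ℂ) (f (x - fun t => (starRingEnd ℂ) (y t))) := by
  have h1 := hpd 2 ![x, y] (by intro i; fin_cases i <;> simpa) ![1, 1]
  have h2 := hpd 2 ![x, y] (by intro i; fin_cases i <;> simpa) ![1, Complex.I]
  have hx0 := aux1 hpd hx
  have hy0 := aux1 hpd hy
  simp only [Fin.sum_univ_two, Matrix.cons_val_zero, Matrix.cons_val_one, Matrix.head_cons,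
    mul_one, one_mul, map_one, Complex.conj_I] at h1 h2
  rw [Complex.le_def] at h1 h2 hx0 hy0
  simp only [Complex.zero_re, Complex.zero_im] at h1 h2 hx0 hy0
  set a := f (x - fun t => (starRingEnd ℂ) (y t)) with ha
  set b := f (y - fun t => (starRingEnd ℂ) (x t)) with hb
  have e1 : a.im + b.im = 0 := by
    have := h1.2; simp [Complex.add_im] at this; linarith [this, hx0.2, hy0.2]
  have e2 : b.re - a.re = 0 := by
    have := h2.2
    simp [Complex.add_im, Complex.mul_im, Complex.I_re, Complex.I_im, Complex.mul_re] at this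
    nlinarith [this, hx0.2, hy0.2]
  apply Complex.ext <;> simp [Complex.conj_re, Complex.conj_im] <;> linarith

private lemma aux3 {x x' y : Fin n → ℂ} (hx : x ∈ Ω) (hx' : x' ∈ Ω) (hy : y ∈ Ω) :
    ‖f (x - fun t => (starRingEnd ℂ) (y t)) - f (x' - fun t => (starRingEnd ℂ) (y t))‖ ^ 2 ≤
      (f (y - fun t => (starRingEnd ℂ) (y t))).re *
        ((f (x - fun t => (starRingEnd ℂ) (x t))).re +
          (f (x' - fun t => (starRingEnd ℂ) (x' t))).re -
          2 * (f (x - fun t => (starRingEnd ℂ) (x' t))).re) := by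
  set Kxy := f (x - fun t => (starRingEnd ℂ) (y t)) with hKxy
  set Kx'y := f (x' - fun t => (starRingEnd ℂ) (y t)) with hKx'y
  set Kxx := f (x - fun t => (starRingEnd ℂ) (x t)) with hKxx
  set Kx'x' := f (x' - fun t => (starRingEnd ℂ) (x' t)) with hKx'x'
  set Kyy := f (y - fun t => (starRingEnd ℂ) (y t)) with hKyy
  set Kxx' := f (x - fun t => (starRingEnd ℂ) (x' t)) with hKxx'
  set g := Kxy - Kx'y with hg
  set Are := Kxx.re + Kx'x'.re - 2 * Kxx'.re with hAre
  set Cre := Kyy.re with hCre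
  have hC0 : 0 ≤ Cre := ((Complex.le_def.1 (aux1 hpd hy)).1 : _)
  have hKxxim : Kxx.im = 0 := ((Complex.le_def.1 (aux1 hpd hx)).2).symm
  have hKx'x'im : Kx'x'.im = 0 := ((Complex.le_def.1 (aux1 hpd hx')).2).symm
  have hKyyim : Kyy.im = 0 := ((Complex.le_def.1 (aux1 hpd hy)).2).symm
  have hherm : f (x' - fun t => (starRingEnd ℂ) (x t)) = (starRingEnd ℂ) Kxx' :=
    aux2 hpd hx hx'
  have hh1 : f (y - fun t => (starRingEnd ℂ) (x t)) = (starRingEnd ℂ) Kxy :=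
    aux2 hpd hx hy
  have hh2 : f (y - fun t => (starRingEnd ℂ) (x' t)) = (starRingEnd ℂ) Kx'y :=
    aux2 hpd hx' hy
  have hA0 : 0 ≤ Are := by
    have h := hpd 2 ![x, x'] (by intro i; fin_cases i <;> simpa) ![1, -1]
    simp only [Fin.sum_univ_two, Matrix.cons_val_zero, Matrix.cons_val_one, Matrix.head_cons,
      mul_one, one_mul, map_one, map_neg, mul_neg, neg_neg, mul_one] at h
    have := (Complex.le_def.1 h).1
    simp only [Complex.zero_re, Complex.add_re, Complex.neg_re, hherm, Complex.conj_re] at this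
    rw [hAre]
    rw [← hKxx, ← hKx'x', ← hKxx'] at this
    linarith
  clear_value Kxy Kx'y Kxx Kx'x' Kyy Kxx' g Are Cre
  by_cases hg0 : g = 0
  · rw [hg0]
    simpa using mul_nonneg hC0 hA0
  -- main case
  set c : ℂ := (starRingEnd ℂ) g / (‖g‖ : ℂ) with hc
  have hgnorm : (‖g‖ : ℂ) ≠ 0 := by
    simpa using norm_ne_zero_iff.2 hg0
  have hcc : c * (starRingEnd ℂ) c = 1 := by
    rw [Complex.mul_conj']
    norm_cast
    simp [hc, norm_div, hg0]
  have hcg : c * g = (‖g‖ : ℂ) := by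
    rw [hc, div_mul_eq_mul_div, Complex.conj_mul']
    rw [sq]
    field_simp
  have hcg2 : (starRingEnd ℂ) c * (starRingEnd ℂ) g = (‖g‖ : ℂ) := by
    rw [← map_mul, hcg, Complex.conj_ofReal]
  clear_value c
  have key : ∀ t : ℝ, 0 ≤ Are * (t * t) + (2 * ‖g‖) * t + Cre := by
    intro t
    have h := hpd 3 ![x, x', y] (by intro i; fin_cases i <;> simpa)
      ![(t : ℂ) * c, -((t : ℂ) * c), 1]
    simp only [Fin.sum_univ_three, Matrix.cons_val_zero, Matrix.cons_val_one, Matrix.head_cons,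
      Matrix.cons_val_two, Matrix.tail_cons, map_neg, map_mul, Complex.conj_ofReal, map_one,
      mul_one, one_mul, mul_neg, neg_mul, neg_neg] at h
    rw [hh1, hh2, hherm, ← hKxy, ← hKx'y, ← hKxx, ← hKx'x', ← hKyy, ← hKxx'] at h
    have h2 : (0:ℂ) ≤ (t:ℂ) * (t:ℂ) * (Kxx + Kx'x' - Kxx' - (starRingEnd ℂ) Kxx') *
        (c * (starRingEnd ℂ) c) + (t:ℂ) * (c * (Kxy - Kx'y)) +
        (t:ℂ) * ((starRingEnd ℂ) c * ((starRingEnd ℂ) Kxy - (starRingEnd ℂ) Kx'y)) + Kyy := by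
      calc (0:ℂ) ≤ Kxx * (↑t * c) * (↑t * (starRingEnd ℂ) c) +
            -(Kxx' * (↑t * c) * (↑t * (starRingEnd ℂ) c)) + Kxy * (↑t * c) +
            (-((starRingEnd ℂ) Kxx' * (↑t * c) * (↑t * (starRingEnd ℂ) c)) +
              Kx'x' * (↑t * c) * (↑t * (starRingEnd ℂ) c) + -(Kx'y * (↑t * c))) +
            ((starRingEnd ℂ) Kxy * (↑t * (starRingEnd ℂ) c) +
              -((starRingEnd ℂ) Kx'y * (↑t * (starRingEnd ℂ) c)) + Kyy) := h
        _ = _ := by ring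
    rw [hcc, mul_one, ← map_sub, ← hg, hcg, hcg2] at h2
    have h3 := (Complex.le_def.1 h2).1
    simp only [Complex.zero_re, Complex.add_re, Complex.sub_re, Complex.mul_re,
      Complex.ofReal_re, Complex.ofReal_im, Complex.conj_re, Complex.conj_im,
      Complex.mul_im, Complex.add_im, Complex.sub_im, hKxxim, hKx'x'im] at h3
    rw [hAre, hCre]
    ring_nf
    ring_nf at h3
    linarith
  have hd := discrim_le_zero key
  rw [discrim] at hd
  nlinarith [hd, norm_nonneg g]
end aux

/-- A positive definite function on the codifference set
`S = {x − conj y : x, y ∈ Ω} ⊆ ℂⁿ` is continuous on `S` iff its real part is continuous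
(within `S`) at every point of the diagonal `D_Ω(S) = {x − conj x : x ∈ Ω}`. -/
theorem stmt5 (n : ℕ) (Ω : Set (Fin n → ℂ)) (hΩ : IsOpen Ω)
    (S : Set (Fin n → ℂ))
    (hS : S = {z | ∃ x ∈ Ω, ∃ y ∈ Ω, z = x - fun i => (starRingEnd ℂ) (y i)})
    (f : (Fin n → ℂ) → ℂ)
    (hpd : ∀ (m : ℕ) (x : Fin m → (Fin n → ℂ)), (∀ i, x i ∈ Ω) → ∀ ξ : Fin m → ℂ,
      0 ≤ ∑ i, ∑ j, f (x i - fun t => (starRingEnd ℂ) (x j t)) * ξ i * (starRingEnd ℂ) (ξ j)) :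
    ContinuousOn f S ↔
      ∀ x ∈ Ω, ContinuousWithinAt (fun z => (f z).re) S
        (x - fun i => (starRingEnd ℂ) (x i)) := by
  have cjcont : Continuous (fun v : Fin n → ℂ => fun i => (starRingEnd ℂ) (v i)) :=
    continuous_pi fun i => Complex.continuous_conj.comp (continuous_apply i)
  constructor
  · intro hcont x hx
    have hmem : (x - fun i => (starRingEnd ℂ) (x i)) ∈ S := by
      rw [hS]; exact ⟨x, hx, x, hx, rfl⟩
    exact Complex.continuous_re.continuousAt.comp_continuousWithinAt (hcont _ hmem)
  · intro hre z₀ hz₀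
    rw [hS] at hz₀
    obtain ⟨x₀, hx₀, y₀, hy₀, rfl⟩ := hz₀
    set cy₀ : Fin n → ℂ := fun i => (starRingEnd ℂ) (y₀ i) with hcy₀
    set cx₀ : Fin n → ℂ := fun i => (starRingEnd ℂ) (x₀ i) with hcx₀
    set p := x₀ - cy₀ with hp
    set X : (Fin n → ℂ) → (Fin n → ℂ) := fun z => z + cy₀ with hX
    have hXp : X p = x₀ := by rw [hX, hp]; exact sub_add_cancel x₀ cy₀
    have hXcont : Tendsto X (𝓝[S] p) (𝓝 x₀) := by
      rw [← hXp]
      exact ((continuous_id.add continuous_const).tendsto p).mono_left nhdsWithin_le_nhds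
    have hevΩ : ∀ᶠ z in 𝓝[S] p, X z ∈ Ω := hXcont.eventually (hΩ.eventually_mem hx₀)
    set r₀ : ℝ := (f (x₀ - cx₀)).re with hr₀
    -- R1 : z ↦ (f (X z - conj (X z))).re tends to r₀
    have hR1 : Tendsto (fun z => (f (X z - fun i => (starRingEnd ℂ) (X z i))).re)
        (𝓝[S] p) (𝓝 r₀) := by
      have hgt : Tendsto (fun z => X z - fun i => (starRingEnd ℂ) (X z i)) (𝓝[S] p)
          (𝓝[S] (x₀ - cx₀)) := by
        rw [tendsto_nhdsWithin_iff]
        constructor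
        · have h1 : Tendsto (fun z => X z - fun i => (starRingEnd ℂ) (X z i)) (𝓝[S] p)
              (𝓝 (X p - fun i => (starRingEnd ℂ) (X p i))) := by
            exact ((continuous_id.add continuous_const).sub
              (cjcont.comp (continuous_id.add continuous_const))).continuousAt.tendsto.mono_left
              nhdsWithin_le_nhds
          rw [hXp, ← hcx₀] at h1
          exact h1
        · filter_upwards [hevΩ] with z hz
          rw [hS]
          exact ⟨X z, hz, X z, hz, rfl⟩
      have hcw := hre x₀ hx₀
      rw [← hcx₀] at hcw
      have hcw' : Tendsto (fun w => (f w).re) (𝓝[S] (x₀ - cx₀)) (𝓝 r₀) := hcw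
      have := Filter.Tendsto.comp hcw' hgt
      exact this
    -- R2 : z ↦ (f (X z - cx₀)).re tends to r₀
    have hR2 : Tendsto (fun z => (f (X z - cx₀)).re) (𝓝[S] p) (𝓝 r₀) := by
      have hgt : Tendsto (fun z => X z - cx₀) (𝓝[S] p) (𝓝[S] (x₀ - cx₀)) := by
        rw [tendsto_nhdsWithin_iff]
        constructor
        · have h1 : Tendsto (fun z => X z - cx₀) (𝓝[S] p) (𝓝 (X p - cx₀)) :=
            ((continuous_id.add continuous_const).sub
              continuous_const).continuousAt.tendsto.mono_left nhdsWithin_le_nhds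
          rwa [hXp] at h1
        · filter_upwards [hevΩ] with z hz
          rw [hS, hcx₀]
          exact ⟨X z, hz, x₀, hx₀, rfl⟩
      have hcw := hre x₀ hx₀
      rw [← hcx₀] at hcw
      have hcw' : Tendsto (fun w => (f w).re) (𝓝[S] (x₀ - cx₀)) (𝓝 r₀) := hcw
      have := Filter.Tendsto.comp hcw' hgt
      exact this
    set D : (Fin n → ℂ) → ℝ := fun z =>
      (f (X z - fun i => (starRingEnd ℂ) (X z i))).re + r₀ - 2 * (f (X z - cx₀)).re with hD
    have hDt : Tendsto D (𝓝[S] p) (𝓝 0) := by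
      have h1 : Tendsto (fun z => (f (X z - fun i => (starRingEnd ℂ) (X z i))).re + r₀ -
          2 * (f (X z - cx₀)).re) (𝓝[S] p) (𝓝 (r₀ + r₀ - 2 * r₀)) :=
        (hR1.add tendsto_const_nhds).sub (hR2.const_mul 2)
      have h0 : r₀ + r₀ - 2 * r₀ = 0 := by ring
      rw [h0] at h1
      exact h1
    set Cre : ℝ := (f (y₀ - cy₀)).re with hCre
    have hsq : Tendsto (fun z => Real.sqrt (Cre * D z)) (𝓝[S] p) (𝓝 0) := by
      have : Tendsto (fun z => Cre * D z) (𝓝[S] p) (𝓝 (Cre * 0)) := hDt.const_mul Cre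
      rw [mul_zero] at this
      have := (Real.continuous_sqrt.tendsto 0).comp this
      rw [Real.sqrt_zero] at this; exact this
    rw [ContinuousWithinAt, tendsto_iff_dist_tendsto_zero]
    apply squeeze_zero' (Eventually.of_forall fun z => dist_nonneg)
      ?_ hsq
    filter_upwards [hevΩ] with z hz
    have hb := aux3 hpd hz hx₀ hy₀
    rw [← hcy₀, ← hcx₀] at hb
    have hzeq : X z - cy₀ = z := by rw [hX]; exact add_sub_cancel_right z cy₀
    rw [hzeq] at hb
    have hd2 : dist (f z) (f p) ^ 2 ≤ Cre * D z := by
      rw [Complex.dist_eq, hp]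
      calc ‖f z - f (x₀ - cy₀)‖ ^ 2 ≤ _ := hb
        _ = Cre * D z := by simp only [hCre, hD, hr₀]
    exact (Real.le_sqrt dist_nonneg (le_trans (sq_nonneg _) hd2)).2 hd2
end

section
/- Let U ⊆ ℂ² be open and let g : U → ℂ be continuous and separately holomorphic (for each fixed v, u ↦ g(u,v) is holomorphic on the corresponding open slice, and for each fixed u, v ↦ g(u,v) is holomorphic on the corresponding open slice). Then for every (u,v) ∈ U the iterated partial derivatives ∂²g/∂u∂v and ∂²g/∂v∂u exist at (u,v), are equal, and satisfy ∂²g/∂v∂u (u,v) = lim_{(h,l)→(0,0)} Δ_{h,l} g(u,v) / (h·l), the limit being over pairs of nonzero complex h, l with (u+h, v+l), (u+h,v), (u,v+l) ∈ U. -/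
open Filter Topology

namespace Stmt8Aux

open Metric Complex intervalIntegral


-- basic facts about points on sphere and nearby poles
lemma pole_lb {c w z : ℂ} {r : ℝ} (hz : z ∈ sphere c r) (hw : ‖w - c‖ ≤ r / 2) :
    r / 2 ≤ ‖z - w‖ := by
  have hz' : ‖z - c‖ = r := by simpa [Complex.dist_eq] using hz
  have : ‖z - c‖ - ‖w - c‖ ≤ ‖z - w‖ := by
    have := norm_sub_norm_le (z - c) (w - c)
    simpa [sub_sub_sub_cancel_right] using this
  linarith

lemma pole_ne {c w z : ℂ} {r : ℝ} (hr : 0 < r) (hz : z ∈ sphere c r) (hw : ‖w - c‖ ≤ r / 2) :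
    z ≠ w := by
  have := pole_lb hz hw
  intro h; rw [h] at this; simp at this; linarith

lemma center_ne {c z : ℂ} {r : ℝ} (hr : 0 < r) (hz : z ∈ sphere c r) : z ≠ c := by
  have hz' : ‖z - c‖ = r := by simpa [Complex.dist_eq] using hz
  intro h; rw [h] at hz'; simp at hz'; linarith

lemma ker_norm_le {c w z : ℂ} {r : ℝ} (hr : 0 < r) (hz : z ∈ sphere c r)
    (hw : ‖w - c‖ ≤ r / 2) : ‖(z - w)⁻¹ * (z - c)⁻¹‖ ≤ 2 / r ^ 2 := by
  have hz' : ‖z - c‖ = r := by simpa [Complex.dist_eq] using hz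
  have h1 := pole_lb hz hw
  have h2 : ‖(z - w)⁻¹‖ ≤ 2 / r := by
    rw [norm_inv]
    have := inv_anti₀ (by positivity : (0:ℝ) < r / 2) h1
    calc ‖z - w‖⁻¹ ≤ (r / 2)⁻¹ := this
      _ = 2 / r := by field_simp
  have h3 : ‖(z - c)⁻¹‖ = 1 / r := by rw [norm_inv, hz', one_div]
  calc ‖(z - w)⁻¹ * (z - c)⁻¹‖ = ‖(z - w)⁻¹‖ * ‖(z - c)⁻¹‖ := norm_mul _ _
    _ ≤ (2 / r) * (1 / r) := by
        apply mul_le_mul h2 (le_of_eq h3) (norm_nonneg _) (by positivity)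
    _ = 2 / r ^ 2 := by field_simp

lemma ker_sub_eq {c w z : ℂ} (hzw : z ≠ w) (hzc : z ≠ c) :
    (z - w)⁻¹ * (z - c)⁻¹ - (z - c)⁻¹ * (z - c)⁻¹
      = (w - c) * ((z - w)⁻¹ * ((z - c)⁻¹ * (z - c)⁻¹)) := by
  have h1 : z - w ≠ 0 := sub_ne_zero.2 hzw
  have h2 : z - c ≠ 0 := sub_ne_zero.2 hzc
  field_simp
  ring

lemma ker_sub_norm_le {c w z : ℂ} {r : ℝ} (hr : 0 < r) (hz : z ∈ sphere c r)
    (hw : ‖w - c‖ ≤ r / 2) :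
    ‖(z - w)⁻¹ * (z - c)⁻¹ - (z - c)⁻¹ * (z - c)⁻¹‖ ≤ ‖w - c‖ * (2 / r ^ 3) := by
  have hz' : ‖z - c‖ = r := by simpa [Complex.dist_eq] using hz
  have h1 := pole_lb hz hw
  rw [ker_sub_eq (pole_ne hr hz hw) (center_ne hr hz)]
  have h2 : ‖(z - w)⁻¹‖ ≤ 2 / r := by
    rw [norm_inv]
    have := inv_anti₀ (by positivity : (0:ℝ) < r / 2) h1
    calc ‖z - w‖⁻¹ ≤ (r / 2)⁻¹ := this
      _ = 2 / r := by field_simp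
  have h3 : ‖(z - c)⁻¹‖ = 1 / r := by rw [norm_inv, hz', one_div]
  rw [norm_mul, norm_mul, norm_mul, h3]
  calc ‖w - c‖ * (‖(z - w)⁻¹‖ * (1 / r * (1 / r)))
      ≤ ‖w - c‖ * (2 / r * (1 / r * (1 / r))) := by
        apply mul_le_mul_of_nonneg_left _ (norm_nonneg _)
        apply mul_le_mul_of_nonneg_right h2 (by positivity)
    _ = ‖w - c‖ * (2 / r ^ 3) := by congr 1; rw [pow_succ, pow_two]; field_simp


lemma kerContOn {c w : ℂ} {r : ℝ} (hr : 0 < r) (hw : ‖w - c‖ ≤ r / 2) :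
    ContinuousOn (fun z => (z - w)⁻¹ * (z - c)⁻¹) (sphere c r) := by
  apply ContinuousOn.mul
  · exact ((continuous_id.sub continuous_const).continuousOn).inv₀
      fun z hz => sub_ne_zero.2 (pole_ne hr hz hw)
  · exact ((continuous_id.sub continuous_const).continuousOn).inv₀
      fun z hz => sub_ne_zero.2 (center_ne hr hz)

noncomputable def innerInt (f : ℂ → ℂ → ℂ) (b : ℂ) (r : ℝ) (l s : ℂ) : ℂ :=
  ∮ t in C(b, r), ((t - (b + l))⁻¹ * (t - b)⁻¹) • f s t

noncomputable def dblInt (f : ℂ → ℂ → ℂ) (a b : ℂ) (r : ℝ) (h l : ℂ) : ℂ :=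
  ∮ s in C(a, r), ((s - (a + h))⁻¹ * (s - a)⁻¹) • innerInt f b r l s

variable {f : ℂ → ℂ → ℂ} {a b : ℂ} {r : ℝ} {h l s C : ℂ}

lemma norm_add_sub_self (b l : ℂ) : ‖b + l - b‖ = ‖l‖ := by rw [add_sub_cancel_left]

lemma inner_integrable (hr : 0 < r) (hl : ‖l‖ ≤ r / 2)
    (hfs : ContinuousOn (f s) (sphere b r)) :
    CircleIntegrable (fun t => ((t - (b + l))⁻¹ * (t - b)⁻¹) • f s t) b r :=
  ((kerContOn hr (by rwa [norm_add_sub_self])).smul hfs).circleIntegrable hr.le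

lemma innerInt_norm_le {C : ℝ} (hr : 0 < r) (hl : ‖l‖ ≤ r / 2)
    (hCs : ∀ t ∈ sphere b r, ‖f s t‖ ≤ C) (hC0 : 0 ≤ C) :
    ‖innerInt f b r l s‖ ≤ 2 * Real.pi * r * (2 / r ^ 2 * C) := by
  apply circleIntegral.norm_integral_le_of_norm_le_const hr.le
  intro t ht
  rw [norm_smul]
  exact mul_le_mul (ker_norm_le hr ht (by rwa [norm_add_sub_self])) (hCs t ht)
    (norm_nonneg _) (by positivity)

lemma innerInt_sub_norm_le {C : ℝ} (hr : 0 < r) (hl : ‖l‖ ≤ r / 2)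
    (hfs : ContinuousOn (f s) (sphere b r))
    (hCs : ∀ t ∈ sphere b r, ‖f s t‖ ≤ C) (hC0 : 0 ≤ C) :
    ‖innerInt f b r l s - innerInt f b r 0 s‖ ≤ 2 * Real.pi * r * (‖l‖ * (2 / r ^ 3) * C) := by
  have h0 : ‖(0:ℂ)‖ ≤ r / 2 := by simp; positivity
  have e : innerInt f b r l s - innerInt f b r 0 s
      = ∮ t in C(b, r), (((t - (b + l))⁻¹ * (t - b)⁻¹) - ((t - (b + 0))⁻¹ * (t - b)⁻¹)) • f s t := by
    rw [show (fun t => (((t - (b + l))⁻¹ * (t - b)⁻¹) - ((t - (b + 0))⁻¹ * (t - b)⁻¹)) • f s t)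
        = fun t => ((t - (b + l))⁻¹ * (t - b)⁻¹) • f s t
            - ((t - (b + 0))⁻¹ * (t - b)⁻¹) • f s t from funext fun t => sub_smul _ _ _]
    rw [circleIntegral.integral_sub (inner_integrable hr hl hfs) (inner_integrable hr h0 hfs)]
    rfl
  rw [e]
  apply circleIntegral.norm_integral_le_of_norm_le_const hr.le
  intro t ht
  rw [norm_smul]
  have hker : ‖((t - (b + l))⁻¹ * (t - b)⁻¹) - ((t - (b + 0))⁻¹ * (t - b)⁻¹)‖
      ≤ ‖l‖ * (2 / r ^ 3) := by
    rw [add_zero]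
    have := ker_sub_norm_le hr ht (by rwa [norm_add_sub_self] : ‖b + l - b‖ ≤ r / 2)
    rwa [norm_add_sub_self] at this
  exact mul_le_mul hker (hCs t ht) (norm_nonneg _) (by positivity)

lemma innerInt_contOn (hr : 0 < r) (hl : ‖l‖ ≤ r / 2)
    (hf : ContinuousOn (fun q : ℂ × ℂ => f q.1 q.2) (sphere a r ×ˢ sphere b r)) :
    ContinuousOn (fun s => innerInt f b r l s) (sphere a r) := by
  rw [continuousOn_iff_continuous_restrict]
  simp only [innerInt, circleIntegral, Set.restrict]
  apply intervalIntegral.continuous_parametric_intervalIntegral_of_continuous'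
  · -- continuity of uncurried integrand
    show Continuous fun x : ↥(sphere a r) × ℝ => deriv (circleMap b r) x.2 •
      (((circleMap b r x.2 - (b + l))⁻¹ * (circleMap b r x.2 - b)⁻¹) • f (x.1 : ℂ) (circleMap b r x.2))
    apply Continuous.fun_smul
    · have : Continuous (fun θ : ℝ => deriv (circleMap b r) θ) := by
        simp only [deriv_circleMap]
        exact (continuous_circleMap 0 r).mul continuous_const
      exact this.comp continuous_snd
    apply Continuous.fun_smul
    · have hk : Continuous fun θ : ℝ =>
          ((circleMap b r θ - (b + l))⁻¹ * (circleMap b r θ - b)⁻¹) :=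
        (kerContOn hr (by rwa [norm_add_sub_self])).comp_continuous
          (continuous_circleMap b r) (fun θ => circleMap_mem_sphere b hr.le θ)
      exact hk.comp continuous_snd
    · show Continuous fun x : ↥(sphere a r) × ℝ => (fun q : ℂ × ℂ => f q.1 q.2)
          ((x.1 : ℂ), circleMap b r x.2)
      apply hf.comp_continuous
      · exact (continuous_subtype_val.comp continuous_fst).prodMk
          ((continuous_circleMap b r).comp continuous_snd)
      · exact fun q => ⟨q.1.2, circleMap_mem_sphere b hr.le q.2⟩

lemma outer_integrable (hr : 0 < r) (hh : ‖h‖ ≤ r / 2) (hl : ‖l‖ ≤ r / 2)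
    (hf : ContinuousOn (fun q : ℂ × ℂ => f q.1 q.2) (sphere a r ×ˢ sphere b r)) :
    CircleIntegrable (fun s => ((s - (a + h))⁻¹ * (s - a)⁻¹) • innerInt f b r l s) a r :=
  ((kerContOn hr (by rwa [norm_add_sub_self])).smul (innerInt_contOn hr hl hf)).circleIntegrable
    hr.le

lemma slice_contOn (hf : ContinuousOn (fun q : ℂ × ℂ => f q.1 q.2) (sphere a r ×ˢ sphere b r))
    (hs : s ∈ sphere a r) : ContinuousOn (f s) (sphere b r) := by
  have : ContinuousOn ((fun q : ℂ × ℂ => f q.1 q.2) ∘ (fun t => (s, t))) (sphere b r) :=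
    hf.comp (Continuous.continuousOn (by fun_prop)) (fun t ht => ⟨hs, ht⟩)
  exact this

lemma tendsto_dblInt (hr : 0 < r)
    (hf : ContinuousOn (fun q : ℂ × ℂ => f q.1 q.2) (sphere a r ×ˢ sphere b r)) :
    Tendsto (fun hl : ℂ × ℂ => dblInt f a b r hl.1 hl.2) (𝓝 0) (𝓝 (dblInt f a b r 0 0)) := by
  obtain ⟨C₀, hC₀⟩ :=
    ((isCompact_sphere a r).prod (isCompact_sphere b r)).exists_bound_of_continuousOn hf
  set C : ℝ := max C₀ 0 with hCdef
  have hC0 : (0:ℝ) ≤ C := le_max_right _ _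
  have hC : ∀ s ∈ sphere a r, ∀ t ∈ sphere b r, ‖f s t‖ ≤ C := fun s hs t ht =>
    le_trans (hC₀ (s, t) ⟨hs, ht⟩) (le_max_left _ _)
  set A : ℝ := 2 * Real.pi * r * (2 / r ^ 2 * C) with hAdef
  have hA0 : 0 ≤ A := by positivity
  have h0 : ‖(0:ℂ)‖ ≤ r / 2 := by simp; positivity
  have key : ∀ h l : ℂ, ‖h‖ ≤ r / 2 → ‖l‖ ≤ r / 2 →
      ‖dblInt f a b r h l - dblInt f a b r 0 0‖ ≤
        2 * Real.pi * r *
          ((‖h‖ * (2 / r ^ 3)) * A + 2 / r ^ 2 * (2 * Real.pi * r * (‖l‖ * (2 / r ^ 3) * C))) := by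
    intro h l hh hl
    have e : dblInt f a b r h l - dblInt f a b r 0 0
        = ∮ s in C(a, r), (((s - (a + h))⁻¹ * (s - a)⁻¹) • innerInt f b r l s
            - ((s - (a + 0))⁻¹ * (s - a)⁻¹) • innerInt f b r 0 s) := by
      rw [circleIntegral.integral_sub (outer_integrable hr hh hl hf)
        (outer_integrable hr h0 h0 hf)]
      rfl
    rw [e]
    apply circleIntegral.norm_integral_le_of_norm_le_const hr.le
    intro s hs
    have expand : ((s - (a + h))⁻¹ * (s - a)⁻¹) • innerInt f b r l s
        - ((s - (a + 0))⁻¹ * (s - a)⁻¹) • innerInt f b r 0 s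
        = (((s - (a + h))⁻¹ * (s - a)⁻¹) - ((s - (a + 0))⁻¹ * (s - a)⁻¹)) • innerInt f b r l s
          + ((s - (a + 0))⁻¹ * (s - a)⁻¹) • (innerInt f b r l s - innerInt f b r 0 s) := by
      simp only [smul_eq_mul]; ring
    rw [expand]
    have hCs : ∀ t ∈ sphere b r, ‖f s t‖ ≤ C := hC s hs
    have hfs : ContinuousOn (f s) (sphere b r) := slice_contOn hf hs
    have b1 : ‖(((s - (a + h))⁻¹ * (s - a)⁻¹) - ((s - (a + 0))⁻¹ * (s - a)⁻¹))
        • innerInt f b r l s‖ ≤ ‖h‖ * (2 / r ^ 3) * A := by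
      rw [norm_smul]
      apply mul_le_mul _ (innerInt_norm_le hr hl hCs hC0) (norm_nonneg _) (by positivity)
      rw [add_zero]
      have := ker_sub_norm_le hr hs (by rwa [norm_add_sub_self] : ‖a + h - a‖ ≤ r / 2)
      rwa [norm_add_sub_self] at this
    have b2 : ‖((s - (a + 0))⁻¹ * (s - a)⁻¹) • (innerInt f b r l s - innerInt f b r 0 s)‖
        ≤ 2 / r ^ 2 * (2 * Real.pi * r * (‖l‖ * (2 / r ^ 3) * C)) := by
      rw [norm_smul]
      apply mul_le_mul _ (innerInt_sub_norm_le hr hl hfs hCs hC0) (norm_nonneg _) (by positivity)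
      exact ker_norm_le hr hs (by rw [norm_add_sub_self]; simpa using h0)
    exact le_trans (norm_add_le _ _) (add_le_add b1 b2)
  have hbndcont : Tendsto (fun hl : ℂ × ℂ => 2 * Real.pi * r *
      ((‖hl.1‖ * (2 / r ^ 3)) * A + 2 / r ^ 2 * (2 * Real.pi * r * (‖hl.2‖ * (2 / r ^ 3) * C))))
      (𝓝 0) (𝓝 0) := by
    have hc : Continuous (fun hl : ℂ × ℂ => 2 * Real.pi * r *
        ((‖hl.1‖ * (2 / r ^ 3)) * A + 2 / r ^ 2 *
          (2 * Real.pi * r * (‖hl.2‖ * (2 / r ^ 3) * C)))) := by fun_prop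
    exact hc.tendsto' 0 0 (by simp)
  have hev : ∀ᶠ hl : ℂ × ℂ in 𝓝 0,
      ‖(fun hl : ℂ × ℂ => dblInt f a b r hl.1 hl.2 - dblInt f a b r 0 0) hl‖ ≤
        2 * Real.pi * r * ((‖hl.1‖ * (2 / r ^ 3)) * A
          + 2 / r ^ 2 * (2 * Real.pi * r * (‖hl.2‖ * (2 / r ^ 3) * C))) := by
    filter_upwards [ball_mem_nhds (0 : ℂ × ℂ) (by positivity : (0:ℝ) < r / 2)] with q hq
    have hq' : ‖q‖ < r / 2 := mem_ball_zero_iff.1 hq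
    exact key q.1 q.2 (le_trans (norm_fst_le q) hq'.le) (le_trans (norm_snd_le q) hq'.le)
  have := squeeze_zero_norm' hev hbndcont
  have h2 := this.add_const (dblInt f a b r 0 0)
  simpa using h2

lemma cauchy_diff (hr : 0 < r) (hl : ‖l‖ ≤ r / 2)
    (hd : ∀ t ∈ ball b r, DifferentiableAt ℂ (f s) t)
    (hc : ContinuousOn (f s) (closedBall b r)) :
    f s (b + l) - f s b = (2 * ↑Real.pi * I)⁻¹ • (l • innerInt f b r l s) := by
  have hdc : DiffContOnCl ℂ (f s) (ball b r) :=
    ⟨fun t ht => (hd t ht).differentiableWithinAt, by rwa [closure_ball b hr.ne']⟩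
  have hlr : ‖l‖ < r := lt_of_le_of_lt hl (by linarith)
  have hbl : b + l ∈ ball b r := by
    rw [mem_ball, dist_eq_norm, add_sub_cancel_left]; exact hlr
  have hb : b ∈ ball b r := mem_ball_self hr
  have v1 := hdc.two_pi_i_inv_smul_circleIntegral_sub_inv_smul hbl
  have v0 := hdc.two_pi_i_inv_smul_circleIntegral_sub_inv_smul hb
  have hcs : ContinuousOn (f s) (sphere b r) := hc.mono sphere_subset_closedBall
  have i1 : CircleIntegrable (fun t => (t - (b + l))⁻¹ • f s t) b r := by
    refine (ContinuousOn.fun_smul ?_ hcs).circleIntegrable hr.le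
    exact ((continuous_id.sub continuous_const).continuousOn).inv₀
      fun z hz => sub_ne_zero.2 (pole_ne hr hz (by rwa [norm_add_sub_self]))
  have i0 : CircleIntegrable (fun t => (t - b)⁻¹ • f s t) b r := by
    refine (ContinuousOn.fun_smul ?_ hcs).circleIntegrable hr.le
    exact ((continuous_id.sub continuous_const).continuousOn).inv₀
      fun z hz => sub_ne_zero.2 (center_ne hr hz)
  have comb : f s (b + l) - f s b
      = (2 * ↑Real.pi * I)⁻¹ • ∮ t in C(b, r), ((t - (b + l))⁻¹ - (t - b)⁻¹) • f s t := by
    rw [← v1, ← v0, ← smul_sub]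
    congr 1
    rw [show (fun t => ((t - (b + l))⁻¹ - (t - b)⁻¹) • f s t)
        = fun t => (t - (b + l))⁻¹ • f s t - (t - b)⁻¹ • f s t from
      funext fun t => sub_smul _ _ _]
    exact (circleIntegral.integral_sub i1 i0).symm
  rw [comb]
  congr 1
  rw [show l • innerInt f b r l s = ∮ t in C(b, r), l • (((t - (b + l))⁻¹ * (t - b)⁻¹) • f s t)
    from (circleIntegral.integral_smul l _ b r).symm]
  apply circleIntegral.integral_congr hr.le
  intro t ht
  have h1 : t - (b + l) ≠ 0 := sub_ne_zero.2 (pole_ne hr ht (by rwa [norm_add_sub_self]))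
  have h2 : t - b ≠ 0 := sub_ne_zero.2 (center_ne hr ht)
  simp only [smul_eq_mul]
  field_simp
  ring

lemma deriv_repr {F : ℂ → ℂ} {a : ℂ} {r : ℝ} (hr : 0 < r)
    (hd : ∀ z ∈ ball a r, DifferentiableAt ℂ F z)
    (hc : ContinuousOn F (closedBall a r)) :
    deriv F a = (2 * ↑Real.pi * I)⁻¹ •
      ∮ s in C(a, r), ((s - (a + 0))⁻¹ * (s - a)⁻¹) • F s := by
  have hdc : DiffContOnCl ℂ F (ball a r) :=
    ⟨fun t ht => (hd t ht).differentiableWithinAt, by rwa [closure_ball a hr.ne']⟩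
  set R : NNReal := ⟨r, hr.le⟩ with hRdef
  have hRr : (R : ℝ) = r := rfl
  have hps : HasFPowerSeriesOnBall F (cauchyPowerSeries F a R) a R := by
    apply hdc.hasFPowerSeriesOnBall
    · exact_mod_cast hr
  have hder := hps.hasFPowerSeriesAt.deriv
  rw [hder]
  have happ := cauchyPowerSeries_apply F a (R : ℝ) 1 1
  rw [happ]
  congr 1
  apply circleIntegral.integral_congr hr.le
  intro z hz
  simp only [pow_one, one_div, add_zero, smul_eq_mul]
  ring

section main
variable {f : ℂ → ℂ → ℂ} {a b : ℂ} {r : ℝ} {h l : ℂ}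

lemma cont_sphere (hf : ContinuousOn (fun q : ℂ × ℂ => f q.1 q.2)
    (closedBall a r ×ˢ closedBall b r)) :
    ContinuousOn (fun q : ℂ × ℂ => f q.1 q.2) (sphere a r ×ˢ sphere b r) :=
  hf.mono (Set.prod_mono sphere_subset_closedBall sphere_subset_closedBall)

lemma slice2 (hf : ContinuousOn (fun q : ℂ × ℂ => f q.1 q.2)
    (closedBall a r ×ˢ closedBall b r)) (hs : s ∈ closedBall a r) :
    ContinuousOn (f s) (closedBall b r) := by
  have : ContinuousOn ((fun q : ℂ × ℂ => f q.1 q.2) ∘ (fun t => (s, t))) (closedBall b r) :=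
    hf.comp (Continuous.continuousOn (by fun_prop)) (fun t ht => ⟨hs, ht⟩)
  exact this

lemma slice1 {t : ℂ} (hf : ContinuousOn (fun q : ℂ × ℂ => f q.1 q.2)
    (closedBall a r ×ˢ closedBall b r)) (ht : t ∈ closedBall b r) :
    ContinuousOn (fun s => f s t) (closedBall a r) := by
  have : ContinuousOn ((fun q : ℂ × ℂ => f q.1 q.2) ∘ (fun s => (s, t))) (closedBall a r) :=
    hf.comp (Continuous.continuousOn (by fun_prop)) (fun s hs => ⟨hs, ht⟩)
  exact this

lemma derivInt_repr {v : ℂ} (hr : 0 < r)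
    (hf : ContinuousOn (fun q : ℂ × ℂ => f q.1 q.2) (closedBall a r ×ˢ closedBall b r))
    (hd1 : ∀ v ∈ closedBall b r, ∀ u ∈ ball a r, DifferentiableAt ℂ (fun u' => f u' v) u)
    (hv' : v ∈ closedBall b r) :
    deriv (fun u => f u v) a = (2 * ↑Real.pi * I)⁻¹ •
      ∮ s in C(a, r), ((s - (a + 0))⁻¹ * (s - a)⁻¹) • f s v :=
  deriv_repr hr (fun z hz => hd1 v hv' z hz) (slice1 hf hv')

lemma derivInt_sub (hr : 0 < r)
    (hf : ContinuousOn (fun q : ℂ × ℂ => f q.1 q.2) (closedBall a r ×ˢ closedBall b r))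
    (hd1 : ∀ v ∈ closedBall b r, ∀ u ∈ ball a r, DifferentiableAt ℂ (fun u' => f u' v) u)
    (hd2 : ∀ s ∈ closedBall a r, ∀ t ∈ ball b r, DifferentiableAt ℂ (f s) t)
    (hl : ‖l‖ ≤ r / 2) :
    deriv (fun u => f u (b + l)) a - deriv (fun u => f u b) a
      = l • ((2 * ↑Real.pi * I)⁻¹ • ((2 * ↑Real.pi * I)⁻¹ • dblInt f a b r 0 l)) := by
  have hbl : b + l ∈ closedBall b r := by
    rw [mem_closedBall, dist_eq_norm, add_sub_cancel_left]; linarith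
  have hb : b ∈ closedBall b r := mem_closedBall_self hr.le
  have h0ker : ‖a + 0 - a‖ ≤ r / 2 := by simp; positivity
  rw [derivInt_repr hr hf hd1 hbl, derivInt_repr hr hf hd1 hb, ← smul_sub]
  have integ : ∀ v ∈ closedBall b r,
      CircleIntegrable (fun s => ((s - (a + 0))⁻¹ * (s - a)⁻¹) • f s v) a r := fun v hv =>
    ((kerContOn hr h0ker).smul ((slice1 hf hv).mono sphere_subset_closedBall)).circleIntegrable
      hr.le
  have comb : (∮ s in C(a, r), ((s - (a + 0))⁻¹ * (s - a)⁻¹) • f s (b + l))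
      - (∮ s in C(a, r), ((s - (a + 0))⁻¹ * (s - a)⁻¹) • f s b)
      = ∮ s in C(a, r), ((s - (a + 0))⁻¹ * (s - a)⁻¹) • (f s (b + l) - f s b) := by
    rw [← circleIntegral.integral_sub (integ _ hbl) (integ _ hb)]
    exact circleIntegral.integral_congr hr.le fun s hs => (smul_sub _ _ _).symm
  rw [comb]
  have congr2 : (∮ s in C(a, r), ((s - (a + 0))⁻¹ * (s - a)⁻¹) • (f s (b + l) - f s b))
      = ∮ s in C(a, r), ((2 * ↑Real.pi * I)⁻¹ * l) •
          (((s - (a + 0))⁻¹ * (s - a)⁻¹) • innerInt f b r l s) := by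
    apply circleIntegral.integral_congr hr.le
    intro s hs
    have hs' : s ∈ closedBall a r := sphere_subset_closedBall hs
    beta_reduce
    rw [cauchy_diff hr hl (hd2 s hs') (slice2 hf hs')]
    simp only [smul_eq_mul]; ring
  rw [congr2, circleIntegral.integral_smul]
  show (2 * ↑Real.pi * I)⁻¹ • (((2 * ↑Real.pi * I)⁻¹ * l) • dblInt f a b r 0 l) = _
  simp only [smul_eq_mul]; ring

lemma hasDerivAt_derivInt (hr : 0 < r)
    (hf : ContinuousOn (fun q : ℂ × ℂ => f q.1 q.2) (closedBall a r ×ˢ closedBall b r))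
    (hd1 : ∀ v ∈ closedBall b r, ∀ u ∈ ball a r, DifferentiableAt ℂ (fun u' => f u' v) u)
    (hd2 : ∀ s ∈ closedBall a r, ∀ t ∈ ball b r, DifferentiableAt ℂ (f s) t) :
    HasDerivAt (fun v => deriv (fun u => f u v) a)
      ((2 * ↑Real.pi * I)⁻¹ • ((2 * ↑Real.pi * I)⁻¹ • dblInt f a b r 0 0)) b := by
  rw [hasDerivAt_iff_tendsto_slope]
  have h0 : Tendsto (fun v : ℂ => ((0 : ℂ), v - b)) (𝓝 b) (𝓝 (0 : ℂ × ℂ)) := by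
    have hc : Continuous (fun v : ℂ => ((0 : ℂ), v - b)) := by fun_prop
    exact hc.tendsto' b 0 (by simp [Prod.ext_iff])
  have h1 := (tendsto_dblInt hr (cont_sphere hf)).comp h0
  have h2 := (h1.const_smul ((2 * ↑Real.pi * I)⁻¹ : ℂ)).const_smul ((2 * ↑Real.pi * I)⁻¹ : ℂ)
  refine Tendsto.congr' ?_ (h2.mono_left nhdsWithin_le_nhds)
  have hev : ∀ᶠ v in 𝓝 b, ‖v - b‖ ≤ r / 2 := by
    filter_upwards [closedBall_mem_nhds b (by positivity : (0:ℝ) < r / 2)] with v hv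
    rwa [mem_closedBall, dist_eq_norm] at hv
  filter_upwards [self_mem_nhdsWithin, eventually_nhdsWithin_of_eventually_nhds hev]
    with v hvne hvle
  have hvb : v - b ≠ 0 := sub_ne_zero.2 hvne
  have e := derivInt_sub hr hf hd1 hd2 (l := v - b) hvle
  rw [add_sub_cancel] at e
  show _ = slope (fun v => deriv (fun u => f u v) a) b v
  rw [slope_def_field, e]
  simp only [smul_eq_mul]
  exact (mul_div_cancel_left₀ _ hvb).symm

lemma second_diff_repr (hr : 0 < r)
    (hf : ContinuousOn (fun q : ℂ × ℂ => f q.1 q.2) (closedBall a r ×ˢ closedBall b r))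
    (hd1 : ∀ v ∈ closedBall b r, ∀ u ∈ ball a r, DifferentiableAt ℂ (fun u' => f u' v) u)
    (hd2 : ∀ s ∈ closedBall a r, ∀ t ∈ ball b r, DifferentiableAt ℂ (f s) t)
    (hh : ‖h‖ ≤ r / 2) (hl : ‖l‖ ≤ r / 2) :
    f (a + h) (b + l) - f a (b + l) - f (a + h) b + f a b
      = h • (l • ((2 * ↑Real.pi * I)⁻¹ •
          ((2 * ↑Real.pi * I)⁻¹ • dblInt (fun t s => f s t) b a r l h))) := by
  have hah : a + h ∈ closedBall a r := by
    rw [mem_closedBall, dist_eq_norm, add_sub_cancel_left]; linarith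
  have ha : a ∈ closedBall a r := mem_closedBall_self hr.le
  have e1 := cauchy_diff hr hl (hd2 (a + h) hah) (slice2 hf hah)
  have e2 := cauchy_diff hr hl (hd2 a ha) (slice2 hf ha)
  have idiff : innerInt f b r l (a + h) - innerInt f b r l a
      = ∮ t in C(b, r), ((t - (b + l))⁻¹ * (t - b)⁻¹) • (f (a + h) t - f a t) := by
    simp only [innerInt]
    rw [← circleIntegral.integral_sub
      (inner_integrable hr hl ((slice2 hf hah).mono sphere_subset_closedBall))
      (inner_integrable hr hl ((slice2 hf ha).mono sphere_subset_closedBall))]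
    exact circleIntegral.integral_congr hr.le fun t ht => (smul_sub _ _ _).symm
  have icongr : (∮ t in C(b, r), ((t - (b + l))⁻¹ * (t - b)⁻¹) • (f (a + h) t - f a t))
      = ∮ t in C(b, r), ((2 * ↑Real.pi * I)⁻¹ * h) •
          (((t - (b + l))⁻¹ * (t - b)⁻¹) • innerInt (fun t' s' => f s' t') a r h t) := by
    apply circleIntegral.integral_congr hr.le
    intro t ht
    have ht' : t ∈ closedBall b r := sphere_subset_closedBall ht
    have e3 : f (a + h) t - f a t
        = (2 * ↑Real.pi * I)⁻¹ • (h • innerInt (fun t' s' => f s' t') a r h t) :=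
      cauchy_diff (f := fun t' s' => f s' t') (b := a) (s := t) (l := h) hr hh
        (fun u hu => hd1 t ht' u hu) (slice1 hf ht')
    beta_reduce
    rw [e3]
    simp only [smul_eq_mul]; ring
  calc f (a + h) (b + l) - f a (b + l) - f (a + h) b + f a b
      = (f (a + h) (b + l) - f (a + h) b) - (f a (b + l) - f a b) := by ring
    _ = (2 * ↑Real.pi * I)⁻¹ • (l • innerInt f b r l (a + h))
        - (2 * ↑Real.pi * I)⁻¹ • (l • innerInt f b r l a) := by rw [e1, e2]
    _ = ((2 * ↑Real.pi * I)⁻¹ * l) • (innerInt f b r l (a + h) - innerInt f b r l a) := by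
        simp only [smul_eq_mul]; ring
    _ = ((2 * ↑Real.pi * I)⁻¹ * l) • ((2 * ↑Real.pi * I)⁻¹ * h) •
          dblInt (fun t s => f s t) b a r l h := by
        rw [idiff, icongr, circleIntegral.integral_smul]
        rfl
    _ = h • (l • ((2 * ↑Real.pi * I)⁻¹ •
          ((2 * ↑Real.pi * I)⁻¹ • dblInt (fun t s => f s t) b a r l h))) := by
        simp only [smul_eq_mul]; ring

end main

end Stmt8Aux

open Stmt8Aux Metric Complex

/-- For a continuous, separately holomorphic function `g` on an open
`U ⊆ ℂ²`, the two mixed second partial derivatives exist, coincide, and equal the limit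
of second finite difference quotients. -/
theorem stmt8 (U : Set (ℂ × ℂ)) (hU : IsOpen U) (g : ℂ × ℂ → ℂ)
    (hcont : ContinuousOn g U)
    (hu : ∀ p ∈ U, DifferentiableAt ℂ (fun u => g (u, p.2)) p.1)
    (hv : ∀ p ∈ U, DifferentiableAt ℂ (fun v => g (p.1, v)) p.2) :
    ∀ p ∈ U,
      DifferentiableAt ℂ (fun v => deriv (fun u => g (u, v)) p.1) p.2 ∧
      DifferentiableAt ℂ (fun u => deriv (fun v => g (u, v)) p.2) p.1 ∧
      deriv (fun v => deriv (fun u => g (u, v)) p.1) p.2 =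
        deriv (fun u => deriv (fun v => g (u, v)) p.2) p.1 ∧
      Tendsto
        (fun hl : ℂ × ℂ =>
          (g (p.1 + hl.1, p.2 + hl.2) - g (p.1, p.2 + hl.2) -
              g (p.1 + hl.1, p.2) + g (p.1, p.2)) / (hl.1 * hl.2))
        (𝓝[{q : ℂ × ℂ | q.1 ≠ 0 ∧ q.2 ≠ 0}] (0 : ℂ × ℂ))
        (𝓝 (deriv (fun v => deriv (fun u => g (u, v)) p.1) p.2)) := by
  intro p hp
  obtain ⟨a, b⟩ := p
  dsimp only
  obtain ⟨ε, hε, hball⟩ := Metric.isOpen_iff.1 hU (a, b) hp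
  set r : ℝ := ε / 2 with hrdef
  have hr : 0 < r := by positivity
  have hsub : closedBall a r ×ˢ closedBall b r ⊆ U := by
    rw [closedBall_prod_same]
    exact subset_trans (closedBall_subset_ball (by rw [hrdef]; linarith)) hball
  set F : ℂ → ℂ → ℂ := fun s t => g (s, t) with hFdef
  set Fsw : ℂ → ℂ → ℂ := fun t s => g (s, t) with hFswdef
  set c2 : ℂ := (2 * ↑Real.pi * I)⁻¹ with hc2def
  -- hypotheses for (F, a, b)
  have hfF : ContinuousOn (fun q : ℂ × ℂ => F q.1 q.2) (closedBall a r ×ˢ closedBall b r) :=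
    hcont.mono hsub
  have hfFsw : ContinuousOn (fun q : ℂ × ℂ => Fsw q.1 q.2)
      (closedBall b r ×ˢ closedBall a r) := by
    have : ContinuousOn (g ∘ Prod.swap) (closedBall b r ×ˢ closedBall a r) :=
      hcont.comp continuous_swap.continuousOn
        (fun q hq => hsub ⟨hq.2, hq.1⟩)
    exact this
  have hd1F : ∀ v ∈ closedBall b r, ∀ u ∈ ball a r, DifferentiableAt ℂ (fun u' => F u' v) u :=
    fun v hvm u hum => hu (u, v) (hsub ⟨ball_subset_closedBall hum, hvm⟩)
  have hd2F : ∀ s ∈ closedBall a r, ∀ t ∈ ball b r, DifferentiableAt ℂ (F s) t :=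
    fun s hsm t htm => hv (s, t) (hsub ⟨hsm, ball_subset_closedBall htm⟩)
  have hd1Fsw : ∀ v ∈ closedBall a r, ∀ u ∈ ball b r,
      DifferentiableAt ℂ (fun u' => Fsw u' v) u :=
    fun v hvm u hum => hv (v, u) (hsub ⟨hvm, ball_subset_closedBall hum⟩)
  have hd2Fsw : ∀ s ∈ closedBall b r, ∀ t ∈ ball a r, DifferentiableAt ℂ (Fsw s) t :=
    fun s hsm t htm => hu (t, s) (hsub ⟨ball_subset_closedBall htm, hsm⟩)
  -- mixed derivatives
  have HD1 : HasDerivAt (fun v => deriv (fun u => g (u, v)) a)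
      (c2 • (c2 • dblInt F a b r 0 0)) b :=
    hasDerivAt_derivInt hr hfF hd1F hd2F
  have HD2 : HasDerivAt (fun u => deriv (fun v => g (u, v)) b)
      (c2 • (c2 • dblInt Fsw b a r 0 0)) a :=
    hasDerivAt_derivInt hr hfFsw hd1Fsw hd2Fsw
  set M : ℂ := c2 • (c2 • dblInt F a b r 0 0) with hMdef
  set M' : ℂ := c2 • (c2 • dblInt Fsw b a r 0 0) with hM'def
  set S : Set (ℂ × ℂ) := {q : ℂ × ℂ | q.1 ≠ 0 ∧ q.2 ≠ 0} with hSdef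
  -- eventual smallness
  have hev : ∀ᶠ q : ℂ × ℂ in 𝓝[S] 0,
      ‖q.1‖ ≤ r / 2 ∧ ‖q.2‖ ≤ r / 2 ∧ q.1 ≠ 0 ∧ q.2 ≠ 0 := by
    have h1 : ∀ᶠ q : ℂ × ℂ in 𝓝[S] 0, ‖q‖ ≤ r / 2 := by
      apply eventually_nhdsWithin_of_eventually_nhds
      filter_upwards [closedBall_mem_nhds (0 : ℂ × ℂ) (by positivity : (0:ℝ) < r / 2)] with q hq
      rwa [mem_closedBall, dist_zero_right] at hq
    filter_upwards [h1, self_mem_nhdsWithin] with q hq hqS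
    exact ⟨le_trans (norm_fst_le q) hq, le_trans (norm_snd_le q) hq, hqS.1, hqS.2⟩
  -- tendsto of the two double-integral families
  have T1 : Tendsto (fun q : ℂ × ℂ => c2 • (c2 • dblInt F a b r q.1 q.2)) (𝓝[S] 0) (𝓝 M) :=
    (((tendsto_dblInt hr (cont_sphere hfF)).const_smul c2).const_smul c2).mono_left
      nhdsWithin_le_nhds
  have T2 : Tendsto (fun q : ℂ × ℂ => c2 • (c2 • dblInt Fsw b a r q.2 q.1)) (𝓝[S] 0) (𝓝 M') := by
    have hswap : Tendsto (Prod.swap : ℂ × ℂ → ℂ × ℂ) (𝓝 0) (𝓝 0) :=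
      continuous_swap.tendsto' 0 0 rfl
    exact ((((tendsto_dblInt hr (cont_sphere hfFsw)).comp hswap).const_smul c2).const_smul
      c2).mono_left nhdsWithin_le_nhds
  -- quotient equalities
  have heq1 : (fun q : ℂ × ℂ => (g (a + q.1, b + q.2) - g (a, b + q.2) -
        g (a + q.1, b) + g (a, b)) / (q.1 * q.2))
      =ᶠ[𝓝[S] 0] fun q : ℂ × ℂ => c2 • (c2 • dblInt F a b r q.1 q.2) := by
    filter_upwards [hev] with q hq
    obtain ⟨hq1, hq2, hne1, hne2⟩ := hq
    have e : Fsw (b + q.2) (a + q.1) - Fsw b (a + q.1) - Fsw (b + q.2) a + Fsw b a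
        = q.2 • (q.1 • (c2 • (c2 • dblInt F a b r q.1 q.2))) :=
      second_diff_repr hr hfFsw hd1Fsw hd2Fsw hq2 hq1
    simp only [hFswdef, smul_eq_mul] at e
    simp only [smul_eq_mul]
    rw [div_eq_iff (mul_ne_zero hne1 hne2)]
    linear_combination e
  have heq2 : (fun q : ℂ × ℂ => (g (a + q.1, b + q.2) - g (a, b + q.2) -
        g (a + q.1, b) + g (a, b)) / (q.1 * q.2))
      =ᶠ[𝓝[S] 0] fun q : ℂ × ℂ => c2 • (c2 • dblInt Fsw b a r q.2 q.1) := by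
    filter_upwards [hev] with q hq
    obtain ⟨hq1, hq2, hne1, hne2⟩ := hq
    have e : F (a + q.1) (b + q.2) - F a (b + q.2) - F (a + q.1) b + F a b
        = q.1 • (q.2 • (c2 • (c2 • dblInt Fsw b a r q.2 q.1))) :=
      second_diff_repr hr hfF hd1F hd2F hq1 hq2
    simp only [hFdef, smul_eq_mul] at e
    simp only [smul_eq_mul]
    rw [div_eq_iff (mul_ne_zero hne1 hne2)]
    linear_combination e
  have L1 : Tendsto (fun q : ℂ × ℂ => (g (a + q.1, b + q.2) - g (a, b + q.2) -
        g (a + q.1, b) + g (a, b)) / (q.1 * q.2)) (𝓝[S] 0) (𝓝 M) :=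
    Tendsto.congr' heq1.symm T1
  have L2 : Tendsto (fun q : ℂ × ℂ => (g (a + q.1, b + q.2) - g (a, b + q.2) -
        g (a + q.1, b) + g (a, b)) / (q.1 * q.2)) (𝓝[S] 0) (𝓝 M') :=
    Tendsto.congr' heq2.symm T2
  have hne : (𝓝[S] (0 : ℂ × ℂ)).NeBot := by
    rw [← mem_closure_iff_nhdsWithin_neBot]
    have hSeq : S = ({(0:ℂ)}ᶜ ×ˢ {(0:ℂ)}ᶜ : Set (ℂ × ℂ)) := by
      ext q; simp [hSdef, Set.mem_prod]
    rw [hSeq]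
    exact ((dense_compl_singleton (0:ℂ)).prod (dense_compl_singleton (0:ℂ))) _
  haveI := hne
  have hMM' : M = M' := tendsto_nhds_unique L1 L2
  refine ⟨HD1.differentiableAt, HD2.differentiableAt, ?_, ?_⟩
  · rw [HD1.deriv, HD2.deriv, hMM']
  · rw [HD1.deriv]
    exact L1
end

section
/- Let Ω ⊆ ℝ be an open set and let k : Ω × Ω → ℂ be a positive definite kernel of class S_n(Ω²). Then for every 0 ≤ m ≤ n, the function k_m(x,y) := ∂^{2m} k / ∂y^m ∂x^m (the m-th partial derivative in x followed by the m-th partial derivative in y) is a positive definite kernel on Ω of class S_{n−m}(Ω²). -/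
open Filter Topology ComplexOrder

/-- Partial derivative in the first variable. -/
noncomputable def pderiv1 (k : ℝ × ℝ → ℂ) : ℝ × ℝ → ℂ :=
  fun p => deriv (fun u => k (u, p.2)) p.1

/-- Partial derivative in the second variable. -/
noncomputable def pderiv2 (k : ℝ × ℝ → ℂ) : ℝ × ℝ → ℂ :=
  fun p => deriv (fun v => k (p.1, v)) p.2

/-- `k` is of class `S_n(U)`: for all `m₁, m₂ ≤ n`, the iterated partial derivative
`∂^{m₁+m₂} k / ∂v^{m₂} ∂u^{m₁}` (first `m₁` derivatives in the first variable, then `m₂`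
derivatives in the second) exists at every point of `U` and is continuous on `U`. -/
def IsClassSn (n : ℕ) (U : Set (ℝ × ℝ)) (k : ℝ × ℝ → ℂ) : Prop :=
  (∀ m₁ < n, ∀ p ∈ U, DifferentiableAt ℝ (fun u => (pderiv1^[m₁] k) (u, p.2)) p.1) ∧
  (∀ m₁ ≤ n, ∀ m₂ < n, ∀ p ∈ U,
    DifferentiableAt ℝ (fun v => (pderiv2^[m₂] (pderiv1^[m₁] k)) (p.1, v)) p.2) ∧
  (∀ m₁ ≤ n, ∀ m₂ ≤ n, ContinuousOn (pderiv2^[m₂] (pderiv1^[m₁] k)) U)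

/-- `k` is a positive definite kernel on `Ω`. -/
def IsPosDefKernelOn {E : Type*} (Ω : Set E) (k : E × E → ℂ) : Prop :=
  ∀ (n : ℕ) (x : Fin n → E), (∀ i, x i ∈ Ω) → ∀ ξ : Fin n → ℂ,
    0 ≤ ∑ i, ∑ j, k (x i, x j) * ξ i * (starRingEnd ℂ) (ξ j)

/- ### Auxiliary development -/

noncomputable def Kd (k : ℝ × ℝ → ℂ) (a b : ℕ) : ℝ × ℝ → ℂ := pderiv2^[b] (pderiv1^[a] k)

lemma Kd_succ_right (k : ℝ × ℝ → ℂ) (a b : ℕ) : Kd k a (b+1) = pderiv2 (Kd k a b) := by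
  simp [Kd, Function.iterate_succ_apply']

lemma Kd_succ_left (k : ℝ × ℝ → ℂ) (a b : ℕ) :
    Kd k (a+1) b = pderiv2^[b] (pderiv1 (pderiv1^[a] k)) := by
  simp [Kd, Function.iterate_succ_apply']

section Main

variable {Ω : Set ℝ} {n : ℕ} {k : ℝ × ℝ → ℂ}

lemma contKd (hs : IsClassSn n (Ω ×ˢ Ω) k) {a b : ℕ} (ha : a ≤ n) (hb : b ≤ n) :
    ContinuousOn (Kd k a b) (Ω ×ˢ Ω) := hs.2.2 a ha b hb

lemma contKd1 (hs : IsClassSn n (Ω ×ˢ Ω) k) {a b : ℕ} (ha : a ≤ n) (hb : b ≤ n)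
    {v : ℝ} (hv : v ∈ Ω) {S : Set ℝ} (hS : S ⊆ Ω) :
    ContinuousOn (fun s => Kd k a b (s, v)) S := by
  exact (contKd hs ha hb).comp (continuous_id.prodMk continuous_const).continuousOn
    (fun s hsS => Set.mk_mem_prod (hS hsS) hv)

lemma contKd2 (hs : IsClassSn n (Ω ×ˢ Ω) k) {a b : ℕ} (ha : a ≤ n) (hb : b ≤ n)
    {u : ℝ} (hu : u ∈ Ω) {S : Set ℝ} (hS : S ⊆ Ω) :
    ContinuousOn (fun t => Kd k a b (u, t)) S := by
  exact (contKd hs ha hb).comp (continuous_const.prodMk continuous_id).continuousOn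
    (fun t htS => Set.mk_mem_prod hu (hS htS))

/-- Vertical derivatives exist, from the hypotheses. -/
lemma vertD (hs : IsClassSn n (Ω ×ˢ Ω) k) {a b : ℕ} (ha : a ≤ n) (hb : b < n)
    {x y : ℝ} (hx : x ∈ Ω) (hy : y ∈ Ω) :
    HasDerivAt (fun v => Kd k a b (x, v)) (Kd k a (b+1) (x, y)) y := by
  have h := hs.2.1 a ha b hb (x, y) (Set.mk_mem_prod hx hy)
  have he : Kd k a (b+1) (x, y) = deriv (fun v => Kd k a b (x, v)) y := by
    rw [Kd_succ_right]; rfl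
  rw [he]
  exact h.hasDerivAt

end Main
section Main2

open Metric intervalIntegral MeasureTheory

variable {Ω : Set ℝ} {n : ℕ} {k : ℝ × ℝ → ℂ}

/-- Horizontal derivatives of all `Kd k a b` exist (Schwarz-type theorem). -/
lemma schwarzX (hΩ : IsOpen Ω) (hs : IsClassSn n (Ω ×ˢ Ω) k) :
    ∀ b ≤ n, ∀ a < n, ∀ x ∈ Ω, ∀ y ∈ Ω,
      HasDerivAt (fun u => Kd k a b (u, y)) (Kd k (a+1) b (x, y)) x := by
  intro b
  induction b with
  | zero =>
    intro _ a ha x hx y hy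
    have h := hs.1 a ha (x, y) (Set.mk_mem_prod hx hy)
    have he : Kd k (a+1) 0 (x, y) = deriv (fun u => Kd k a 0 (u, y)) x := by
      rw [Kd_succ_left]; rfl
    rw [he]
    exact h.hasDerivAt
  | succ b ih =>
    intro hb1 a ha x hx y hy
    have hb : b ≤ n := Nat.le_of_succ_le hb1
    have hbn : b < n := hb1
    obtain ⟨εx, hεx, hx'⟩ := Metric.isOpen_iff.1 hΩ x hx
    obtain ⟨εy, hεy, hy'⟩ := Metric.isOpen_iff.1 hΩ y hy
    set ε := min εx εy / 2 with hεdef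
    have hε : 0 < ε := by positivity
    have hbx : closedBall x ε ⊆ Ω := by
      refine (closedBall_subset_ball ?_).trans hx'
      have := min_le_left εx εy; simp only [hεdef]; linarith
    have hby : closedBall y ε ⊆ Ω := by
      refine (closedBall_subset_ball ?_).trans hy'
      have := min_le_right εx εy; simp only [hεdef]; linarith
    -- Step 1 : horizontal FTC for Kd k a b
    have key1 : ∀ u ∈ closedBall x ε, ∀ v ∈ closedBall y ε,
        Kd k a b (u, v) - Kd k a b (x, v) = ∫ s in x..u, Kd k (a+1) b (s, v) := by
      intro u hu v hv
      have hsub : Set.uIcc x u ⊆ closedBall x ε :=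
        ((convex_closedBall x ε).ordConnected).uIcc_subset (mem_closedBall_self hε.le) hu
      have hderiv : ∀ s ∈ Set.uIcc x u,
          HasDerivAt (fun u' => Kd k a b (u', v)) (Kd k (a+1) b (s, v)) s :=
        fun s hs' => ih hb a ha s (hbx (hsub hs')) v (hby hv)
      have hcont : ContinuousOn (fun s => Kd k (a+1) b (s, v)) (Set.uIcc x u) :=
        contKd1 hs ha hb (hby hv) (hsub.trans hbx)
      rw [intervalIntegral.integral_eq_sub_of_hasDerivAt hderiv hcont.intervalIntegrable]
    -- Step 2 : differentiation under the integral sign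
    have key2 : ∀ u ∈ closedBall x ε,
        HasDerivAt (fun v => ∫ s in x..u, Kd k (a+1) b (s, v))
          (∫ s in x..u, Kd k (a+1) (b+1) (s, y)) y := by
      intro u hu
      have hsub : Set.uIcc x u ⊆ closedBall x ε :=
        ((convex_closedBall x ε).ordConnected).uIcc_subset (mem_closedBall_self hε.le) hu
      obtain ⟨C, hC⟩ :
          ∃ C, ∀ z ∈ (closedBall x ε ×ˢ closedBall y ε), ‖Kd k (a+1) (b+1) z‖ ≤ C :=
        ((isCompact_closedBall x ε).prod (isCompact_closedBall y ε)).exists_bound_of_continuousOn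
          ((contKd hs ha hb1).mono (Set.prod_mono hbx hby))
      have hmeas : ∀ v ∈ ball y ε, AEStronglyMeasurable (fun s => Kd k (a+1) b (s, v))
          (MeasureTheory.volume.restrict (Set.uIoc x u)) := by
        intro v hv
        exact ((contKd1 hs ha hb (hby (ball_subset_closedBall hv)) (hsub.trans hbx)).mono
          Set.uIoc_subset_uIcc).aestronglyMeasurable measurableSet_uIoc
      refine (intervalIntegral.hasDerivAt_integral_of_dominated_loc_of_deriv_le
        (F := fun v s => Kd k (a+1) b (s, v)) (F' := fun v s => Kd k (a+1) (b+1) (s, v))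
        (bound := fun _ => C) (ball_mem_nhds y hε) ?_ ?_ ?_ ?_ ?_ ?_).2
      · exact eventually_of_mem (ball_mem_nhds y hε) hmeas
      · exact (contKd1 hs ha hb (hby (mem_closedBall_self hε.le))
          (hsub.trans hbx)).intervalIntegrable
      · exact ((contKd1 hs ha hb1 (hby (mem_closedBall_self hε.le))
          (hsub.trans hbx)).mono Set.uIoc_subset_uIcc).aestronglyMeasurable measurableSet_uIoc
      · refine MeasureTheory.ae_of_all _ fun s hsI v hv => ?_
        exact hC (s, v) (Set.mk_mem_prod (hsub (Set.uIoc_subset_uIcc hsI))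
          (ball_subset_closedBall hv))
      · exact intervalIntegrable_const
      · refine MeasureTheory.ae_of_all _ fun s hsI v hv => ?_
        exact vertD hs (Nat.succ_le_of_lt ha) hbn
          (hbx (hsub (Set.uIoc_subset_uIcc hsI))) (hby (ball_subset_closedBall hv))
    -- Step 3 : the key identity for Kd k a (b+1)
    have key3 : ∀ u ∈ closedBall x ε,
        Kd k a (b+1) (u, y) - Kd k a (b+1) (x, y) = ∫ s in x..u, Kd k (a+1) (b+1) (s, y) := by
      intro u hu
      have h1 : HasDerivAt (fun v => Kd k a b (u, v) - Kd k a b (x, v))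
          (Kd k a (b+1) (u, y) - Kd k a (b+1) (x, y)) y :=
        (vertD hs ha.le hbn (hbx hu) hy).sub (vertD hs ha.le hbn hx hy)
      have h2 : (fun v => ∫ s in x..u, Kd k (a+1) b (s, v)) =ᶠ[𝓝 y]
          (fun v => Kd k a b (u, v) - Kd k a b (x, v)) :=
        eventually_of_mem (closedBall_mem_nhds y hε) (fun v hv => (key1 u hu v hv).symm)
      exact (h1.congr_of_eventuallyEq h2).unique (key2 u hu)
    -- Conclusion via FTC-1
    have hcy : ContinuousOn (fun s => Kd k (a+1) (b+1) (s, y)) (ball x ε) :=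
      contKd1 hs ha hb1 hy (ball_subset_closedBall.trans hbx)
    have h4 : HasDerivAt (fun u => ∫ s in x..u, Kd k (a+1) (b+1) (s, y))
        (Kd k (a+1) (b+1) (x, y)) x := by
      refine intervalIntegral.integral_hasDerivAt_right
        ((hcy.mono ?_).intervalIntegrable) ?_ ?_
      · intro s hsm
        simp only [Set.uIcc_self, Set.mem_singleton_iff] at hsm
        subst hsm
        exact mem_ball_self hε
      · exact hcy.stronglyMeasurableAtFilter isOpen_ball x (mem_ball_self hε)
      · exact hcy.continuousAt (isOpen_ball.mem_nhds (mem_ball_self hε))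
    have h5 : HasDerivAt (fun u => Kd k a (b+1) (x, y) + ∫ s in x..u, Kd k (a+1) (b+1) (s, y))
        (Kd k (a+1) (b+1) (x, y)) x := h4.const_add _
    refine h5.congr_of_eventuallyEq ?_
    filter_upwards [closedBall_mem_nhds x hε] with u hu
    have := key3 u hu
    linear_combination this

end Main2

section Main3

open Metric

variable {Ω : Set ℝ} {n : ℕ} {k : ℝ × ℝ → ℂ}

lemma pderiv1_eqOn {f g : ℝ × ℝ → ℂ} {U : Set (ℝ × ℝ)} (hU : IsOpen U) (h : Set.EqOn f g U) :
    Set.EqOn (pderiv1 f) (pderiv1 g) U := by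
  intro p hp
  have hmem : {u : ℝ | (u, p.2) ∈ U} ∈ 𝓝 p.1 :=
    (hU.preimage (continuous_id.prodMk continuous_const)).mem_nhds (by simpa using hp)
  exact Filter.EventuallyEq.deriv_eq (eventually_of_mem hmem fun u hu => h hu)

lemma pderiv2_eqOn {f g : ℝ × ℝ → ℂ} {U : Set (ℝ × ℝ)} (hU : IsOpen U) (h : Set.EqOn f g U) :
    Set.EqOn (pderiv2 f) (pderiv2 g) U := by
  intro p hp
  have hmem : {v : ℝ | (p.1, v) ∈ U} ∈ 𝓝 p.2 :=
    (hU.preimage (continuous_const.prodMk continuous_id)).mem_nhds (by simpa using hp)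
  exact Filter.EventuallyEq.deriv_eq (eventually_of_mem hmem fun v hv => h hv)

lemma pderiv2_iter_eqOn {f g : ℝ × ℝ → ℂ} {U : Set (ℝ × ℝ)} (hU : IsOpen U)
    (h : Set.EqOn f g U) (j : ℕ) : Set.EqOn (pderiv2^[j] f) (pderiv2^[j] g) U := by
  induction j with
  | zero => exact h
  | succ j ih =>
    rw [Function.iterate_succ_apply', Function.iterate_succ_apply']
    exact pderiv2_eqOn hU ih

lemma pderiv1_Kd (hΩ : IsOpen Ω) (hs : IsClassSn n (Ω ×ˢ Ω) k) {a b : ℕ}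
    (ha : a < n) (hb : b ≤ n) {p : ℝ × ℝ} (hp : p ∈ Ω ×ˢ Ω) :
    pderiv1 (Kd k a b) p = Kd k (a+1) b p := by
  have hd := schwarzX hΩ hs b hb a ha p.1 hp.1 p.2 hp.2
  exact hd.deriv

lemma pderiv1_iter_Kd (hΩ : IsOpen Ω) (hs : IsClassSn n (Ω ×ˢ Ω) k) :
    ∀ (j a b : ℕ), a + j ≤ n → b ≤ n →
      Set.EqOn (pderiv1^[j] (Kd k a b)) (Kd k (a+j) b) (Ω ×ˢ Ω) := by
  intro j
  induction j with
  | zero => intro a b _ _ p _; rfl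
  | succ j ih =>
    intro a b haj hb p hp
    have h1 : Set.EqOn (pderiv1^[j+1] (Kd k a b)) (pderiv1 (Kd k (a+j) b)) (Ω ×ˢ Ω) := by
      rw [Function.iterate_succ_apply']
      exact pderiv1_eqOn (hΩ.prod hΩ) (ih a b (by omega) hb)
    rw [h1 hp]
    exact pderiv1_Kd hΩ hs (by omega) hb hp

lemma kd_eq (hΩ : IsOpen Ω) (hs : IsClassSn n (Ω ×ˢ Ω) k) (m m₁ m₂ : ℕ)
    (h1 : m + m₁ ≤ n) (h2 : m + m₂ ≤ n) :
    Set.EqOn (pderiv2^[m₂] (pderiv1^[m₁] (Kd k m m))) (Kd k (m+m₁) (m+m₂)) (Ω ×ˢ Ω) := by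
  have e1 : Set.EqOn (pderiv1^[m₁] (Kd k m m)) (Kd k (m+m₁) m) (Ω ×ˢ Ω) :=
    pderiv1_iter_Kd hΩ hs m₁ m m h1 (by omega)
  have e2 := pderiv2_iter_eqOn (hΩ.prod hΩ) e1 m₂
  have e3 : pderiv2^[m₂] (Kd k (m+m₁) m) = Kd k (m+m₁) (m+m₂) := by
    show pderiv2^[m₂] (pderiv2^[m] (pderiv1^[m+m₁] k)) = pderiv2^[m+m₂] (pderiv1^[m+m₁] k)
    rw [← Function.iterate_add_apply, Nat.add_comm m₂ m]
  rwa [e3] at e2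

end Main3

section MainPD

open Metric intervalIntegral MeasureTheory

variable {Ω : Set ℝ} {n : ℕ} {k : ℝ × ℝ → ℂ}

lemma isPosDef_pair {E : Type*} {Ω : Set E} {g : E × E → ℂ} (h : IsPosDefKernelOn Ω g)
    (N : ℕ) (z : Fin N × Bool → E) (hz : ∀ p, z p ∈ Ω) (η : Fin N × Bool → ℂ) :
    0 ≤ ∑ p : Fin N × Bool, ∑ q : Fin N × Bool, g (z p, z q) * η p * (starRingEnd ℂ) (η q) := by
  classical
  let e : Fin N × Bool ≃ Fin (Fintype.card (Fin N × Bool)) := Fintype.equivFin _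
  have H := h _ (z ∘ e.symm) (fun i => hz _) (η ∘ e.symm)
  have h2 : ∑ p : Fin N × Bool, ∑ q : Fin N × Bool,
        g (z p, z q) * η p * (starRingEnd ℂ) (η q)
      = ∑ i, ∑ j, g ((z ∘ e.symm) i, (z ∘ e.symm) j) * (η ∘ e.symm) i
          * (starRingEnd ℂ) ((η ∘ e.symm) j) := by
    rw [← Equiv.sum_comp e.symm
      (fun p => ∑ q : Fin N × Bool, g (z p, z q) * η p * (starRingEnd ℂ) (η q))]
    refine Finset.sum_congr rfl fun i _ => ?_
    rw [← Equiv.sum_comp e.symm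
      (fun q => g (z (e.symm i), z q) * η (e.symm i) * (starRingEnd ℂ) (η q))]
    rfl
  rw [h2]
  exact H

lemma isClosed_nonneg' : IsClosed {z : ℂ | 0 ≤ z} := by
  have : {z : ℂ | 0 ≤ z} = Complex.re ⁻¹' Set.Ici 0 ∩ Complex.im ⁻¹' {0} := by
    ext z; simp [Complex.le_def, eq_comm]
  rw [this]
  exact (isClosed_Ici.preimage Complex.continuous_re).inter
    (isClosed_singleton.preimage Complex.continuous_im)

/-- The key limit: the second mixed difference quotient tends to the mixed derivative. -/
lemma diffquot_tendsto (hΩ : IsOpen Ω) (hs : IsClassSn n (Ω ×ˢ Ω) k) {a : ℕ} (ha : a + 1 ≤ n)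
    {X Y ε : ℝ} (hε : 0 < ε) (hX : closedBall X ε ⊆ Ω) (hY : closedBall Y ε ⊆ Ω) :
    Filter.Tendsto (fun h : ℝ =>
        (Kd k a a (X + h, Y + h) - Kd k a a (X, Y + h) - Kd k a a (X + h, Y)
          + Kd k a a (X, Y)) / (h : ℂ)^2)
      (𝓝[>] (0:ℝ)) (𝓝 (Kd k (a+1) (a+1) (X, Y))) := by
  have haln : a < n := ha
  have han : a ≤ n := Nat.le_of_succ_le ha
  have hXΩ : X ∈ Ω := hX (mem_closedBall_self hε.le)
  have hYΩ : Y ∈ Ω := hY (mem_closedBall_self hε.le)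
  set f := Kd k (a+1) (a+1) with hf
  have hfc : ContinuousAt f (X, Y) :=
    (contKd hs ha ha).continuousAt (((hΩ.prod hΩ)).mem_nhds (Set.mk_mem_prod hXΩ hYΩ))
  rw [Metric.tendsto_nhdsWithin_nhds]
  intro δ hδ
  obtain ⟨r, hr0, hrmod⟩ := Metric.continuousAt_iff.1 hfc (δ/2) (by positivity)
  refine ⟨min ε (r/2), by positivity, ?_⟩
  intro h hhmem hhd
  have h0 : 0 < h := hhmem
  have hd : |h| < min ε (r/2) := by simpa [Real.dist_eq] using hhd
  have hhε : h ≤ ε := by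
    have := lt_of_abs_lt hd; have := min_le_left ε (r/2); linarith
  have hhr : h < r := by
    have := lt_of_abs_lt hd; have := min_le_right ε (r/2); linarith
  -- membership facts
  have hmemX : ∀ s ∈ Set.uIcc X (X + h), s ∈ closedBall X ε := by
    intro s hsm
    rw [Set.uIcc_of_le (by linarith)] at hsm
    rw [mem_closedBall, Real.dist_eq, abs_le]
    constructor <;> [skip; skip] <;> · simp only [Set.mem_Icc] at hsm; linarith [hsm.1, hsm.2]
  have hmemY : ∀ t ∈ Set.uIcc Y (Y + h), t ∈ closedBall Y ε := by
    intro t htm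
    rw [Set.uIcc_of_le (by linarith)] at htm
    rw [mem_closedBall, Real.dist_eq, abs_le]
    constructor <;> · simp only [Set.mem_Icc] at htm; linarith [htm.1, htm.2]
  -- pointwise modulus bound on the small rectangle
  have hmod : ∀ s ∈ Set.uIcc X (X + h), ∀ t ∈ Set.uIcc Y (Y + h),
      ‖f (s, t) - f (X, Y)‖ ≤ δ/2 := by
    intro s hsm t htm
    rw [Set.uIcc_of_le (by linarith)] at hsm htm
    simp only [Set.mem_Icc] at hsm htm
    have : dist (s, t) (X, Y) < r := by
      rw [Prod.dist_eq]
      have h1 : dist s X < r := by rw [Real.dist_eq, abs_lt]; constructor <;> linarith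
      have h2 : dist t Y < r := by rw [Real.dist_eq, abs_lt]; constructor <;> linarith
      exact max_lt h1 h2
    exact (le_of_lt (by simpa [Complex.dist_eq] using hrmod this))
  -- vertical FTC
  have vA : ∀ u ∈ closedBall X ε,
      Kd k a a (u, Y + h) - Kd k a a (u, Y) = ∫ t in Y..(Y+h), Kd k a (a+1) (u, t) := by
    intro u hu
    have hderiv : ∀ t ∈ Set.uIcc Y (Y + h),
        HasDerivAt (fun v => Kd k a a (u, v)) (Kd k a (a+1) (u, t)) t :=
      fun t htm => vertD hs han haln (hX hu) (hY (hmemY t htm))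
    exact (intervalIntegral.integral_eq_sub_of_hasDerivAt hderiv
      ((contKd2 hs han ha (hX hu) (fun t htm => hY (hmemY t htm))).intervalIntegrable)).symm
  -- horizontal FTC for Kd k a (a+1)
  have vB : ∀ t ∈ Set.uIcc Y (Y + h),
      Kd k a (a+1) (X + h, t) - Kd k a (a+1) (X, t) = ∫ s in X..(X+h), f (s, t) := by
    intro t htm
    have hderiv : ∀ s ∈ Set.uIcc X (X + h),
        HasDerivAt (fun u => Kd k a (a+1) (u, t)) (f (s, t)) s :=
      fun s hsm => schwarzX hΩ hs (a+1) ha a haln s (hX (hmemX s hsm)) t (hY (hmemY t htm))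
    exact (intervalIntegral.integral_eq_sub_of_hasDerivAt hderiv
      ((contKd1 hs ha ha (hY (hmemY t htm)) (fun s hsm => hX (hmemX s hsm))).intervalIntegrable)).symm
  -- estimate on the inner difference
  have vC : ∀ t ∈ Set.uIcc Y (Y + h),
      ‖(Kd k a (a+1) (X + h, t) - Kd k a (a+1) (X, t)) - (h : ℝ) • f (X, Y)‖ ≤ δ/2 * h := by
    intro t htm
    rw [vB t htm]
    have hconst : (h : ℝ) • f (X, Y) = ∫ _ in X..(X+h), f (X, Y) := by
      rw [intervalIntegral.integral_const]; congr 1; ring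
    rw [hconst, ← intervalIntegral.integral_sub
      ((contKd1 hs ha ha (hY (hmemY t htm)) (fun s hsm => hX (hmemX s hsm))).intervalIntegrable)
      intervalIntegrable_const]
    have := intervalIntegral.norm_integral_le_of_norm_le_const
      (C := δ/2) (f := fun s => f (s, t) - f (X, Y)) (a := X) (b := X + h) ?_
    · calc ‖∫ s in X..(X+h), (f (s, t) - f (X, Y))‖ ≤ δ/2 * |X + h - X| := this
        _ = δ/2 * h := by rw [show X + h - X = h by ring, abs_of_pos h0]
    · intro s hsm
      exact hmod s (Set.uIoc_subset_uIcc hsm) t htm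
  -- the difference D
  have hDint : Kd k a a (X + h, Y + h) - Kd k a a (X, Y + h) - Kd k a a (X + h, Y)
        + Kd k a a (X, Y)
      = ∫ t in Y..(Y+h), (Kd k a (a+1) (X + h, t) - Kd k a (a+1) (X, t)) := by
    rw [intervalIntegral.integral_sub
      ((contKd2 hs han ha (hX (by rw [mem_closedBall, Real.dist_eq]; rw [abs_of_pos] <;> simp [h0, hhε]; try linarith))
        (fun t htm => hY (hmemY t htm))).intervalIntegrable)
      ((contKd2 hs han ha hXΩ (fun t htm => hY (hmemY t htm))).intervalIntegrable)]
    rw [← vA (X + h) (by rw [mem_closedBall, Real.dist_eq]; rw [show X + h - X = h by ring, abs_of_pos h0]; exact hhε),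
        ← vA X (mem_closedBall_self hε.le)]
    ring
  -- final estimate
  have hEst : ‖(Kd k a a (X + h, Y + h) - Kd k a a (X, Y + h) - Kd k a a (X + h, Y)
        + Kd k a a (X, Y)) - ((h : ℝ)^2 : ℝ) • f (X, Y)‖ ≤ δ/2 * h * h := by
    rw [hDint]
    have hconst : ((h : ℝ)^2 : ℝ) • f (X, Y) = ∫ _ in Y..(Y+h), (h : ℝ) • f (X, Y) := by
      rw [intervalIntegral.integral_const, smul_smul]; congr 1; ring
    have hGint : IntervalIntegrable
        (fun t => Kd k a (a+1) (X + h, t) - Kd k a (a+1) (X, t)) MeasureTheory.volume Y (Y+h) := by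
      refine IntervalIntegrable.sub ?_ ?_
      · exact (contKd2 hs han ha (hX (by rw [mem_closedBall, Real.dist_eq, show X + h - X = h by ring, abs_of_pos h0]; exact hhε))
          (fun t htm => hY (hmemY t htm))).intervalIntegrable
      · exact (contKd2 hs han ha hXΩ (fun t htm => hY (hmemY t htm))).intervalIntegrable
    rw [hconst, ← intervalIntegral.integral_sub hGint intervalIntegrable_const]
    have := intervalIntegral.norm_integral_le_of_norm_le_const (C := δ/2 * h)
      (f := fun t => (Kd k a (a+1) (X + h, t) - Kd k a (a+1) (X, t)) - (h : ℝ) • f (X, Y))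
      (a := Y) (b := Y + h) ?_
    · calc _ ≤ δ/2 * h * |Y + h - Y| := this
        _ = δ/2 * h * h := by rw [show Y + h - Y = h by ring, abs_of_pos h0]
    · intro t htm
      exact vC t (Set.uIoc_subset_uIcc htm)
  -- conclude
  rw [Complex.dist_eq]
  have hh2 : ((h : ℂ))^2 ≠ 0 := pow_ne_zero _ (Complex.ofReal_ne_zero.mpr h0.ne')
  have heq : (Kd k a a (X + h, Y + h) - Kd k a a (X, Y + h) - Kd k a a (X + h, Y)
        + Kd k a a (X, Y)) / (h : ℂ)^2 - f (X, Y)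
      = ((Kd k a a (X + h, Y + h) - Kd k a a (X, Y + h) - Kd k a a (X + h, Y)
        + Kd k a a (X, Y)) - ((h : ℝ)^2 : ℝ) • f (X, Y)) / (h : ℂ)^2 := by
    rw [Complex.real_smul]
    push_cast
    field_simp
  rw [heq, norm_div]
  have hden : ‖((h : ℂ)^2)‖ = h^2 := by
    rw [norm_pow, Complex.norm_real, Real.norm_eq_abs, abs_of_pos h0]
  rw [hden, div_lt_iff₀ (by positivity)]
  have hE : ‖(Kd k a a (X + h, Y + h) - Kd k a a (X, Y + h) - Kd k a a (X + h, Y)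
        + Kd k a a (X, Y) - ((h : ℝ)^2 : ℝ) • f (X, Y))‖ ≤ δ/2 * h * h := hEst
  calc ‖(Kd k a a (X + h, Y + h) - Kd k a a (X, Y + h) - Kd k a a (X + h, Y)
        + Kd k a a (X, Y) - ((h : ℝ)^2 : ℝ) • f (X, Y))‖ ≤ δ/2 * h * h := hE
    _ < δ * h^2 := by nlinarith [mul_pos (mul_pos (half_pos hδ) h0) h0]

end MainPD

section MainFinal

open Metric intervalIntegral MeasureTheory

variable {Ω : Set ℝ} {n : ℕ} {k : ℝ × ℝ → ℂ}

lemma pd_step (hΩ : IsOpen Ω) (hs : IsClassSn n (Ω ×ˢ Ω) k) {a : ℕ} (ha : a + 1 ≤ n)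
    (hpda : IsPosDefKernelOn Ω (Kd k a a)) : IsPosDefKernelOn Ω (Kd k (a+1) (a+1)) := by
  intro N x hx ξ
  rcases Nat.eq_zero_or_pos N with hN | hN
  · subst hN; simp
  haveI : Nonempty (Fin N) := Fin.pos_iff_nonempty.mp hN
  have hex : ∀ i : Fin N, ∃ ri, 0 < ri ∧ closedBall (x i) ri ⊆ Ω := by
    intro i
    obtain ⟨ri, h1, h2⟩ := Metric.isOpen_iff.1 hΩ (x i) (hx i)
    exact ⟨ri/2, by linarith, (closedBall_subset_ball (by linarith)).trans h2⟩
  choose r hr0 hrΩ using hex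
  set ε := Finset.univ.inf' Finset.univ_nonempty r with hεdef
  have hε : 0 < ε := (Finset.lt_inf'_iff _).2 fun i _ => hr0 i
  have hball : ∀ i, closedBall (x i) ε ⊆ Ω := fun i =>
    (closedBall_subset_closedBall (Finset.inf'_le _ (Finset.mem_univ i))).trans (hrΩ i)
  set D : Fin N → Fin N → ℝ → ℂ := fun i j h =>
    Kd k a a (x i + h, x j + h) - Kd k a a (x i, x j + h) - Kd k a a (x i + h, x j)
      + Kd k a a (x i, x j) with hD
  have expand : ∀ (G : Fin N × Bool → Fin N × Bool → ℂ),
      ∑ p : Fin N × Bool, ∑ q : Fin N × Bool, G p q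
        = ∑ i, ∑ j, (G (i,true) (j,true) + G (i,true) (j,false)
            + G (i,false) (j,true) + G (i,false) (j,false)) := by
    intro G
    simp only [Fintype.sum_prod_type]
    refine Finset.sum_congr rfl fun i _ => ?_
    rw [Finset.sum_comm]
    refine Finset.sum_congr rfl fun j _ => ?_
    simp only [Fintype.sum_bool]
    ring
  have hQ : ∀ h : ℝ, 0 < h → h ≤ ε →
      0 ≤ ∑ i, ∑ j, D i j h / (h:ℂ)^2 * ξ i * (starRingEnd ℂ) (ξ j) := by
    intro h h0 hhε
    have hhC : (h:ℂ) ≠ 0 := Complex.ofReal_ne_zero.mpr h0.ne'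
    have hz : ∀ p : Fin N × Bool, (x p.1 + if p.2 then h else 0) ∈ Ω := by
      intro p
      refine hball p.1 ?_
      rw [mem_closedBall, Real.dist_eq]
      rcases p with ⟨i, _ | _⟩ <;>
        simp [abs_of_pos h0, abs_of_nonneg, h0.le, hhε, hε.le]
    have H := isPosDef_pair hpda N (fun p => x p.1 + if p.2 then h else 0) hz
      (fun p => (if p.2 then ξ p.1 else -ξ p.1) / (h:ℂ))
    refine H.trans_eq ?_
    rw [expand]
    refine Finset.sum_congr rfl fun i _ => Finset.sum_congr rfl fun j _ => ?_
    simp only [hD, if_true, if_false, Bool.false_eq_true, ↓reduceIte, add_zero, map_div₀, map_neg, Complex.conj_ofReal]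
    field_simp
    ring
  have htend : Filter.Tendsto
      (fun h : ℝ => ∑ i, ∑ j, D i j h / (h:ℂ)^2 * ξ i * (starRingEnd ℂ) (ξ j))
      (𝓝[>] (0:ℝ))
      (𝓝 (∑ i, ∑ j, Kd k (a+1) (a+1) (x i, x j) * ξ i * (starRingEnd ℂ) (ξ j))) := by
    refine tendsto_finset_sum _ fun i _ => tendsto_finset_sum _ fun j _ => ?_
    have ht := diffquot_tendsto hΩ hs ha hε (hball i) (hball j)
    simpa [hD] using (ht.mul_const (ξ i)).mul_const ((starRingEnd ℂ) (ξ j))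
  refine isClosed_nonneg'.mem_of_tendsto htend ?_
  filter_upwards [Ioc_mem_nhdsGT_of_mem ⟨le_refl (0:ℝ), hε⟩] with h hh
  exact hQ h hh.1 hh.2

lemma pd_all (hΩ : IsOpen Ω) (hs : IsClassSn n (Ω ×ˢ Ω) k) (hpd : IsPosDefKernelOn Ω k) :
    ∀ m ≤ n, IsPosDefKernelOn Ω (Kd k m m) := by
  intro m
  induction m with
  | zero => intro _; exact hpd
  | succ a ih => intro h; exact pd_step hΩ hs h (ih (by omega))

end MainFinal


/-- If `k` is a positive definite kernel on an open `Ω ⊆ ℝ` of class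
`S_n(Ω²)`, then for `0 ≤ m ≤ n` the kernel `k_m = ∂^{2m} k / ∂y^m ∂x^m` is a positive
definite kernel on `Ω` of class `S_{n−m}(Ω²)`. -/
theorem stmt9 (Ω : Set ℝ) (hΩ : IsOpen Ω) (n : ℕ) (k : ℝ × ℝ → ℂ)
    (hpd : IsPosDefKernelOn Ω k) (hs : IsClassSn n (Ω ×ˢ Ω) k) :
    ∀ m ≤ n,
      IsPosDefKernelOn Ω (pderiv2^[m] (pderiv1^[m] k)) ∧
      IsClassSn (n - m) (Ω ×ˢ Ω) (pderiv2^[m] (pderiv1^[m] k)) := by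
  intro m hm
  constructor
  · exact pd_all hΩ hs hpd m hm
  · refine ⟨?_, ?_, ?_⟩
    · intro m₁ hm₁ p hp
      have e : Set.EqOn (pderiv1^[m₁] (Kd k m m)) (Kd k (m+m₁) m) (Ω ×ˢ Ω) :=
        pderiv1_iter_Kd hΩ hs m₁ m m (by omega) hm
      have hmem : {u : ℝ | (u, p.2) ∈ Ω ×ˢ Ω} ∈ 𝓝 p.1 :=
        (((hΩ.prod hΩ)).preimage (continuous_id.prodMk continuous_const)).mem_nhds
          (by simpa using hp)
      have he : (fun u => pderiv1^[m₁] (Kd k m m) (u, p.2))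
          =ᶠ[𝓝 p.1] (fun u => Kd k (m+m₁) m (u, p.2)) :=
        eventually_of_mem hmem fun u hu => e hu
      show DifferentiableAt ℝ (fun u => pderiv1^[m₁] (Kd k m m) (u, p.2)) p.1
      rw [he.differentiableAt_iff]
      exact (schwarzX hΩ hs m hm (m+m₁) (by omega) p.1 hp.1 p.2 hp.2).differentiableAt
    · intro m₁ hm₁ m₂ hm₂ p hp
      have e : Set.EqOn (pderiv2^[m₂] (pderiv1^[m₁] (Kd k m m))) (Kd k (m+m₁) (m+m₂)) (Ω ×ˢ Ω) :=
        kd_eq hΩ hs m m₁ m₂ (by omega) (by omega)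
      have hmem : {v : ℝ | (p.1, v) ∈ Ω ×ˢ Ω} ∈ 𝓝 p.2 :=
        (((hΩ.prod hΩ)).preimage (continuous_const.prodMk continuous_id)).mem_nhds
          (by simpa using hp)
      have he : (fun v => pderiv2^[m₂] (pderiv1^[m₁] (Kd k m m)) (p.1, v))
          =ᶠ[𝓝 p.2] (fun v => Kd k (m+m₁) (m+m₂) (p.1, v)) :=
        eventually_of_mem hmem fun v hv => e hv
      show DifferentiableAt ℝ (fun v => pderiv2^[m₂] (pderiv1^[m₁] (Kd k m m)) (p.1, v)) p.2
      rw [he.differentiableAt_iff]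
      exact (vertD hs (by omega) (by omega) hp.1 hp.2).differentiableAt
    · intro m₁ hm₁ m₂ hm₂
      exact (contKd hs (a := m+m₁) (b := m+m₂) (by omega) (by omega)).congr
        (kd_eq hΩ hs m m₁ m₂ (by omega) (by omega))
end

section
/- Let Ω ⊆ ℝ be open and let k : Ω × Ω → ℂ be a positive definite kernel. Suppose k is of class S₁(U) on some open set U ⊆ ℝ² with D(Ω²) ⊆ U ⊆ Ω × Ω, where D(Ω²) = {(x,x) : x ∈ Ω}. Then k is separately differentiable on Ω × Ω: for every (u,v) ∈ Ω × Ω, the partial derivatives ∂k/∂u (u,v) and ∂k/∂v (u,v) exist in ℂ. -/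
open Filter Topology ComplexOrder

private lemma cs_aux {n : ℕ} (M : Fin n → Fin n → ℂ)
    (hpd : ∀ ξ : Fin n → ℂ, 0 ≤ ∑ i, ∑ j, M i j * ξ i * (starRingEnd ℂ) (ξ j))
    (φ ψ : Fin n → ℂ) :
    ‖∑ i, ∑ j, M i j * φ i * (starRingEnd ℂ) (ψ j)‖ ^ 2 ≤
      (∑ i, ∑ j, M i j * φ i * (starRingEnd ℂ) (φ j)).re *
      (∑ i, ∑ j, M i j * ψ i * (starRingEnd ℂ) (ψ j)).re := by
  set B : (Fin n → ℂ) → (Fin n → ℂ) → ℂ :=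
    fun χ ρ => ∑ i, ∑ j, M i j * χ i * (starRingEnd ℂ) (ρ j) with hB
  show ‖B φ ψ‖ ^ 2 ≤ (B φ φ).re * (B ψ ψ).re
  have hexp : ∀ c : ℂ, B (fun i => φ i + c * ψ i) (fun i => φ i + c * ψ i)
      = B φ φ + (starRingEnd ℂ) c * B φ ψ + c * B ψ φ + (c * (starRingEnd ℂ) c) * B ψ ψ := by
    intro c
    have point : ∀ i j, M i j * (φ i + c * ψ i) * (starRingEnd ℂ) (φ j + c * ψ j)
        = M i j * φ i * (starRingEnd ℂ) (φ j)
          + (starRingEnd ℂ) c * (M i j * φ i * (starRingEnd ℂ) (ψ j))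
          + c * (M i j * ψ i * (starRingEnd ℂ) (φ j))
          + (c * (starRingEnd ℂ) c) * (M i j * ψ i * (starRingEnd ℂ) (ψ j)) := by
      intro i j; simp only [map_add, map_mul]; ring
    simp only [hB, point, Finset.sum_add_distrib, Finset.mul_sum]
  have hre : ∀ χ, 0 ≤ (B χ χ).re := by
    intro χ
    have := (Complex.le_def.mp (hpd χ)).1
    simpa only [Complex.zero_re] using this
  have him : ∀ χ, (B χ χ).im = 0 := by
    intro χ
    have := (Complex.le_def.mp (hpd χ)).2
    simpa only [Complex.zero_im] using this.symm
  have herm : B ψ φ = (starRingEnd ℂ) (B φ ψ) := by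
    have h1 := him (fun i => φ i + (1:ℂ) * ψ i)
    rw [hexp 1] at h1
    simp only [map_one, one_mul, mul_one, Complex.add_im] at h1
    rw [him φ, him ψ] at h1
    have h2 := him (fun i => φ i + Complex.I * ψ i)
    rw [hexp Complex.I] at h2
    simp only [Complex.conj_I, Complex.add_im, Complex.mul_im, Complex.neg_re, Complex.neg_im,
      Complex.I_re, Complex.I_im, Complex.mul_re] at h2
    rw [him φ, him ψ] at h2
    apply Complex.ext
    · simp only [Complex.conj_re]; nlinarith [h2]
    · simp only [Complex.conj_im]; linarith [h1]
  by_cases hb : B φ ψ = 0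
  · rw [hb]; simpa using mul_nonneg (hre φ) (hre ψ)
  set nb : ℝ := ‖B φ ψ‖ with hnbdef
  have hnb : 0 < nb := norm_pos_iff.mpr hb
  have hbb : (starRingEnd ℂ) (B φ ψ) * (B φ ψ) = ((nb:ℂ))^2 := by
    rw [mul_comm, Complex.mul_conj]
    rw [Complex.normSq_eq_norm_sq]
    push_cast [hnbdef]
    ring
  have key : ∀ t : ℝ, 0 ≤ (nb^2 * (B ψ ψ).re) * (t * t) + (-(2 * nb^2)) * t + (B φ φ).re := by
    intro t
    set c : ℂ := -(t:ℂ) * (B φ ψ)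
    have hval : B (fun i => φ i + c * ψ i) (fun i => φ i + c * ψ i)
        = B φ φ + ((t^2 * nb^2 : ℝ) : ℂ) * B ψ ψ - ((2 * t * nb^2 : ℝ) : ℂ) := by
      rw [hexp c, herm]
      simp only [c, map_mul, map_neg, Complex.conj_ofReal]
      push_cast
      linear_combination (-(t:ℂ)) * hbb + (-(t:ℂ) + (t:ℂ)^2 * B ψ ψ) * hbb
    have h := hre (fun i => φ i + c * ψ i)
    rw [hval] at h
    simp only [Complex.add_re, Complex.sub_re, Complex.ofReal_re, Complex.re_ofReal_mul] at h
    nlinarith [h]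
  have hd := discrim_le_zero key
  rw [discrim] at hd
  have hp : (0:ℝ) < 4 * nb^2 := by positivity
  have h4 : 4 * nb^2 * (nb^2) ≤ 4 * nb^2 * ((B ψ ψ).re * (B φ φ).re) := by nlinarith [hd]
  have := le_of_mul_le_mul_left h4 hp
  linarith [this, mul_comm ((B ψ ψ).re) ((B φ φ).re)]

private lemma core_tendsto (k : ℝ × ℝ → ℂ) (U : Set (ℝ × ℝ)) (hUopen : IsOpen U)
    (h1 : ∀ p ∈ U, DifferentiableAt ℝ (fun u => k (u, p.2)) p.1)
    (h3 : ∀ p ∈ U, DifferentiableAt ℝ (fun w => pderiv1 k (p.1, w)) p.2)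
    (hp1c : ContinuousOn (pderiv1 k) U) (hp21c : ContinuousOn (pderiv2 (pderiv1 k)) U)
    (v : ℝ) (hv : (v, v) ∈ U) :
    Tendsto (fun p : ℝ × ℝ =>
        (k (p.1, p.2) - k (p.1, v) - k (v, p.2) + k (v, v)) /
          (((p.1 : ℂ) - (v : ℂ)) * ((p.2 : ℂ) - (v : ℂ))))
      ((𝓝[≠] v) ×ˢ (𝓝[≠] v)) (𝓝 (pderiv2 (pderiv1 k) (v, v))) := by
  set L : ℂ := pderiv2 (pderiv1 k) (v, v) with hL
  rw [Metric.tendsto_nhds]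
  intro ε hε
  obtain ⟨δ₁, hδ₁pos, hδ₁⟩ := Metric.isOpen_iff.mp hUopen (v, v) hv
  have hca : ContinuousAt (pderiv2 (pderiv1 k)) (v, v) :=
    hp21c.continuousAt (hUopen.mem_nhds hv)
  obtain ⟨δ₂, hδ₂pos, hδ₂⟩ := Metric.continuousAt_iff.mp hca (ε / 2) (half_pos hε)
  set δ : ℝ := min δ₁ δ₂ with hδdef
  have hδpos : 0 < δ := lt_min hδ₁pos hδ₂pos
  -- membership of the square in U and closeness of p21
  have hmem : ∀ u w : ℝ, |u - v| < δ → |w - v| < δ → (u, w) ∈ U := by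
    intro u w hu hw
    apply hδ₁
    rw [Metric.mem_ball, Prod.dist_eq, Real.dist_eq, Real.dist_eq]
    exact lt_of_lt_of_le (max_lt hu hw) (min_le_left _ _)
  have hclose : ∀ u w : ℝ, |u - v| < δ → |w - v| < δ →
      ‖pderiv2 (pderiv1 k) (u, w) - L‖ ≤ ε / 2 := by
    intro u w hu hw
    have : dist (u, w) ((v, v) : ℝ × ℝ) < δ₂ := by
      rw [Prod.dist_eq, Real.dist_eq, Real.dist_eq]
      exact lt_of_lt_of_le (max_lt hu hw) (min_le_right _ _)
    have := hδ₂ this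
    rw [dist_eq_norm] at this
    exact le_of_lt this
  have hvvδ : |v - v| < δ := by simpa using hδpos
  -- key estimate
  have key : ∀ s t : ℝ, s ≠ v → t ≠ v → |s - v| < δ → |t - v| < δ →
      dist ((k (s, t) - k (s, v) - k (v, t) + k (v, v)) /
        (((s : ℂ) - (v : ℂ)) * ((t : ℂ) - (v : ℂ)))) L < ε := by
    intro s t hs ht hsδ htδ
    have huIcc : ∀ u ∈ Set.uIcc v s, |u - v| < δ := fun u hu =>
      lt_of_le_of_lt (Set.abs_sub_left_of_mem_uIcc hu) hsδ
    have hwIcc : ∀ w ∈ Set.uIcc v t, |w - v| < δ := fun w hw =>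
      lt_of_le_of_lt (Set.abs_sub_left_of_mem_uIcc hw) htδ
    -- FTC in second variable
    have hinner : ∀ u : ℝ, |u - v| < δ →
        (∫ w in v..t, pderiv2 (pderiv1 k) (u, w)) = pderiv1 k (u, t) - pderiv1 k (u, v) := by
      intro u hu
      apply intervalIntegral.integral_eq_sub_of_hasDerivAt
      · intro w hw
        have hwU : (u, w) ∈ U := hmem u w hu (hwIcc w hw)
        exact (h3 (u, w) hwU).hasDerivAt
      · apply ContinuousOn.intervalIntegrable
        apply (hp21c.comp (Continuous.continuousOn (by fun_prop)))
        intro w hw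
        exact hmem u w hu (hwIcc w hw)
    -- FTC in first variable
    have houter : (∫ u in v..s, (pderiv1 k (u, t) - pderiv1 k (u, v)))
        = k (s, t) - k (s, v) - (k (v, t) - k (v, v)) := by
      apply intervalIntegral.integral_eq_sub_of_hasDerivAt
        (f := fun u => k (u, t) - k (u, v))
      · intro u hu
        have h1t := (h1 (u, t) (hmem u t (huIcc u hu) htδ)).hasDerivAt
        have h1v := (h1 (u, v) (hmem u v (huIcc u hu) hvvδ)).hasDerivAt
        exact h1t.sub h1v
      · apply ContinuousOn.intervalIntegrable
        apply ContinuousOn.sub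
        · apply (hp1c.comp (Continuous.continuousOn (by fun_prop)))
          intro u hu
          exact hmem u t (huIcc u hu) htδ
        · apply (hp1c.comp (Continuous.continuousOn (by fun_prop)))
          intro u hu
          exact hmem u v (huIcc u hu) hvvδ
    set A : ℂ := k (s, t) - k (s, v) - k (v, t) + k (v, v) with hA
    set c2 : ℂ := L * ((t - v : ℝ) : ℂ) with hc2
    have hp21cont : ∀ u : ℝ, |u - v| < δ →
        IntervalIntegrable (fun w => pderiv2 (pderiv1 k) (u, w)) MeasureTheory.volume v t := by
      intro u hu
      apply ContinuousOn.intervalIntegrable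
      apply (hp21c.comp (Continuous.continuousOn (by fun_prop)))
      intro w hw
      exact hmem u w hu (hwIcc w hw)
    have hstep : ∀ u : ℝ, |u - v| < δ →
        pderiv1 k (u, t) - pderiv1 k (u, v) - c2
          = ∫ w in v..t, (pderiv2 (pderiv1 k) (u, w) - L) := by
      intro u hu
      rw [intervalIntegral.integral_sub (hp21cont u hu) intervalIntegrable_const,
        hinner u hu, intervalIntegral.integral_const, hc2, Complex.real_smul]
      ring
    have hstepbound : ∀ u : ℝ, |u - v| < δ →
        ‖pderiv1 k (u, t) - pderiv1 k (u, v) - c2‖ ≤ ε / 2 * |t - v| := by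
      intro u hu
      rw [hstep u hu]
      apply intervalIntegral.norm_integral_le_of_norm_le_const
      intro w hw
      exact hclose u w hu (hwIcc w (Set.uIoc_subset_uIcc hw))
    have hcontsub : IntervalIntegrable
        (fun u => pderiv1 k (u, t) - pderiv1 k (u, v)) MeasureTheory.volume v s := by
      apply ContinuousOn.intervalIntegrable
      apply ContinuousOn.sub
      · apply (hp1c.comp (Continuous.continuousOn (by fun_prop)))
        intro u hu
        exact hmem u t (huIcc u hu) htδ
      · apply (hp1c.comp (Continuous.continuousOn (by fun_prop)))
        intro u hu
        exact hmem u v (huIcc u hu) hvvδ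
    have hAeq : A - L * ((s - v : ℝ) : ℂ) * ((t - v : ℝ) : ℂ)
        = ∫ u in v..s, (pderiv1 k (u, t) - pderiv1 k (u, v) - c2) := by
      rw [intervalIntegral.integral_sub hcontsub intervalIntegrable_const, houter,
        intervalIntegral.integral_const, hA, hc2, Complex.real_smul]
      ring
    have hAbound : ‖A - L * ((s - v : ℝ) : ℂ) * ((t - v : ℝ) : ℂ)‖
        ≤ (ε / 2 * |t - v|) * |s - v| := by
      rw [hAeq]
      apply intervalIntegral.norm_integral_le_of_norm_le_const
      intro u hu
      exact hstepbound u (huIcc u (Set.uIoc_subset_uIcc hu))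
    have hsne : ((s : ℂ) - (v : ℂ)) ≠ 0 := by
      rw [← Complex.ofReal_sub, Complex.ofReal_ne_zero]
      exact sub_ne_zero.mpr hs
    have htne : ((t : ℂ) - (v : ℂ)) ≠ 0 := by
      rw [← Complex.ofReal_sub, Complex.ofReal_ne_zero]
      exact sub_ne_zero.mpr ht
    rw [dist_eq_norm]
    have hdiv : A / (((s : ℂ) - (v : ℂ)) * ((t : ℂ) - (v : ℂ))) - L
        = (A - L * ((s - v : ℝ) : ℂ) * ((t - v : ℝ) : ℂ))
          / (((s : ℂ) - (v : ℂ)) * ((t : ℂ) - (v : ℂ))) := by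
      push_cast
      field_simp
    rw [hA] at hdiv
    rw [hdiv, norm_div, norm_mul]
    have hns : ‖(s : ℂ) - (v : ℂ)‖ = |s - v| := by
      rw [← Complex.ofReal_sub, Complex.norm_real, Real.norm_eq_abs]
    have hnt : ‖(t : ℂ) - (v : ℂ)‖ = |t - v| := by
      rw [← Complex.ofReal_sub, Complex.norm_real, Real.norm_eq_abs]
    rw [hns, hnt]
    have hspos : 0 < |s - v| := abs_pos.mpr (sub_ne_zero.mpr hs)
    have htpos : 0 < |t - v| := abs_pos.mpr (sub_ne_zero.mpr ht)
    rw [div_lt_iff₀ (by positivity)]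
    calc ‖k (s, t) - k (s, v) - k (v, t) + k (v, v)
          - L * ((s - v : ℝ) : ℂ) * ((t - v : ℝ) : ℂ)‖
        ≤ (ε / 2 * |t - v|) * |s - v| := hAbound
      _ < ε * (|s - v| * |t - v|) := by
          have hh := mul_lt_mul_of_pos_right (half_lt_self hε) (mul_pos htpos hspos)
          nlinarith [hh]
  -- assemble the eventual statement
  have hev1 : ∀ᶠ s in 𝓝[≠] v, s ≠ v ∧ |s - v| < δ := by
    have h5 : ∀ᶠ s in 𝓝 v, |s - v| < δ := by
      filter_upwards [Metric.ball_mem_nhds v hδpos] with s hs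
      simpa [Real.dist_eq] using hs
    filter_upwards [self_mem_nhdsWithin, h5.filter_mono nhdsWithin_le_nhds] with s h₁ h₂
    exact ⟨h₁, h₂⟩
  filter_upwards [hev1.prod_inl (𝓝[≠] v), hev1.prod_inr (𝓝[≠] v)] with p hp1 hp2
  exact key p.1 p.2 hp1.1 hp2.1 hp1.2 hp2.2

set_option maxHeartbeats 2000000 in
private lemma diff2 (Ω : Set ℝ) (hΩ : IsOpen Ω) (k : ℝ × ℝ → ℂ)
    (hpd : ∀ (n : ℕ) (x : Fin n → ℝ), (∀ i, x i ∈ Ω) → ∀ ξ : Fin n → ℂ,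
      0 ≤ ∑ i, ∑ j, k (x i, x j) * ξ i * (starRingEnd ℂ) (ξ j))
    (U : Set (ℝ × ℝ)) (hUopen : IsOpen U)
    (hdiag : ∀ x ∈ Ω, (x, x) ∈ U)
    (h1 : ∀ p ∈ U, DifferentiableAt ℝ (fun u => k (u, p.2)) p.1)
    (h3 : ∀ p ∈ U, DifferentiableAt ℝ (fun w => pderiv1 k (p.1, w)) p.2)
    (hp1c : ContinuousOn (pderiv1 k) U) (hp21c : ContinuousOn (pderiv2 (pderiv1 k)) U)
    (x₀ v : ℝ) (hx₀ : x₀ ∈ Ω) (hv : v ∈ Ω) :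
    DifferentiableAt ℝ (fun w => k (x₀, w)) v := by
  set f : ℝ → ℂ := fun w => k (x₀, w) with hf
  set l : Filter ℝ := 𝓝[≠] v with hl
  set G : ℝ → ℝ → ℂ := fun s t =>
    (k (s, t) - k (s, v) - k (v, t) + k (v, v)) /
      (((s : ℂ) - (v : ℂ)) * ((t : ℂ) - (v : ℂ))) with hG
  set g : ℝ → ℂ := fun s => (k (x₀, s) - k (x₀, v)) / ((s : ℂ) - (v : ℂ)) with hg
  have hGt : Tendsto (fun p : ℝ × ℝ => G p.1 p.2) (l ×ˢ l) (𝓝 (pderiv2 (pderiv1 k) (v, v))) :=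
    core_tendsto k U hUopen h1 h3 hp1c hp21c v (hdiag v hv)
  -- the four compositions
  have hpair11 : Tendsto (fun p : ℝ × ℝ => (p.1, p.1)) (l ×ˢ l) (l ×ˢ l) :=
    tendsto_fst.prodMk tendsto_fst
  have hpair21 : Tendsto (fun p : ℝ × ℝ => (p.2, p.1)) (l ×ˢ l) (l ×ˢ l) :=
    tendsto_snd.prodMk tendsto_fst
  have hpair22 : Tendsto (fun p : ℝ × ℝ => (p.2, p.2)) (l ×ˢ l) (l ×ˢ l) :=
    tendsto_snd.prodMk tendsto_snd
  have t11 : Tendsto (fun p : ℝ × ℝ => G p.1 p.1) (l ×ˢ l) (𝓝 (pderiv2 (pderiv1 k) (v, v))) :=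
    (hGt.comp hpair11).congr (fun p => rfl)
  have t21 : Tendsto (fun p : ℝ × ℝ => G p.2 p.1) (l ×ˢ l) (𝓝 (pderiv2 (pderiv1 k) (v, v))) :=
    (hGt.comp hpair21).congr (fun p => rfl)
  have t22 : Tendsto (fun p : ℝ × ℝ => G p.2 p.2) (l ×ˢ l) (𝓝 (pderiv2 (pderiv1 k) (v, v))) :=
    (hGt.comp hpair22).congr (fun p => rfl)
  have hΦ : Tendsto (fun p : ℝ × ℝ => G p.1 p.1 - G p.1 p.2 - G p.2 p.1 + G p.2 p.2)
      (l ×ˢ l) (𝓝 0) := by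
    have := ((t11.sub hGt).sub t21).add t22
    simpa using this
  -- nonnegativity of k (x₀, x₀)
  have hC0 : 0 ≤ (k (x₀, x₀)).re := by
    have h := hpd 1 ![x₀] (by intro i; fin_cases i <;> simpa using hx₀) ![1]
    simp only [Fin.sum_univ_one, Matrix.cons_val_zero, map_one, mul_one] at h
    exact (by simpa using (Complex.le_def.mp h).1)
  -- eventual membership
  have hevΩ : ∀ᶠ s in l, s ∈ Ω ∧ s ≠ v := by
    filter_upwards [(hΩ.eventually_mem hv).filter_mono nhdsWithin_le_nhds,
      self_mem_nhdsWithin] with s h₁ h₂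
    exact ⟨h₁, h₂⟩
  -- the Cauchy–Schwarz bound
  have hbound : ∀ᶠ p : ℝ × ℝ in l ×ˢ l, ‖g p.1 - g p.2‖ ^ 2 ≤
      (k (x₀, x₀)).re * (G p.1 p.1 - G p.1 p.2 - G p.2 p.1 + G p.2 p.2).re := by
    filter_upwards [hevΩ.prod_inl l, hevΩ.prod_inr l] with p hp1 hp2
    obtain ⟨hsΩ, hsv⟩ := hp1
    obtain ⟨htΩ, htv⟩ := hp2
    set s : ℝ := p.1
    set t : ℝ := p.2
    have hsne : ((s : ℂ) - (v : ℂ)) ≠ 0 := by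
      rw [← Complex.ofReal_sub, Complex.ofReal_ne_zero]; exact sub_ne_zero.mpr hsv
    have htne : ((t : ℂ) - (v : ℂ)) ≠ 0 := by
      rw [← Complex.ofReal_sub, Complex.ofReal_ne_zero]; exact sub_ne_zero.mpr htv
    set x : Fin 4 → ℝ := ![x₀, v, s, t] with hx
    set φ : Fin 4 → ℂ := ![1, 0, 0, 0] with hφ
    set ψ : Fin 4 → ℂ := ![0, ((t : ℂ) - v)⁻¹ - ((s : ℂ) - v)⁻¹,
      ((s : ℂ) - v)⁻¹, -(((t : ℂ) - v)⁻¹)] with hψ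
    have hxmem : ∀ i, x i ∈ Ω := by
      intro i; fin_cases i <;> simp [hx, hx₀, hv, hsΩ, htΩ]
    have hcs := cs_aux (fun i j => k (x i, x j)) (hpd 4 x hxmem) φ ψ
    have eφψ : (∑ i, ∑ j, k (x i, x j) * φ i * (starRingEnd ℂ) (ψ j)) = g s - g t := by
      have hconj : ∀ a b : ℝ, (starRingEnd ℂ) (((a:ℂ) - (b:ℂ))⁻¹) = ((a:ℂ) - (b:ℂ))⁻¹ := by
        intro a b
        rw [map_inv₀, map_sub, Complex.conj_ofReal, Complex.conj_ofReal]
      simp only [hx, hφ, hψ, hg, Fin.sum_univ_four, Matrix.cons_val_zero, Matrix.cons_val_one,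
        Matrix.head_cons, Matrix.cons_val_two, Matrix.tail_cons, Matrix.cons_val_three,
        map_sub, map_neg, map_zero, map_one, hconj, zero_mul, mul_zero, one_mul, mul_one,
        zero_add, add_zero]
      simp only [div_eq_mul_inv, mul_inv]
      ring
    have eφφ : (∑ i, ∑ j, k (x i, x j) * φ i * (starRingEnd ℂ) (φ j)) = k (x₀, x₀) := by
      simp [hx, hφ, Fin.sum_univ_four]
    have eψψ : (∑ i, ∑ j, k (x i, x j) * ψ i * (starRingEnd ℂ) (ψ j))
        = G s s - G s t - G t s + G t t := by
      have hconj : ∀ a b : ℝ, (starRingEnd ℂ) (((a:ℂ) - (b:ℂ))⁻¹) = ((a:ℂ) - (b:ℂ))⁻¹ := by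
        intro a b
        rw [map_inv₀, map_sub, Complex.conj_ofReal, Complex.conj_ofReal]
      simp only [hx, hψ, hG, Fin.sum_univ_four, Matrix.cons_val_zero, Matrix.cons_val_one,
        Matrix.head_cons, Matrix.cons_val_two, Matrix.tail_cons, Matrix.cons_val_three,
        map_sub, map_neg, map_zero, map_one, hconj, zero_mul, mul_zero, one_mul, mul_one,
        zero_add, add_zero]
      simp only [div_eq_mul_inv, mul_inv]
      ring
    rw [eφψ, eφφ, eψψ] at hcs
    exact hcs
  -- tendsto of the squared norms
  have hsq : Tendsto (fun p : ℝ × ℝ => ‖g p.1 - g p.2‖ ^ 2) (l ×ˢ l) (𝓝 0) := by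
    apply squeeze_zero' (Eventually.of_forall fun p => sq_nonneg _) hbound
    have hre : Tendsto (fun p : ℝ × ℝ =>
        (G p.1 p.1 - G p.1 p.2 - G p.2 p.1 + G p.2 p.2).re) (l ×ˢ l) (𝓝 0) := by
      have := (Complex.continuous_re.tendsto 0).comp hΦ
      simpa [Function.comp_def] using this
    have := hre.const_mul ((k (x₀, x₀)).re)
    simpa using this
  have hnorm : Tendsto (fun p : ℝ × ℝ => ‖g p.1 - g p.2‖) (l ×ˢ l) (𝓝 0) := by
    have h := hsq.sqrt
    have heq : (fun p : ℝ × ℝ => Real.sqrt (‖g p.1 - g p.2‖ ^ 2))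
        = fun p : ℝ × ℝ => ‖g p.1 - g p.2‖ :=
      funext fun p => Real.sqrt_sq (norm_nonneg _)
    rw [heq] at h
    simpa using h
  have hdiff0 : Tendsto (fun p : ℝ × ℝ => g p.1 - g p.2) (l ×ˢ l) (𝓝 0) :=
    tendsto_zero_iff_norm_tendsto_zero.mpr hnorm
  -- Cauchy
  have hcauchy : Cauchy (Filter.map g l) := by
    rw [cauchy_map_iff]
    constructor
    · exact inferInstance
    · rw [uniformity_eq_comap_nhds_zero ℂ, tendsto_comap_iff]
      have : ((fun q : ℂ × ℂ => q.2 - q.1) ∘ fun p : ℝ × ℝ => (g p.1, g p.2))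
          = fun p : ℝ × ℝ => -(g p.1 - g p.2) := by
        funext p; simp [neg_sub]
      rw [this]
      simpa using hdiff0.neg
  obtain ⟨c, hc⟩ := CompleteSpace.complete hcauchy
  have htend : Tendsto g l (𝓝 c) := hc
  have hslope : Tendsto (slope f v) l (𝓝 c) := by
    apply htend.congr'
    filter_upwards [self_mem_nhdsWithin] with s hs
    rw [slope_def_module]
    rw [hg, hf]
    push_cast
    rw [Complex.real_smul]
    push_cast
    field_simp
  exact (hasDerivAt_iff_tendsto_slope.mpr hslope).differentiableAt

/-- A positive definite kernel on an open `Ω ⊆ ℝ` of class `S₁` on an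
open neighborhood of the diagonal is separately differentiable on all of `Ω × Ω`. -/
theorem stmt12 (Ω : Set ℝ) (hΩ : IsOpen Ω) (k : ℝ × ℝ → ℂ)
    (hpd : ∀ (n : ℕ) (x : Fin n → ℝ), (∀ i, x i ∈ Ω) → ∀ ξ : Fin n → ℂ,
      0 ≤ ∑ i, ∑ j, k (x i, x j) * ξ i * (starRingEnd ℂ) (ξ j))
    (U : Set (ℝ × ℝ)) (hUopen : IsOpen U)
    (hdiag : ∀ x ∈ Ω, (x, x) ∈ U) (hUsub : U ⊆ Ω ×ˢ Ω)
    (hs : IsClassSn 1 U k) :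
    ∀ p ∈ Ω ×ˢ Ω,
      DifferentiableAt ℝ (fun u => k (u, p.2)) p.1 ∧
      DifferentiableAt ℝ (fun v => k (p.1, v)) p.2 := by
  obtain ⟨hsa, hsb, hsc⟩ := hs
  have h1 : ∀ p ∈ U, DifferentiableAt ℝ (fun u => k (u, p.2)) p.1 := by
    have := hsa 0 zero_lt_one
    simpa using this
  have h3 : ∀ p ∈ U, DifferentiableAt ℝ (fun w => pderiv1 k (p.1, w)) p.2 := by
    have := hsb 1 le_rfl 0 zero_lt_one
    simpa using this
  have hp1c : ContinuousOn (pderiv1 k) U := by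
    have := hsc 1 le_rfl 0 (Nat.zero_le 1)
    simpa using this
  have hp21c : ContinuousOn (pderiv2 (pderiv1 k)) U := by
    have := hsc 1 le_rfl 1 le_rfl
    simpa using this
  -- Hermitian symmetry of a positive definite kernel
  have herm : ∀ x ∈ Ω, ∀ y ∈ Ω, k (x, y) = (starRingEnd ℂ) (k (y, x)) := by
    intro x hx y hy
    have hmem2 : ∀ i, (![x, y] : Fin 2 → ℝ) i ∈ Ω := by
      intro i; fin_cases i <;> simpa [hx, hy]
    have h1' := (Complex.le_def.mp (hpd 2 ![x, y] hmem2 ![1, 1])).2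
    have h2' := (Complex.le_def.mp (hpd 2 ![x, y] hmem2 ![1, Complex.I])).2
    have h3' := (Complex.le_def.mp
      (hpd 1 ![x] (by intro i; fin_cases i; simpa using hx) ![1])).2
    have h4' := (Complex.le_def.mp
      (hpd 1 ![y] (by intro i; fin_cases i; simpa using hy) ![1])).2
    simp only [Fin.sum_univ_two, Fin.sum_univ_one, Matrix.cons_val_zero, Matrix.cons_val_one,
      Matrix.head_cons, map_one, mul_one, one_mul, Complex.conj_I, Complex.zero_im,
      Complex.add_im, Complex.mul_im, Complex.mul_re, Complex.I_re, Complex.I_im,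
      Complex.neg_re, Complex.neg_im] at h1' h2' h3' h4'
    apply Complex.ext
    · simp only [Complex.conj_re]
      nlinarith [h2', h3', h4']
    · simp only [Complex.conj_im]
      linarith [h1', h3', h4']
  intro p hp
  constructor
  · have hd := diff2 Ω hΩ k hpd U hUopen hdiag h1 h3 hp1c hp21c p.2 p.1 hp.2 hp.1
    have hds : DifferentiableAt ℝ (fun w => (starRingEnd ℂ) (k (p.2, w))) p.1 := hd.star
    have hev : (fun u => k (u, p.2)) =ᶠ[𝓝 p.1] (fun u => (starRingEnd ℂ) (k (p.2, u))) := by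
      filter_upwards [hΩ.eventually_mem hp.1] with u hu
      exact herm u hu p.2 hp.2
    exact hds.congr_of_eventuallyEq hev
  · exact diff2 Ω hΩ k hpd U hUopen hdiag h1 h3 hp1c hp21c p.1 p.2 hp.1 hp.2
end

section
/- Let Ω ⊆ ℝ be open and let k : Ω × Ω → ℂ be a positive definite kernel of class S₁(U) on some open set U ⊆ ℝ² with D(Ω²) ⊆ U ⊆ Ω × Ω. Then: (1) for every fixed u ∈ Ω the function v ↦ ∂k/∂v (u,v) is continuous on Ω, and for every fixed v ∈ Ω the function u ↦ ∂k/∂u (u,v) is continuous on Ω; (2) for every u₀ ∈ Ω there exists a neighborhood V of u₀ in Ω such that the family of functions {v ↦ ∂k/∂v (u,v) : u ∈ V} is equicontinuous on Ω, and the analogous equicontinuity statement holds for the family {u ↦ ∂k/∂u (u,v) : v ∈ W} for a suitable neighborhood W of any v₀ ∈ Ω. -/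
open Filter Topology ComplexOrder

section PDaux

variable {Ω : Set ℝ} {k : ℝ × ℝ → ℂ}
  (hpd : ∀ (n : ℕ) (x : Fin n → ℝ), (∀ i, x i ∈ Ω) → ∀ ξ : Fin n → ℂ,
      0 ≤ ∑ i, ∑ j, k (x i, x j) * ξ i * (starRingEnd ℂ) (ξ j))

include hpd

lemma diag_nonneg {a : ℝ} (ha : a ∈ Ω) : 0 ≤ (k (a,a)).re ∧ (k (a,a)).im = 0 := by
  have h := hpd 1 ![a] (fun i => by fin_cases i; simpa) ![1]
  simp [Fin.sum_univ_one] at h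
  rw [Complex.nonneg_iff] at h
  exact ⟨h.1, h.2.symm⟩

lemma herm {a b : ℝ} (ha : a ∈ Ω) (hb : b ∈ Ω) :
    k (b,a) = (starRingEnd ℂ) (k (a,b)) := by
  have hx : ∀ i, (![a,b] : Fin 2 → ℝ) i ∈ Ω := by
    intro i; fin_cases i <;> simpa
  have h1 := hpd 2 ![a,b] hx ![1,1]
  have h2 := hpd 2 ![a,b] hx ![1,Complex.I]
  simp [Fin.sum_univ_two, Complex.nonneg_iff] at h1 h2
  have haa := (diag_nonneg hpd ha).2
  have hbb := (diag_nonneg hpd hb).2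
  apply Complex.ext
  · have := h2.2
    simp [Complex.add_im, Complex.mul_im, Complex.conj_im, Complex.conj_re,
      Complex.I_re, Complex.I_im, haa, hbb] at this ⊢
    linarith
  · have := h1.2
    simp [Complex.add_im, haa, hbb] at this ⊢
    linarith

lemma cs {u : ℝ} (hu : u ∈ Ω) {y : Fin 4 → ℝ} (hy : ∀ i, y i ∈ Ω) (c : Fin 4 → ℝ) :
    ‖∑ j, k (u, y j) * (c j : ℂ)‖ ^ 2
      ≤ (k (u,u)).re * (∑ i, ∑ j, k (y i, y j) * (c i : ℂ) * (c j : ℂ)).re := by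
  have hherm : ∀ i, k (y i, u) = (starRingEnd ℂ) (k (u, y i)) := fun i => herm hpd hu (hy i)
  set S := ∑ j, k (u, y j) * (c j : ℂ) with hS
  set Q := ∑ i, ∑ j, k (y i, y j) * (c i : ℂ) * (c j : ℂ) with hQ
  set N := Complex.normSq S with hN
  have him : (k (u,u)).im = 0 := (diag_nonneg hpd hu).2
  have hx : ∀ i, (![u, y 0, y 1, y 2, y 3] : Fin 5 → ℝ) i ∈ Ω := by
    intro i; fin_cases i <;> simp [hu, hy 0, hy 1, hy 2, hy 3]
  have key : ∀ r : ℝ, 0 ≤ (k (u,u)).re * (r^2 * N) - 2 * (r * N) + Q.re := by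
    intro r
    set t : ℂ := -(r:ℂ) * (starRingEnd ℂ) S with ht
    have eqn : ∑ i : Fin 5, ∑ j : Fin 5,
        k ((![u, y 0, y 1, y 2, y 3] : Fin 5 → ℝ) i, (![u, y 0, y 1, y 2, y 3] : Fin 5 → ℝ) j) *
          (![t, c 0, c 1, c 2, c 3] : Fin 5 → ℂ) i *
          (starRingEnd ℂ) ((![t, c 0, c 1, c 2, c 3] : Fin 5 → ℂ) j)
        = k (u,u) * t * (starRingEnd ℂ) t + t * S + (starRingEnd ℂ) t * (starRingEnd ℂ) S + Q := by
      simp only [Fin.sum_univ_five, Matrix.cons_val_zero, Matrix.cons_val_one, Matrix.head_cons,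
        Matrix.cons_val_two, Matrix.tail_cons, Matrix.cons_val_three, Matrix.cons_val_four,
        hS, hQ, Fin.sum_univ_four, map_sum, map_add, map_mul, Complex.conj_ofReal,
        hherm 0, hherm 1, hherm 2, hherm 3]
      ring
    have e := hpd 5 ![u, y 0, y 1, y 2, y 3] hx ![t, c 0, c 1, c 2, c 3]
    rw [eqn, Complex.nonneg_iff] at e
    have hre := e.1
    have hnt : Complex.normSq t = r^2 * N := by
      rw [ht, Complex.normSq_mul, Complex.normSq_neg, Complex.normSq_conj,
        Complex.normSq_ofReal, ← hN]
      ring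
    have h1 : (k (u,u) * t * (starRingEnd ℂ) t).re = (k (u,u)).re * (r^2 * N) := by
      rw [mul_assoc, Complex.mul_conj, hnt, mul_comm, Complex.re_ofReal_mul]
      ring
    have hts : t * S = -((r * N : ℝ) : ℂ) := by
      rw [ht, mul_assoc, mul_comm ((starRingEnd ℂ) S) S, Complex.mul_conj, ← hN]
      push_cast; ring
    have h2 : (t * S).re = -(r * N) := by rw [hts]; simp
    have h3 : ((starRingEnd ℂ) t * (starRingEnd ℂ) S).re = -(r * N) := by
      rw [← map_mul, Complex.conj_re, h2]
    simp only [Complex.add_re, h1, h2, h3] at hre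
    linarith
  have hN0 : 0 ≤ N := Complex.normSq_nonneg S
  have hQ0 : 0 ≤ Q.re := by have := key 0; simpa using this
  have ha0 : 0 ≤ (k (u,u)).re := (diag_nonneg hpd hu).1
  rw [Complex.sq_norm, ← hN]
  rcases eq_or_lt_of_le hN0 with h | h
  · rw [← h]; positivity
  · rcases eq_or_lt_of_le ha0 with ha | ha
    · exfalso
      have := key ((Q.re + 1) / (2 * N))
      rw [← ha] at this
      have h2N : (0:ℝ) < 2 * N := by positivity
      field_simp at this
      nlinarith
    · have := key (1 / (k (u,u)).re)
      have hane : (k (u,u)).re ≠ 0 := ne_of_gt ha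
      field_simp at this
      nlinarith [mul_pos ha ha]

end PDaux

/-- Second difference quotient. -/
noncomputable def sdq (k : ℝ × ℝ → ℂ) (a b e e' : ℝ) : ℂ :=
  (k (a+e,b+e') - k (a+e,b) - k (a,b+e') + k (a,b)) / ((e:ℂ)*(e':ℂ))

section Box

variable {k : ℝ × ℝ → ℂ}

lemma box {U : Set (ℝ × ℝ)} (hUopen : IsOpen U)
    (H1 : ∀ p ∈ U, DifferentiableAt ℝ (fun u => k (u, p.2)) p.1)
    (H2 : ∀ p ∈ U, DifferentiableAt ℝ (fun v => pderiv1 k (p.1, v)) p.2)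
    (H3 : ContinuousOn (pderiv2 (pderiv1 k)) U)
    {w : ℝ} (hw : (w,w) ∈ U) {ε : ℝ} (hε : 0 < ε) :
    ∃ δ > 0, ∀ s t h h' : ℝ, |s - w| < δ/4 → |t - w| < δ/4 → |h| < δ/4 → |h'| < δ/4 →
      h ≠ 0 → h' ≠ 0 →
      ‖sdq k s t h h' - pderiv2 (pderiv1 k) (w,w)‖ ≤ ε := by
  set g := pderiv2 (pderiv1 k) with hg
  set g₀ := g (w,w) with hg₀
  have hc : ContinuousAt g (w,w) := H3.continuousAt (hUopen.mem_nhds hw)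
  obtain ⟨δ₁, hδ₁pos, hδ₁⟩ := Metric.continuousAt_iff.mp hc ε hε
  obtain ⟨δ₀, hδ₀pos, hδ₀⟩ := Metric.isOpen_iff.mp hUopen _ hw
  refine ⟨min δ₀ δ₁, lt_min hδ₀pos hδ₁pos, ?_⟩
  set δ := min δ₀ δ₁ with hδ
  intro s t h h' hs ht hh hh' hhne hh'ne
  set B : Set ℝ := Metric.ball w (δ/2) with hB
  have hmem : ∀ x ∈ B, ∀ y ∈ B, ((x,y) : ℝ × ℝ) ∈ U ∧ ‖g (x,y) - g₀‖ ≤ ε := by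
    intro x hx y hy
    have hx' : |x - w| < δ/2 := by simpa [hB, Real.dist_eq] using hx
    have hy' : |y - w| < δ/2 := by simpa [hB, Real.dist_eq] using hy
    have hδpos : 0 < δ := lt_min hδ₀pos hδ₁pos
    have hdist : dist ((x,y) : ℝ × ℝ) (w,w) < δ := by
      have : dist ((x,y) : ℝ × ℝ) (w,w) = max |x - w| |y - w| := by
        rw [Prod.dist_eq]; simp [Real.dist_eq]
      rw [this]
      exact max_lt (by linarith) (by linarith)
    constructor
    · exact hδ₀ (Metric.mem_ball.mpr (lt_of_lt_of_le hdist (min_le_left _ _)))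
    · exact le_of_lt (by rw [← dist_eq_norm]; exact hδ₁ (lt_of_lt_of_le hdist (min_le_right _ _)))
  have hsB : s ∈ B := by simp only [hB, Metric.mem_ball, Real.dist_eq]; linarith [abs_nonneg h]
  have hshB : s + h ∈ B := by
    simp only [hB, Metric.mem_ball, Real.dist_eq]
    calc |s + h - w| ≤ |s - w| + |h| := by rw [add_sub_right_comm]; exact abs_add_le _ _
    _ < δ/2 := by linarith
  have htB : t ∈ B := by simp only [hB, Metric.mem_ball, Real.dist_eq]; linarith [abs_nonneg h']
  have hthB : t + h' ∈ B := by
    simp only [hB, Metric.mem_ball, Real.dist_eq]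
    calc |t + h' - w| ≤ |t - w| + |h'| := by rw [add_sub_right_comm]; exact abs_add_le _ _
    _ < δ/2 := by linarith
  have hBconv : Convex ℝ B := convex_ball w (δ/2)
  -- Step A
  have stepA : ∀ x ∈ B, ‖(pderiv1 k (x, t+h') - pderiv1 k (x,t)) - (h' : ℂ) * g₀‖ ≤ ε * |h'| := by
    intro x hx
    have hd : ∀ y ∈ B, HasDerivWithinAt (fun y => pderiv1 k (x,y) - y • g₀) (g (x,y) - g₀) B y := by
      intro y hy
      have h1 : HasDerivAt (fun v => pderiv1 k (x,v)) (g (x,y)) y :=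
        (H2 (x,y) (hmem x hx y hy).1).hasDerivAt
      have h2 : HasDerivAt (fun y : ℝ => y • g₀) g₀ y := by
        simpa using (hasDerivAt_id y).smul_const g₀
      exact (h1.sub h2).hasDerivWithinAt
    have bound : ∀ y ∈ B, ‖g (x,y) - g₀‖ ≤ ε := fun y hy => (hmem x hx y hy).2
    have := hBconv.norm_image_sub_le_of_norm_hasDerivWithin_le hd bound htB hthB
    simp only [add_sub_cancel_left] at this
    calc ‖pderiv1 k (x, t+h') - pderiv1 k (x,t) - (h':ℂ) * g₀‖
        = ‖(pderiv1 k (x, t+h') - (t+h') • g₀) - (pderiv1 k (x,t) - t • g₀)‖ := by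
          rw [← Complex.real_smul]
          congr 1
          module
      _ ≤ ε * ‖(h' : ℝ)‖ := this
      _ = ε * |h'| := by rw [Real.norm_eq_abs]
  -- Step B
  have stepB : ‖(k (s+h, t+h') - k (s+h,t)) - (k (s,t+h') - k (s,t))
      - (h:ℂ) * ((h':ℂ) * g₀)‖ ≤ (ε * |h'|) * |h| := by
    have hd : ∀ x ∈ B, HasDerivWithinAt
        (fun x => (k (x, t+h') - k (x,t)) - x • ((h':ℂ) * g₀))
        ((pderiv1 k (x, t+h') - pderiv1 k (x,t)) - (h':ℂ) * g₀) B x := by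
      intro x hx
      have h1 : HasDerivAt (fun x => k (x, t+h')) (pderiv1 k (x, t+h')) x :=
        (H1 (x,t+h') (hmem x hx _ hthB).1).hasDerivAt
      have h2 : HasDerivAt (fun x => k (x, t)) (pderiv1 k (x, t)) x :=
        (H1 (x,t) (hmem x hx _ htB).1).hasDerivAt
      have h3 : HasDerivAt (fun x : ℝ => x • ((h':ℂ) * g₀)) ((h':ℂ) * g₀) x := by
        simpa using (hasDerivAt_id x).smul_const ((h':ℂ) * g₀)
      exact ((h1.sub h2).sub h3).hasDerivWithinAt
    have bound : ∀ x ∈ B, ‖(pderiv1 k (x, t+h') - pderiv1 k (x,t)) - (h':ℂ) * g₀‖ ≤ ε * |h'| :=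
      fun x hx => stepA x hx
    have := hBconv.norm_image_sub_le_of_norm_hasDerivWithin_le hd bound hsB hshB
    simp only [add_sub_cancel_left] at this
    calc ‖(k (s+h, t+h') - k (s+h,t)) - (k (s,t+h') - k (s,t)) - (h:ℂ) * ((h':ℂ) * g₀)‖
        = ‖((k (s+h, t+h') - k (s+h,t)) - (s+h) • ((h':ℂ)*g₀))
            - ((k (s,t+h') - k (s,t)) - s • ((h':ℂ)*g₀))‖ := by
          rw [← Complex.real_smul]
          congr 1
          module
      _ ≤ (ε * |h'|) * ‖(h : ℝ)‖ := this
      _ = (ε * |h'|) * |h| := by rw [Real.norm_eq_abs]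
  -- conclude
  have hhC : (h : ℂ) ≠ 0 := by exact_mod_cast hhne
  have hh'C : (h' : ℂ) ≠ 0 := by exact_mod_cast hh'ne
  have heq : sdq k s t h h' - g₀
      = ((k (s+h, t+h') - k (s+h,t)) - (k (s,t+h') - k (s,t)) - (h:ℂ) * ((h':ℂ) * g₀))
        / ((h:ℂ) * (h':ℂ)) := by
    rw [sdq]
    field_simp
    ring
  rw [heq, norm_div]
  have hnorm : ‖(h:ℂ) * (h':ℂ)‖ = |h| * |h'| := by
    rw [norm_mul, Complex.norm_real, Complex.norm_real, Real.norm_eq_abs, Real.norm_eq_abs]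
  rw [hnorm, div_le_iff₀ (by positivity)]
  calc ‖(k (s+h, t+h') - k (s+h,t)) - (k (s,t+h') - k (s,t)) - (h:ℂ) * ((h':ℂ) * g₀)‖
      ≤ (ε * |h'|) * |h| := stepB
    _ = ε * (|h| * |h'|) := by ring

end Box

section Split

variable {k : ℝ × ℝ → ℂ}

lemma Ssplit (u v v' h h' : ℝ) (hh : h ≠ 0) (hh' : h' ≠ 0) :
    ∑ j, k (u, (![v+h, v, v'+h', v'] : Fin 4 → ℝ) j) *
        (((![1/h, -(1/h), -(1/h'), 1/h'] : Fin 4 → ℝ) j : ℝ) : ℂ)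
      = (k (u,v+h) - k (u,v)) / (h:ℂ) - (k (u,v'+h') - k (u,v')) / (h':ℂ) := by
  have hhC : (h:ℂ) ≠ 0 := by exact_mod_cast hh
  have hh'C : (h':ℂ) ≠ 0 := by exact_mod_cast hh'
  simp only [Fin.sum_univ_four, Matrix.cons_val_zero, Matrix.cons_val_one, Matrix.head_cons,
    Matrix.cons_val_two, Matrix.tail_cons, Matrix.cons_val_three]
  push_cast
  field_simp
  ring

set_option maxHeartbeats 1000000 in
lemma Qsplit (v v' h h' : ℝ) (hh : h ≠ 0) (hh' : h' ≠ 0) :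
    ∑ i, ∑ j, k ((![v+h, v, v'+h', v'] : Fin 4 → ℝ) i, (![v+h, v, v'+h', v'] : Fin 4 → ℝ) j) *
        (((![1/h, -(1/h), -(1/h'), 1/h'] : Fin 4 → ℝ) i : ℝ) : ℂ) *
        (((![1/h, -(1/h), -(1/h'), 1/h'] : Fin 4 → ℝ) j : ℝ) : ℂ)
      = sdq k v v h h - sdq k v v' h h' - sdq k v' v h' h + sdq k v' v' h' h' := by
  have hhC : (h:ℂ) ≠ 0 := by exact_mod_cast hh
  have hh'C : (h':ℂ) ≠ 0 := by exact_mod_cast hh'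
  simp only [Fin.sum_univ_four, Matrix.cons_val_zero, Matrix.cons_val_one, Matrix.head_cons,
    Matrix.cons_val_two, Matrix.tail_cons, Matrix.cons_val_three, sdq]
  push_cast
  field_simp
  ring

end Split

section Deriv

variable {Ω : Set ℝ} {k : ℝ × ℝ → ℂ} {U : Set (ℝ × ℝ)}
  (hΩ : IsOpen Ω)
  (hpd : ∀ (n : ℕ) (x : Fin n → ℝ), (∀ i, x i ∈ Ω) → ∀ ξ : Fin n → ℂ,
      0 ≤ ∑ i, ∑ j, k (x i, x j) * ξ i * (starRingEnd ℂ) (ξ j))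
  (hUopen : IsOpen U) (hdiag : ∀ x ∈ Ω, (x, x) ∈ U)
  (H1 : ∀ p ∈ U, DifferentiableAt ℝ (fun u => k (u, p.2)) p.1)
  (H2 : ∀ p ∈ U, DifferentiableAt ℝ (fun v => pderiv1 k (p.1, v)) p.2)
  (H3 : ContinuousOn (pderiv2 (pderiv1 k)) U)

include hΩ hpd hUopen hdiag H1 H2 H3

/-- Difference quotients at two nearby base points are uniformly close. -/
lemma DDbound {v₀ : ℝ} (hv₀ : v₀ ∈ Ω) {ε : ℝ} (hε : 0 < ε) :
    ∃ η > 0, Metric.ball v₀ (2*η) ⊆ Ω ∧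
      ∀ u ∈ Ω, ∀ v ∈ Metric.ball v₀ η, ∀ v' ∈ Metric.ball v₀ η,
      ∀ h h' : ℝ, |h| < η → |h'| < η → h ≠ 0 → h' ≠ 0 →
      ‖(k (u,v+h) - k (u,v)) / (h:ℂ) - (k (u,v'+h') - k (u,v')) / (h':ℂ)‖ ^ 2
        ≤ (k (u,u)).re * (4*ε) := by
  obtain ⟨δ, hδpos, hδ⟩ := box hUopen H1 H2 H3 (hdiag v₀ hv₀) hε
  obtain ⟨r, hrpos, hr⟩ := Metric.isOpen_iff.mp hΩ v₀ hv₀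
  refine ⟨min (δ/8) (r/2), by positivity, ?_, ?_⟩
  · intro z hz
    apply hr
    rw [Metric.mem_ball] at hz ⊢
    calc dist z v₀ < 2 * min (δ/8) (r/2) := hz
      _ ≤ 2 * (r/2) := by gcongr; exact min_le_right _ _
      _ = r := by ring
  set η := min (δ/8) (r/2) with hη
  intro u hu v hv v' hv' h h' hh hh' hhne hh'ne
  have hηδ : η ≤ δ/8 := min_le_left _ _
  have hηr : η ≤ r/2 := min_le_right _ _
  rw [Metric.mem_ball, Real.dist_eq] at hv hv'
  -- membership of the four points in Ω
  have hmemΩ : ∀ z : ℝ, |z - v₀| < 2*η → z ∈ Ω := by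
    intro z hz
    exact hr (by rw [Metric.mem_ball, Real.dist_eq]; calc |z - v₀| < 2*η := hz
      _ ≤ r := by linarith)
  have hm1 : v + h ∈ Ω := hmemΩ _ (by
    calc |v+h-v₀| ≤ |v-v₀| + |h| := by rw [add_sub_right_comm]; exact abs_add_le _ _
      _ < 2*η := by linarith)
  have hm2 : v ∈ Ω := hmemΩ _ (by linarith [abs_nonneg h])
  have hm3 : v' + h' ∈ Ω := hmemΩ _ (by
    calc |v'+h'-v₀| ≤ |v'-v₀| + |h'| := by rw [add_sub_right_comm]; exact abs_add_le _ _
      _ < 2*η := by linarith)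
  have hm4 : v' ∈ Ω := hmemΩ _ (by linarith [abs_nonneg h'])
  have hy : ∀ i, (![v+h, v, v'+h', v'] : Fin 4 → ℝ) i ∈ Ω := by
    intro i
    fin_cases i
    · exact hm1
    · exact hm2
    · exact hm3
    · exact hm4
  have hcs := cs hpd hu hy ![1/h, -(1/h), -(1/h'), 1/h']
  rw [Ssplit u v v' h h' hhne hh'ne, Qsplit v v' h h' hhne hh'ne] at hcs
  -- bound the real part of Q
  set g₀ := pderiv2 (pderiv1 k) (v₀, v₀) with hg₀
  have hbox : ∀ a b e e' : ℝ, |a - v₀| < δ/4 → |b - v₀| < δ/4 → |e| < δ/4 → |e'| < δ/4 →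
      e ≠ 0 → e' ≠ 0 → ‖sdq k a b e e' - g₀‖ ≤ ε := fun a b e e' ha hb he he' hne hne' =>
    hδ a b e e' ha hb he he' hne hne'
  have hQ : (sdq k v v h h - sdq k v v' h h' - sdq k v' v h' h + sdq k v' v' h' h').re ≤ 4*ε := by
    have e1 := hbox v v h h (by linarith) (by linarith) (by linarith) (by linarith) hhne hhne
    have e2 := hbox v v' h h' (by linarith) (by linarith) (by linarith) (by linarith) hhne hh'ne
    have e3 := hbox v' v h' h (by linarith) (by linarith) (by linarith) (by linarith) hh'ne hhne
    have e4 := hbox v' v' h' h' (by linarith) (by linarith) (by linarith) (by linarith) hh'ne hh'ne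
    have hid : sdq k v v h h - sdq k v v' h h' - sdq k v' v h' h + sdq k v' v' h' h'
        = (sdq k v v h h - g₀) - (sdq k v v' h h' - g₀) - (sdq k v' v h' h - g₀)
          + (sdq k v' v' h' h' - g₀) := by ring
    calc (sdq k v v h h - sdq k v v' h h' - sdq k v' v h' h + sdq k v' v' h' h').re
        ≤ ‖sdq k v v h h - sdq k v v' h h' - sdq k v' v h' h + sdq k v' v' h' h'‖ :=
          Complex.re_le_norm _
      _ = ‖(sdq k v v h h - g₀) - (sdq k v v' h h' - g₀) - (sdq k v' v h' h - g₀)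
          + (sdq k v' v' h' h' - g₀)‖ := by rw [← hid]
      _ ≤ ‖(sdq k v v h h - g₀) - (sdq k v v' h h' - g₀) - (sdq k v' v h' h - g₀)‖
          + ‖sdq k v' v' h' h' - g₀‖ := norm_add_le _ _
      _ ≤ ‖(sdq k v v h h - g₀) - (sdq k v v' h h' - g₀)‖ + ‖sdq k v' v h' h - g₀‖
          + ‖sdq k v' v' h' h' - g₀‖ := by gcongr; exact norm_sub_le _ _
      _ ≤ ‖sdq k v v h h - g₀‖ + ‖sdq k v v' h h' - g₀‖ + ‖sdq k v' v h' h - g₀‖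
          + ‖sdq k v' v' h' h' - g₀‖ := by gcongr; exact norm_sub_le _ _
      _ ≤ ε + ε + ε + ε := by gcongr
      _ = 4*ε := by ring
  have ha0 : 0 ≤ (k (u,u)).re := (diag_nonneg hpd hu).1
  calc ‖(k (u,v+h) - k (u,v)) / (h:ℂ) - (k (u,v'+h') - k (u,v')) / (h':ℂ)‖ ^ 2
      ≤ (k (u,u)).re * (sdq k v v h h - sdq k v v' h h' - sdq k v' v h' h
          + sdq k v' v' h' h').re := hcs
    _ ≤ (k (u,u)).re * (4*ε) := by
        exact mul_le_mul_of_nonneg_left hQ ha0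

end Deriv

section Deriv2

variable {Ω : Set ℝ} {k : ℝ × ℝ → ℂ} {U : Set (ℝ × ℝ)}
  (hΩ : IsOpen Ω)
  (hpd : ∀ (n : ℕ) (x : Fin n → ℝ), (∀ i, x i ∈ Ω) → ∀ ξ : Fin n → ℂ,
      0 ≤ ∑ i, ∑ j, k (x i, x j) * ξ i * (starRingEnd ℂ) (ξ j))
  (hUopen : IsOpen U) (hdiag : ∀ x ∈ Ω, (x, x) ∈ U)
  (H1 : ∀ p ∈ U, DifferentiableAt ℝ (fun u => k (u, p.2)) p.1)
  (H2 : ∀ p ∈ U, DifferentiableAt ℝ (fun v => pderiv1 k (p.1, v)) p.2)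
  (H3 : ContinuousOn (pderiv2 (pderiv1 k)) U)

include hΩ hpd hUopen hdiag H1 H2 H3

lemma derivEx {u v : ℝ} (hu : u ∈ Ω) (hv : v ∈ Ω) :
    Tendsto (fun h : ℝ => (k (u, v+h) - k (u,v)) / (h:ℂ)) (𝓝[≠] 0)
      (𝓝 (pderiv2 k (u,v))) ∧ HasDerivAt (fun t => k (u,t)) (pderiv2 k (u,v)) v := by
  set D : ℝ → ℂ := fun h => (k (u, v+h) - k (u,v)) / (h:ℂ) with hD
  have ha0 : 0 ≤ (k (u,u)).re := (diag_nonneg hpd hu).1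
  set a := (k (u,u)).re with ha
  have hcauchy : Cauchy (Filter.map D (𝓝[≠] (0:ℝ))) := by
    rw [Metric.cauchy_iff]
    refine ⟨Filter.map_neBot, ?_⟩
    intro ε hε
    have hε₁ : 0 < ε^2/(8*(a+1)) := by positivity
    obtain ⟨η, hη, hballΩ, hDD⟩ := DDbound hΩ hpd hUopen hdiag H1 H2 H3 hv hε₁
    refine ⟨D '' {h | |h| < η ∧ h ≠ 0}, ?_, ?_⟩
    · apply Filter.image_mem_map
      have h1 : Metric.ball (0:ℝ) η ∈ 𝓝[≠] (0:ℝ) :=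
        mem_nhdsWithin_of_mem_nhds (Metric.ball_mem_nhds 0 hη)
      have h2 : {(0:ℝ)}ᶜ ∈ 𝓝[≠] (0:ℝ) := self_mem_nhdsWithin
      filter_upwards [h1, h2] with x hx1 hx2
      rw [Metric.mem_ball, Real.dist_eq, sub_zero] at hx1
      exact ⟨hx1, hx2⟩
    · rintro x ⟨h1, ⟨hh1, hh1ne⟩, rfl⟩ z ⟨h2, ⟨hh2, hh2ne⟩, rfl⟩
      rw [dist_eq_norm]
      have hvball : v ∈ Metric.ball v η := by
        rw [Metric.mem_ball, dist_self]; exact hη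
      have hb := hDD u hu v hvball v hvball h1 h2 hh1 hh2 hh1ne hh2ne
      have hn : 0 ≤ ‖D h1 - D h2‖ := norm_nonneg _
      have hden : (0:ℝ) < 8*(a+1) := by linarith
      have hkey : a * (4 * (ε^2/(8*(a+1)))) < ε^2 := by
        rw [show a * (4 * (ε^2/(8*(a+1)))) = (4*a*ε^2) / (8*(a+1)) by ring]
        rw [div_lt_iff₀ hden]
        nlinarith [mul_pos hε hε]
      rw [← ha] at hb
      nlinarith [hb, hkey, hn, hε]
  obtain ⟨L, hL⟩ := CompleteSpace.complete hcauchy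
  have hLt : Tendsto D (𝓝[≠] (0:ℝ)) (𝓝 L) := hL
  have hmap : Tendsto (fun t : ℝ => t - v) (𝓝[≠] v) (𝓝[≠] (0:ℝ)) := by
    apply tendsto_nhdsWithin_of_tendsto_nhds_of_eventually_within
    · apply Filter.Tendsto.mono_left _ nhdsWithin_le_nhds
      simpa using ((continuous_sub_right v).tendsto v)
    · exact eventually_mem_nhdsWithin.mono (fun t ht => sub_ne_zero.mpr ht)
  have hslope : Tendsto (slope (fun t => k (u,t)) v) (𝓝[≠] v) (𝓝 L) := by
    apply (hLt.comp hmap).congr'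
    filter_upwards [eventually_mem_nhdsWithin] with t ht
    have htv : t - v ≠ 0 := sub_ne_zero.mpr ht
    simp only [Function.comp_apply, hD, slope, vsub_eq_sub, add_sub_cancel]
    rw [Complex.real_smul, Complex.ofReal_inv]
    rw [inv_mul_eq_div]
  have hHD : HasDerivAt (fun t => k (u,t)) L v := hasDerivAt_iff_tendsto_slope.mpr hslope
  have hpL : pderiv2 k (u,v) = L := hHD.deriv
  rw [hpL]
  exact ⟨hLt, hHD⟩

end Deriv2

section Est

variable {Ω : Set ℝ} {k : ℝ × ℝ → ℂ} {U : Set (ℝ × ℝ)}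
  (hΩ : IsOpen Ω)
  (hpd : ∀ (n : ℕ) (x : Fin n → ℝ), (∀ i, x i ∈ Ω) → ∀ ξ : Fin n → ℂ,
      0 ≤ ∑ i, ∑ j, k (x i, x j) * ξ i * (starRingEnd ℂ) (ξ j))
  (hUopen : IsOpen U) (hdiag : ∀ x ∈ Ω, (x, x) ∈ U)
  (H1 : ∀ p ∈ U, DifferentiableAt ℝ (fun u => k (u, p.2)) p.1)
  (H2 : ∀ p ∈ U, DifferentiableAt ℝ (fun v => pderiv1 k (p.1, v)) p.2)
  (H3 : ContinuousOn (pderiv2 (pderiv1 k)) U)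

include hΩ hpd hUopen hdiag H1 H2 H3

lemma est {v₀ : ℝ} (hv₀ : v₀ ∈ Ω) {ε : ℝ} (hε : 0 < ε) :
    ∃ η > 0, ∀ u ∈ Ω, ∀ v ∈ Metric.ball v₀ η, ∀ v' ∈ Metric.ball v₀ η,
      ‖pderiv2 k (u,v) - pderiv2 k (u,v')‖ ^ 2 ≤ (k (u,u)).re * (4*ε) := by
  obtain ⟨η, hη, hballΩ, hDD⟩ := DDbound hΩ hpd hUopen hdiag H1 H2 H3 hv₀ hε
  refine ⟨η, hη, ?_⟩
  intro u hu v hv v' hv'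
  have hvΩ : v ∈ Ω := hballΩ (Metric.ball_subset_ball (by linarith) hv)
  have hv'Ω : v' ∈ Ω := hballΩ (Metric.ball_subset_ball (by linarith) hv')
  have hD1 := (derivEx hΩ hpd hUopen hdiag H1 H2 H3 hu hvΩ).1
  have hD2 := (derivEx hΩ hpd hUopen hdiag H1 H2 H3 hu hv'Ω).1
  have ht : Tendsto (fun p : ℝ × ℝ =>
      ‖(k (u,v+p.1) - k (u,v))/(p.1:ℂ) - (k (u,v'+p.2) - k (u,v'))/(p.2:ℂ)‖ ^ 2)
      ((𝓝[≠] (0:ℝ)) ×ˢ (𝓝[≠] (0:ℝ)))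
      (𝓝 (‖pderiv2 k (u,v) - pderiv2 k (u,v')‖ ^ 2)) :=
    (((hD1.comp tendsto_fst).sub (hD2.comp tendsto_snd)).norm).pow 2
  apply le_of_tendsto ht
  have hb : ∀ᶠ h : ℝ in 𝓝 (0:ℝ), |h| < η := by
    filter_upwards [Metric.ball_mem_nhds (0:ℝ) hη] with x hx
    rwa [Metric.mem_ball, Real.dist_eq, sub_zero] at hx
  have hone : ∀ᶠ h : ℝ in 𝓝[≠] (0:ℝ), |h| < η ∧ h ≠ 0 :=
    (hb.filter_mono nhdsWithin_le_nhds).and eventually_mem_nhdsWithin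
  filter_upwards [hone.prod_mk hone] with p hp
  exact hDD u hu v hv v' hv' p.1 p.2 hp.1.1 hp.2.1 hp.1.2 hp.2.2

lemma aux (H4 : ContinuousOn k U) :
    (∀ u ∈ Ω, ContinuousOn (fun v => pderiv2 k (u, v)) Ω) ∧
    (∀ u₀ ∈ Ω, ∃ V : Set ℝ, V ⊆ Ω ∧ V ∈ 𝓝[Ω] u₀ ∧
      Equicontinuous fun (u : V) (v : Ω) => pderiv2 k (↑u, ↑v)) := by
  constructor
  · intro u hu
    intro v₀ hv₀
    apply ContinuousAt.continuousWithinAt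
    rw [Metric.continuousAt_iff]
    intro ε hε
    have ha0 : 0 ≤ (k (u,u)).re := (diag_nonneg hpd hu).1
    set a := (k (u,u)).re with ha
    have hε₁ : 0 < ε^2/(8*(a+1)) := by positivity
    obtain ⟨η, hη, hEst⟩ := est hΩ hpd hUopen hdiag H1 H2 H3 hv₀ hε₁
    refine ⟨η, hη, ?_⟩
    intro v hdist
    rw [Complex.dist_eq]
    have hb := hEst u hu v (by rwa [Metric.mem_ball]) v₀ (by rw [Metric.mem_ball, dist_self]; exact hη)
    have hn : 0 ≤ ‖pderiv2 k (u,v) - pderiv2 k (u,v₀)‖ := norm_nonneg _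
    have hden : (0:ℝ) < 8*(a+1) := by linarith
    have hkey : a * (4 * (ε^2/(8*(a+1)))) < ε^2 := by
      rw [show a * (4 * (ε^2/(8*(a+1)))) = (4*a*ε^2) / (8*(a+1)) by ring]
      rw [div_lt_iff₀ hden]
      nlinarith [mul_pos hε hε]
    rw [← ha] at hb
    nlinarith [hb, hkey, hn, hε]
  · intro u₀ hu₀
    have hcA : ContinuousAt k (u₀, u₀) := H4.continuousAt (hUopen.mem_nhds (hdiag u₀ hu₀))
    obtain ⟨r, hrpos, hr⟩ := Metric.continuousAt_iff.mp hcA 1 one_pos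
    obtain ⟨r', hr'pos, hr'⟩ := Metric.isOpen_iff.mp hΩ u₀ hu₀
    set ρ := min r r' with hρ
    have hρpos : 0 < ρ := lt_min hrpos hr'pos
    refine ⟨Metric.ball u₀ ρ, ?_, ?_, ?_⟩
    · intro x hx
      exact hr' (Metric.ball_subset_ball (min_le_right _ _) hx)
    · exact mem_nhdsWithin_of_mem_nhds (Metric.ball_mem_nhds u₀ hρpos)
    · set M := (k (u₀,u₀)).re + 1 with hM
      have hMb : ∀ x : ℝ, x ∈ Metric.ball u₀ ρ → (k (x,x)).re ≤ M := by
        intro x hx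
        rw [Metric.mem_ball, Real.dist_eq] at hx
        have hd : dist ((x,x) : ℝ × ℝ) (u₀,u₀) < r := by
          have : dist ((x,x) : ℝ × ℝ) (u₀,u₀) = |x - u₀| := by
            rw [Prod.dist_eq]; simp [Real.dist_eq]
          rw [this]
          exact lt_of_lt_of_le hx (min_le_left _ _)
        have := hr hd
        rw [Complex.dist_eq] at this
        have h2 : (k (x,x)).re - (k (u₀,u₀)).re ≤ ‖k (x,x) - k (u₀,u₀)‖ := by
          calc (k (x,x)).re - (k (u₀,u₀)).re = (k (x,x) - k (u₀,u₀)).re := by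
                rw [Complex.sub_re]
            _ ≤ ‖k (x,x) - k (u₀,u₀)‖ := Complex.re_le_norm _
        linarith
      intro x₀
      rw [Metric.equicontinuousAt_iff_right]
      intro ε hε
      have hM0 : 0 ≤ M := by
        have := (diag_nonneg hpd hu₀).1
        rw [hM]; linarith
      have hε₁ : 0 < ε^2/(8*(M+1)) := by positivity
      obtain ⟨η, hη, hEst⟩ := est hΩ hpd hUopen hdiag H1 H2 H3 x₀.2 hε₁
      have hev : ∀ᶠ (x : Ω) in 𝓝 x₀, dist x x₀ < η := by
        filter_upwards [Metric.ball_mem_nhds x₀ hη] with x hx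
        rwa [Metric.mem_ball] at hx
      filter_upwards [hev] with x hx i
      have hiΩ : (i : ℝ) ∈ Ω := hr' (Metric.ball_subset_ball (min_le_right _ _) i.2)
      have hxb : (x : ℝ) ∈ Metric.ball (x₀ : ℝ) η := by
        rw [Metric.mem_ball, ← Subtype.dist_eq]
        exact hx
      have hx₀b : (x₀ : ℝ) ∈ Metric.ball (x₀ : ℝ) η := by
        rw [Metric.mem_ball, dist_self]; exact hη
      have hb := hEst i hiΩ (x₀ : ℝ) hx₀b (x : ℝ) hxb
      rw [Complex.dist_eq]
      have hn : 0 ≤ ‖pderiv2 k (↑i,↑x₀) - pderiv2 k (↑i,↑x)‖ := norm_nonneg _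
      have hai : (k (↑i,↑i)).re ≤ M := hMb i i.2
      have ha0 : 0 ≤ (k ((i:ℝ),(i:ℝ))).re := (diag_nonneg hpd hiΩ).1
      have hden : (0:ℝ) < 8*(M+1) := by linarith
      have hkey : M * (4 * (ε^2/(8*(M+1)))) < ε^2 := by
        rw [show M * (4 * (ε^2/(8*(M+1)))) = (4*M*ε^2) / (8*(M+1)) by ring]
        rw [div_lt_iff₀ hden]
        nlinarith [mul_pos hε hε]
      have hstep : (k ((i:ℝ),(i:ℝ))).re * (4 * (ε^2/(8*(M+1)))) ≤ M * (4 * (ε^2/(8*(M+1)))) := by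
        apply mul_le_mul_of_nonneg_right hai
        positivity
      nlinarith [hb, hkey, hn, hε, hstep]

end Est

/-- For a positive definite kernel `k` of class `S₁` on an open
neighborhood of the diagonal of an open `Ω ⊆ ℝ`: (1) each partial derivative is
separately continuous on `Ω`; and moreover (2) near any point the corresponding family of
partial-derivative sections is equicontinuous on `Ω`. -/
theorem stmt13 (Ω : Set ℝ) (hΩ : IsOpen Ω) (k : ℝ × ℝ → ℂ)
    (hpd : ∀ (n : ℕ) (x : Fin n → ℝ), (∀ i, x i ∈ Ω) → ∀ ξ : Fin n → ℂ,
      0 ≤ ∑ i, ∑ j, k (x i, x j) * ξ i * (starRingEnd ℂ) (ξ j))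
    (U : Set (ℝ × ℝ)) (hUopen : IsOpen U)
    (hdiag : ∀ x ∈ Ω, (x, x) ∈ U) (hUsub : U ⊆ Ω ×ˢ Ω)
    (hs : IsClassSn 1 U k) :
    (∀ u ∈ Ω, ContinuousOn (fun v => pderiv2 k (u, v)) Ω) ∧
    (∀ v ∈ Ω, ContinuousOn (fun u => pderiv1 k (u, v)) Ω) ∧
    (∀ u₀ ∈ Ω, ∃ V : Set ℝ, V ⊆ Ω ∧ V ∈ 𝓝[Ω] u₀ ∧
      Equicontinuous fun (u : V) (v : Ω) => pderiv2 k (↑u, ↑v)) ∧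
    (∀ v₀ ∈ Ω, ∃ W : Set ℝ, W ⊆ Ω ∧ W ∈ 𝓝[Ω] v₀ ∧
      Equicontinuous fun (v : W) (u : Ω) => pderiv1 k (↑u, ↑v)) := by
  have H1 : ∀ p ∈ U, DifferentiableAt ℝ (fun u => k (u, p.2)) p.1 := by
    intro p hp
    have := hs.1 0 zero_lt_one p hp
    simpa [Function.iterate_zero] using this
  have H2 : ∀ p ∈ U, DifferentiableAt ℝ (fun v => pderiv1 k (p.1, v)) p.2 := by
    intro p hp
    have := hs.2.1 1 le_rfl 0 zero_lt_one p hp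
    simpa [Function.iterate_zero, Function.iterate_one] using this
  have H2' : ∀ p ∈ U, DifferentiableAt ℝ (fun v => k (p.1, v)) p.2 := by
    intro p hp
    have := hs.2.1 0 (by norm_num) 0 zero_lt_one p hp
    simpa [Function.iterate_zero] using this
  have H3 : ContinuousOn (pderiv2 (pderiv1 k)) U := by
    have := hs.2.2 1 le_rfl 1 le_rfl
    simpa [Function.iterate_one] using this
  have H4 : ContinuousOn k U := by
    have := hs.2.2 0 (by norm_num) 0 (by norm_num)
    simpa [Function.iterate_zero] using this
  have hherm : ∀ a ∈ Ω, ∀ b ∈ Ω, k (b,a) = (starRingEnd ℂ) (k (a,b)) :=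
    fun a ha b hb => herm hpd ha hb
  -- the swapped kernel
  set k' : ℝ × ℝ → ℂ := fun p => k (p.2, p.1) with hk'
  set U' : Set (ℝ × ℝ) := U ∩ Prod.swap ⁻¹' U with hU'
  have hU'open : IsOpen U' := hUopen.inter (hUopen.preimage continuous_swap)
  have hdiag' : ∀ x ∈ Ω, (x,x) ∈ U' := fun x hx => ⟨hdiag x hx, hdiag x hx⟩
  have hU'U : U' ⊆ U := Set.inter_subset_left
  have hmemΩ : ∀ p ∈ U', p.1 ∈ Ω ∧ p.2 ∈ Ω := by
    intro p hp
    have := hUsub (hU'U hp)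
    exact ⟨this.1, this.2⟩
  have hpd' : ∀ (n : ℕ) (x : Fin n → ℝ), (∀ i, x i ∈ Ω) → ∀ ξ : Fin n → ℂ,
      0 ≤ ∑ i, ∑ j, k' (x i, x j) * ξ i * (starRingEnd ℂ) (ξ j) := by
    intro n x hx ξ
    have h0 := hpd n x hx (fun i => (starRingEnd ℂ) (ξ i))
    have heq : ∑ i, ∑ j, k' (x i, x j) * ξ i * (starRingEnd ℂ) (ξ j)
        = (starRingEnd ℂ) (∑ i, ∑ j, k (x i, x j) * (starRingEnd ℂ) (ξ i)
            * (starRingEnd ℂ) ((starRingEnd ℂ) (ξ j))) := by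
      rw [map_sum]
      apply Finset.sum_congr rfl
      intro i _
      rw [map_sum]
      apply Finset.sum_congr rfl
      intro j _
      rw [map_mul, map_mul, Complex.conj_conj, Complex.conj_conj]
      have : k' (x i, x j) = (starRingEnd ℂ) (k (x i, x j)) :=
        hherm (x i) (hx i) (x j) (hx j)
      rw [this]
    rw [heq]
    rw [Complex.nonneg_iff] at h0 ⊢
    exact ⟨by rw [Complex.conj_re]; exact h0.1, by rw [Complex.conj_im, ← h0.2, neg_zero]⟩
  have hstar : ∀ (f : ℝ → ℂ) (x : ℝ), deriv (fun t => (starRingEnd ℂ) (f t)) x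
      = (starRingEnd ℂ) (deriv f x) := by
    intro f x
    show deriv (fun t => star (f t)) x = star (deriv f x)
    exact deriv.star
  have hid2 : ∀ v ∈ Ω, ∀ x ∈ Ω, pderiv2 k (v, x) = (starRingEnd ℂ) (pderiv1 k (x, v)) := by
    intro v hv x hx
    have hev : (fun t => k (v,t)) =ᶠ[𝓝 x] (fun t => (starRingEnd ℂ) (k (t,v))) := by
      filter_upwards [hΩ.mem_nhds hx] with t ht
      exact hherm t ht v hv
    show deriv (fun t => k (v,t)) x = _
    rw [hev.deriv_eq, hstar]
    rfl
  have H1' : ∀ p ∈ U', DifferentiableAt ℝ (fun u => k' (u, p.2)) p.1 := by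
    intro p hp
    exact H2' (p.2,p.1) hp.2
  have hevP : ∀ p : ℝ × ℝ, p.1 ∈ Ω → p.2 ∈ Ω →
      (fun v => pderiv1 k' (p.1, v)) =ᶠ[𝓝 p.2]
        (fun v => (starRingEnd ℂ) (pderiv1 k (p.1, v))) := by
    intro p hp1 hp2
    filter_upwards [hΩ.mem_nhds hp2] with v hvΩ
    show pderiv2 k (v, p.1) = _
    exact hid2 v hvΩ p.1 hp1
  have H2'' : ∀ p ∈ U', DifferentiableAt ℝ (fun v => pderiv1 k' (p.1, v)) p.2 := by
    intro p hp
    obtain ⟨hp1, hp2⟩ := hmemΩ p hp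
    rw [Filter.EventuallyEq.differentiableAt_iff (hevP p hp1 hp2)]
    have := H2 p (hU'U hp)
    exact this.star
  have H3' : ContinuousOn (pderiv2 (pderiv1 k')) U' := by
    have heq3 : Set.EqOn (pderiv2 (pderiv1 k'))
        (fun p => (starRingEnd ℂ) (pderiv2 (pderiv1 k) p)) U' := by
      intro p hp
      obtain ⟨hp1, hp2⟩ := hmemΩ p hp
      show deriv (fun v => pderiv1 k' (p.1, v)) p.2 = _
      rw [(hevP p hp1 hp2).deriv_eq, hstar]
      rfl
    apply ContinuousOn.congr _ heq3
    have : ContinuousOn (pderiv2 (pderiv1 k)) U' := H3.mono hU'U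
    exact (continuous_star.comp_continuousOn (by simpa [starRingEnd_apply] using this))
  have H4' : ContinuousOn k' U' := by
    have : ContinuousOn (k ∘ Prod.swap) U' :=
      H4.comp continuous_swap.continuousOn (fun p hp => hp.2)
    exact this
  obtain ⟨C2, E2⟩ := aux hΩ hpd hUopen hdiag H1 H2 H3 H4
  obtain ⟨C1, E1⟩ := aux hΩ hpd' hU'open hdiag' H1' H2'' H3' H4'
  exact ⟨C2, fun v hv => C1 v hv, E2, fun v₀ hv₀ => E1 v₀ hv₀⟩
end
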